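/- arXiv:2505.16837 — 6 statements merged into one kernel-verified Lean document; each statement's English description precedes it below -/
import Mathlib

section
/- For every n ≥ 2, the three linear orders x_1 x_2 z_1 (x_3 z_2)(x_4 z_3)···(x_n z_{n-1}) z_n, and x_2 (x_3 z_2)(x_4 z_3)···(x_n z_{n-1}) x_1 z_n z_1, and x_1 (x_n z_n)(x_{n-1} z_{n-1})···(x_2 z_2) z_1 form a realizer of the crown poset C_n. Consequently the crown C_n has order dimension at most 3. -/
section Defs

variable {α : Type*}

/-- `r` is a linear extension of the partial order on `α`. -/
def IsLinExt [PartialOrder α] (r : α → α → Prop) : Prop :=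
  IsLinearOrder α r ∧ ∀ a b : α, a ≤ b → r a b

/-- A family of linear orders is a realizer of the partial order on `α`. -/
def IsRealizer [PartialOrder α] {ι : Type*} (L : ι → α → α → Prop) : Prop :=
  (∀ i, IsLinExt (L i)) ∧ ∀ a b : α, a ≤ b ↔ ∀ i, L i a b

/-- The order dimension: minimal size of a realizer. -/
noncomputable def orderDim (α : Type*) [PartialOrder α] : ℕ :=
  sInf {k | ∃ L : Fin k → α → α → Prop, IsRealizer L}

/-- The cover graph (undirected Hasse diagram) of a poset. -/
def coverGraph (α : Type*) [PartialOrder α] : SimpleGraph α where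
  Adj a b := a ⋖ b ∨ b ⋖ a
  symm := ⟨fun a b h => h.elim Or.inr Or.inl⟩
  loopless := ⟨fun a h =>
    h.elim (fun h' => absurd h'.lt (lt_irrefl a)) (fun h' => absurd h'.lt (lt_irrefl a))⟩

/-- The linear order determined by a duplicate-free full list: `a ≤ b` iff `a`
occurs no later than `b`. -/
def listLE [DecidableEq α] (l : List α) (a b : α) : Prop :=
  l.idxOf a ≤ l.idxOf b

/-- The lists in `ls` are words (each listing all elements of `α` exactly once)
whose associated linear orders are linear extensions of `α` forming a realizer. -/
def IsListRealizer [PartialOrder α] [DecidableEq α] (ls : List (List α)) : Prop :=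
  (∀ l ∈ ls, l.Nodup ∧ ∀ a : α, a ∈ l) ∧
  (∀ l ∈ ls, ∀ a b : α, a ≤ b → listLE l a b) ∧
  (∀ a b : α, (∀ l ∈ ls, listLE l a b) → a ≤ b)

/-- A graph is a cycle: connected and 2-regular. -/
def IsCycleGraph {V : Type*} (G : SimpleGraph V) : Prop :=
  G.Connected ∧ ∀ v : V, (G.neighborSet v).ncard = 2

/-- `Ua a`: elements `x ≠ a` such that the path from `a` to `x` in the cover
graph starts with an upward cover. -/
def Ua [PartialOrder α] (a : α) : Set α :=
  {x | x ≠ a ∧ ∃ p : (coverGraph α).Walk a x, p.IsPath ∧ a ⋖ p.getVert 1}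

/-- `Da a`: elements `x ≠ a` such that the path from `a` to `x` in the cover
graph starts with a downward cover. -/
def Da [PartialOrder α] (a : α) : Set α :=
  {x | x ≠ a ∧ ∃ p : (coverGraph α).Walk a x, p.IsPath ∧ p.getVert 1 ⋖ a}

/-- The grafting order on the disjoint union of rooted posets `(T x, r x)` indexed
by a poset `β`. -/
def graftLE {β : Type*} [PartialOrder β] {T : β → Type*} [∀ x, PartialOrder (T x)]
    (r : ∀ x, T x) (p q : Σ x, T x) : Prop :=
  (∃ h : p.1 = q.1, (h ▸ p.2 : T q.1) ≤ q.2) ∨ (p.1 < q.1 ∧ p.2 ≤ r p.1 ∧ r q.1 ≤ q.2)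

end Defs

section BindLemmas

variable {α : Type*} [DecidableEq α] (f g : ℕ → α)

lemma bindPairsLen (m : ℕ) : ((List.range m).flatMap fun i => [f i, g i]).length = 2 * m := by
  induction m with
  | zero => simp
  | succ p ih =>
    rw [List.range_succ, List.flatMap_append, List.length_append, ih]
    simp; omega

lemma memBindPairs (m : ℕ) (a : α) :
    a ∈ ((List.range m).flatMap fun i => [f i, g i]) ↔ ∃ j, j < m ∧ (a = f j ∨ a = g j) := by
  simp only [List.mem_flatMap, List.mem_range, List.mem_cons, List.mem_singleton,
    List.not_mem_nil, or_false]

lemma idxBindPairsF (m k : ℕ) (hk : k < m) (h1 : ∀ j, j < k → f k ≠ f j)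
    (h2 : ∀ j, j < k → f k ≠ g j) :
    ((List.range m).flatMap fun i => [f i, g i]).idxOf (f k) = 2 * k := by
  induction m with
  | zero => omega
  | succ p ih =>
    rw [List.range_succ, List.flatMap_append]
    rcases Nat.lt_or_ge k p with h | h
    · rw [List.idxOf_append_of_mem ((memBindPairs f g p (f k)).2 ⟨k, h, Or.inl rfl⟩)]
      exact ih h
    · have hkp : k = p := by omega
      subst hkp
      rw [List.idxOf_append_of_notMem, bindPairsLen]
      · simp
      · intro hmem
        obtain ⟨j, hj, hor⟩ := (memBindPairs f g k _).1 hmem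
        rcases hor with h' | h'
        exacts [h1 j hj h', h2 j hj h']

lemma idxBindPairsG (m k : ℕ) (hk : k < m) (h1 : ∀ j, j < k → g k ≠ f j)
    (h2 : ∀ j, j < k → g k ≠ g j) (h3 : f k ≠ g k) :
    ((List.range m).flatMap fun i => [f i, g i]).idxOf (g k) = 2 * k + 1 := by
  induction m with
  | zero => omega
  | succ p ih =>
    rw [List.range_succ, List.flatMap_append]
    rcases Nat.lt_or_ge k p with h | h
    · rw [List.idxOf_append_of_mem ((memBindPairs f g p (g k)).2 ⟨k, h, Or.inr rfl⟩)]
      exact ih h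
    · have hkp : k = p := by omega
      subst hkp
      rw [List.idxOf_append_of_notMem, bindPairsLen]
      · simp only [List.flatMap_cons, List.flatMap_nil, List.append_nil]
        rw [List.idxOf_cons_ne _ h3, List.idxOf_cons_self]
      · intro hmem
        obtain ⟨j, hj, hor⟩ := (memBindPairs f g k _).1 hmem
        rcases hor with h' | h'
        exacts [h1 j hj h', h2 j hj h']

end BindLemmas

lemma nodup_of_full {α : Type*} [Fintype α] [DecidableEq α] (l : List α)
    (hmem : ∀ a : α, a ∈ l) (hlen : l.length = Fintype.card α) : l.Nodup := by
  have h1 : l.dedup.Sublist l := List.dedup_sublist l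
  have h2 : l.dedup.toFinset = Finset.univ := by
    ext a; simp [List.mem_dedup, hmem a]
  have h3 : l.dedup.length = Fintype.card α := by
    rw [← List.toFinset_card_of_nodup (List.nodup_dedup l), h2, Finset.card_univ]
  exact List.dedup_eq_self.1 (h1.eq_of_length (by omega))

section Crown

variable {α : Type*} [PartialOrder α] [Fintype α] [DecidableEq α] {n : ℕ} {X Z : ℕ → α}

/-- The first word. -/
def cw1 (n : ℕ) (X Z : ℕ → α) : List α :=
  X 0 :: X 1 :: Z 0 ::
    (((List.range (n - 2)).flatMap fun i => [X (i + 2), Z (i + 1)]) ++ [Z (n - 1)])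

/-- The second word. -/
def cw2 (n : ℕ) (X Z : ℕ → α) : List α :=
  X 1 :: (((List.range (n - 2)).flatMap fun i => [X (i + 2), Z (i + 1)]) ++
    [X 0, Z (n - 1), Z 0])

/-- The third word. -/
def cw3 (n : ℕ) (X Z : ℕ → α) : List α :=
  X 0 :: (((List.range (n - 1)).flatMap fun i => [X (n - 1 - i), Z (n - 1 - i)]) ++ [Z 0])

variable (hn : 2 ≤ n) (hXX : ∀ i j, X i = X j ↔ i % n = j % n)
  (hZZ : ∀ i j, Z i = Z j ↔ i % n = j % n) (hXZ : ∀ i j, X i ≠ Z j)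

section NE
include hn hXX

lemma cXne {i j : ℕ} (hi : i < n) (hj : j < n) (h : i ≠ j) : X i ≠ X j := by
  rw [Ne, hXX, Nat.mod_eq_of_lt hi, Nat.mod_eq_of_lt hj]; exact h

end NE

section NEZ
include hn hZZ

lemma cZne {i j : ℕ} (hi : i < n) (hj : j < n) (h : i ≠ j) : Z i ≠ Z j := by
  rw [Ne, hZZ, Nat.mod_eq_of_lt hi, Nat.mod_eq_of_lt hj]; exact h

end NEZ


lemma lenB1' : ((List.range (n - 2)).flatMap fun i => [X (i + 2), Z (i + 1)]).length
    = 2 * (n - 2) :=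
  bindPairsLen (fun i => X (i + 2)) (fun i => Z (i + 1)) _

lemma lenB3' : ((List.range (n - 1)).flatMap fun i => [X (n - 1 - i), Z (n - 1 - i)]).length
    = 2 * (n - 1) :=
  bindPairsLen (fun i => X (n - 1 - i)) (fun i => Z (n - 1 - i)) _

lemma memB1X (k : ℕ) (hk : k < n - 2) :
    X (k + 2) ∈ ((List.range (n - 2)).flatMap fun i => [X (i + 2), Z (i + 1)]) :=
  (memBindPairs (fun i => X (i + 2)) (fun i => Z (i + 1)) _ _).2 ⟨k, hk, Or.inl rfl⟩

lemma memB1Z (k : ℕ) (hk : k < n - 2) :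
    Z (k + 1) ∈ ((List.range (n - 2)).flatMap fun i => [X (i + 2), Z (i + 1)]) :=
  (memBindPairs (fun i => X (i + 2)) (fun i => Z (i + 1)) _ _).2 ⟨k, hk, Or.inr rfl⟩


lemma memB3X (k : ℕ) (hk : k < n - 1) :
    X (n - 1 - k) ∈ ((List.range (n - 1)).flatMap fun i => [X (n - 1 - i), Z (n - 1 - i)]) :=
  (memBindPairs (fun i => X (n - 1 - i)) (fun i => Z (n - 1 - i)) _ _).2 ⟨k, hk, Or.inl rfl⟩

lemma memB3Z (k : ℕ) (hk : k < n - 1) :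
    Z (n - 1 - k) ∈ ((List.range (n - 1)).flatMap fun i => [X (n - 1 - i), Z (n - 1 - i)]) :=
  (memBindPairs (fun i => X (n - 1 - i)) (fun i => Z (n - 1 - i)) _ _).2 ⟨k, hk, Or.inr rfl⟩

include hn hXX hZZ hXZ

lemma idxB1X (k : ℕ) (hk : k < n - 2) :
    ((List.range (n - 2)).flatMap fun i => [X (i + 2), Z (i + 1)]).idxOf (X (k + 2))
      = 2 * k :=
  idxBindPairsF (fun i => X (i + 2)) (fun i => Z (i + 1)) _ _ hk
    (fun j hj => cXne hn hXX (by omega) (by omega) (by omega))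
    (fun j hj => hXZ _ _)

lemma idxB1Z (k : ℕ) (hk : k < n - 2) :
    ((List.range (n - 2)).flatMap fun i => [X (i + 2), Z (i + 1)]).idxOf (Z (k + 1))
      = 2 * k + 1 :=
  idxBindPairsG (fun i => X (i + 2)) (fun i => Z (i + 1)) _ _ hk
    (fun j hj => (hXZ _ _).symm)
    (fun j hj => cZne hn hZZ (by omega) (by omega) (by omega))
    (hXZ _ _)

lemma idxB3X (k : ℕ) (hk : k < n - 1) :
    ((List.range (n - 1)).flatMap fun i => [X (n - 1 - i), Z (n - 1 - i)]).idxOf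
      (X (n - 1 - k)) = 2 * k :=
  idxBindPairsF (fun i => X (n - 1 - i)) (fun i => Z (n - 1 - i)) _ _ hk
    (fun j hj => cXne hn hXX (by omega) (by omega) (by omega))
    (fun j hj => hXZ _ _)

lemma idxB3Z (k : ℕ) (hk : k < n - 1) :
    ((List.range (n - 1)).flatMap fun i => [X (n - 1 - i), Z (n - 1 - i)]).idxOf
      (Z (n - 1 - k)) = 2 * k + 1 :=
  idxBindPairsG (fun i => X (n - 1 - i)) (fun i => Z (n - 1 - i)) _ _ hk
    (fun j hj => (hXZ _ _).symm)
    (fun j hj => cZne hn hZZ (by omega) (by omega) (by omega))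
    (hXZ _ _)

lemma nmB1 {i : ℕ} (hi : i < 2) :
    X i ∉ ((List.range (n - 2)).flatMap fun i => [X (i + 2), Z (i + 1)]) := by
  intro hmem
  obtain ⟨j, hj, h | h⟩ := (memBindPairs _ _ _ _).1 hmem
  · exact cXne hn hXX (by omega) (by omega) (by omega) h
  · exact hXZ _ _ h

lemma nmB1Z0 : Z 0 ∉ ((List.range (n - 2)).flatMap fun i => [X (i + 2), Z (i + 1)]) := by
  intro hmem
  obtain ⟨j, hj, h | h⟩ := (memBindPairs _ _ _ _).1 hmem
  · exact hXZ _ _ h.symm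
  · exact cZne hn hZZ (by omega) (by omega) (by omega) h

lemma nmB1Zl : Z (n - 1) ∉ ((List.range (n - 2)).flatMap fun i => [X (i + 2), Z (i + 1)]) := by
  intro hmem
  obtain ⟨j, hj, h | h⟩ := (memBindPairs _ _ _ _).1 hmem
  · exact hXZ _ _ h.symm
  · exact cZne hn hZZ (by omega) (by omega) (by omega) h

lemma nmB3Z0 : Z 0 ∉ ((List.range (n - 1)).flatMap fun i => [X (n - 1 - i), Z (n - 1 - i)]) := by
  intro hmem
  obtain ⟨j, hj, h | h⟩ := (memBindPairs _ _ _ _).1 hmem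
  · exact hXZ _ _ h.symm
  · exact cZne hn hZZ (by omega) (by omega) (by omega) h

lemma p1X {i : ℕ} (hi : i < n) :
    (cw1 n X Z).idxOf (X i) = if i = 0 then 0 else if i = 1 then 1 else 2 * i - 1 := by
  unfold cw1
  by_cases h0 : i = 0
  · subst h0; rw [List.idxOf_cons_self]; split_ifs <;> first | exact ‹False›.elim | omega
  by_cases h1 : i = 1
  · subst h1
    rw [List.idxOf_cons_ne _ (show X 0 ≠ X 1 from
        cXne hn hXX (by omega) (by omega) (by omega)),
      List.idxOf_cons_self]
    split_ifs <;> first | exact ‹False›.elim | omega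
  obtain ⟨k, rfl⟩ : ∃ k, i = k + 2 := ⟨i - 2, by omega⟩
  rw [List.idxOf_cons_ne _ (show X 0 ≠ X (k + 2) from
      cXne hn hXX (by omega) (by omega) (by omega)),
    List.idxOf_cons_ne _ (show X 1 ≠ X (k + 2) from
      cXne hn hXX (by omega) (by omega) (by omega)),
    List.idxOf_cons_ne _ (show Z 0 ≠ X (k + 2) from Ne.symm (hXZ _ _)),
    List.idxOf_append_of_mem (memB1X k (by omega)),
    idxB1X hn hXX hZZ hXZ k (by omega)]
  split_ifs <;> first | exact ‹False›.elim | omega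

lemma p1Z {i : ℕ} (hi : i < n) :
    (cw1 n X Z).idxOf (Z i)
      = if i = 0 then 2 else if i = n - 1 then 2 * n - 1 else 2 * i + 2 := by
  unfold cw1
  by_cases h0 : i = 0
  · subst h0
    rw [List.idxOf_cons_ne _ (show X 0 ≠ Z 0 from hXZ _ _),
      List.idxOf_cons_ne _ (show X 1 ≠ Z 0 from hXZ _ _),
      List.idxOf_cons_self]
    split_ifs <;> first | exact ‹False›.elim | omega
  by_cases hl : i = n - 1
  · subst hl
    rw [List.idxOf_cons_ne _ (show X 0 ≠ Z (n - 1) from hXZ _ _),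
      List.idxOf_cons_ne _ (show X 1 ≠ Z (n - 1) from hXZ _ _),
      List.idxOf_cons_ne _ (show Z 0 ≠ Z (n - 1) from
        cZne hn hZZ (by omega) (by omega) (by omega)),
      List.idxOf_append_of_notMem (nmB1Zl hn hXX hZZ hXZ),
      lenB1', List.idxOf_cons_self]
    split_ifs <;> first | exact ‹False›.elim | omega
  obtain ⟨k, rfl⟩ : ∃ k, i = k + 1 := ⟨i - 1, by omega⟩
  rw [List.idxOf_cons_ne _ (show X 0 ≠ Z (k + 1) from hXZ _ _),
    List.idxOf_cons_ne _ (show X 1 ≠ Z (k + 1) from hXZ _ _),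
    List.idxOf_cons_ne _ (show Z 0 ≠ Z (k + 1) from
      cZne hn hZZ (by omega) (by omega) (by omega)),
    List.idxOf_append_of_mem (memB1Z k (by omega)),
    idxB1Z hn hXX hZZ hXZ k (by omega)]
  split_ifs <;> first | exact ‹False›.elim | omega

lemma p2X {i : ℕ} (hi : i < n) :
    (cw2 n X Z).idxOf (X i)
      = if i = 0 then 2 * n - 3 else if i = 1 then 0 else 2 * i - 3 := by
  unfold cw2
  by_cases h1 : i = 1
  · subst h1; rw [List.idxOf_cons_self]; split_ifs <;> first | exact ‹False›.elim | omega
  by_cases h0 : i = 0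
  · subst h0
    rw [List.idxOf_cons_ne _ (show X 1 ≠ X 0 from
        cXne hn hXX (by omega) (by omega) (by omega)),
      List.idxOf_append_of_notMem (nmB1 hn hXX hZZ hXZ (show (0:ℕ) < 2 by omega)),
      lenB1', List.idxOf_cons_self]
    split_ifs <;> first | exact ‹False›.elim | omega
  obtain ⟨k, rfl⟩ : ∃ k, i = k + 2 := ⟨i - 2, by omega⟩
  rw [List.idxOf_cons_ne _ (show X 1 ≠ X (k + 2) from
      cXne hn hXX (by omega) (by omega) (by omega)),
    List.idxOf_append_of_mem (memB1X k (by omega)),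
    idxB1X hn hXX hZZ hXZ k (by omega)]
  split_ifs <;> first | exact ‹False›.elim | omega

lemma p2Z {i : ℕ} (hi : i < n) :
    (cw2 n X Z).idxOf (Z i)
      = if i = 0 then 2 * n - 1 else if i = n - 1 then 2 * n - 2 else 2 * i := by
  unfold cw2
  by_cases h0 : i = 0
  · subst h0
    rw [List.idxOf_cons_ne _ (show X 1 ≠ Z 0 from hXZ _ _),
      List.idxOf_append_of_notMem (nmB1Z0 hn hXX hZZ hXZ),
      lenB1',
      List.idxOf_cons_ne _ (show X 0 ≠ Z 0 from hXZ _ _),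
      List.idxOf_cons_ne _ (show Z (n - 1) ≠ Z 0 from
        cZne hn hZZ (by omega) (by omega) (by omega)),
      List.idxOf_cons_self]
    split_ifs <;> first | exact ‹False›.elim | omega
  by_cases hl : i = n - 1
  · subst hl
    rw [List.idxOf_cons_ne _ (show X 1 ≠ Z (n - 1) from hXZ _ _),
      List.idxOf_append_of_notMem (nmB1Zl hn hXX hZZ hXZ),
      lenB1',
      List.idxOf_cons_ne _ (show X 0 ≠ Z (n - 1) from hXZ _ _),
      List.idxOf_cons_self]
    split_ifs <;> first | exact ‹False›.elim | omega
  obtain ⟨k, rfl⟩ : ∃ k, i = k + 1 := ⟨i - 1, by omega⟩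
  rw [List.idxOf_cons_ne _ (show X 1 ≠ Z (k + 1) from hXZ _ _),
    List.idxOf_append_of_mem (memB1Z k (by omega)),
    idxB1Z hn hXX hZZ hXZ k (by omega)]
  split_ifs <;> first | exact ‹False›.elim | omega

lemma p3X {i : ℕ} (hi : i < n) :
    (cw3 n X Z).idxOf (X i) = if i = 0 then 0 else 2 * n - 1 - 2 * i := by
  unfold cw3
  by_cases h0 : i = 0
  · subst h0; rw [List.idxOf_cons_self]; split_ifs <;> first | exact ‹False›.elim | omega
  rw [List.idxOf_cons_ne _ (show X 0 ≠ X i from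
      cXne hn hXX (by omega) (by omega) (by omega)),
    congrArg X (show i = n - 1 - (n - 1 - i) by omega),
    List.idxOf_append_of_mem (memB3X (n - 1 - i) (by omega)),
    idxB3X hn hXX hZZ hXZ (n - 1 - i) (by omega)]
  split_ifs <;> first | exact ‹False›.elim | omega

lemma p3Z {i : ℕ} (hi : i < n) :
    (cw3 n X Z).idxOf (Z i) = if i = 0 then 2 * n - 1 else 2 * n - 2 * i := by
  unfold cw3
  by_cases h0 : i = 0
  · subst h0
    rw [List.idxOf_cons_ne _ (show X 0 ≠ Z 0 from hXZ _ _),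
      List.idxOf_append_of_notMem (nmB3Z0 hn hXX hZZ hXZ),
      lenB3', List.idxOf_cons_self]
    split_ifs <;> first | exact ‹False›.elim | omega
  rw [List.idxOf_cons_ne _ (show X 0 ≠ Z i from hXZ _ _),
    congrArg Z (show i = n - 1 - (n - 1 - i) by omega),
    List.idxOf_append_of_mem (memB3Z (n - 1 - i) (by omega)),
    idxB3Z hn hXX hZZ hXZ (n - 1 - i) (by omega)]
  split_ifs <;> first | exact ‹False›.elim | omega

omit hXX hZZ hXZ in
lemma lencw1 : (cw1 n X Z).length = 2 * n := by
  simp only [cw1, List.length_cons, List.length_append, lenB1' (X := X) (Z := Z),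
    List.length_singleton, List.length_nil]
  omega

omit hXX hZZ hXZ in
lemma lencw2 : (cw2 n X Z).length = 2 * n := by
  simp only [cw2, List.length_cons, List.length_append, lenB1' (X := X) (Z := Z),
    List.length_singleton, List.length_nil]
  omega

omit hXX hZZ hXZ in
lemma lencw3 : (cw3 n X Z).length = 2 * n := by
  simp only [cw3, List.length_cons, List.length_append, lenB3' (X := X) (Z := Z),
    List.length_singleton, List.length_nil]
  omega

variable (hsurj : ∀ a : α, (∃ i, i < n ∧ a = X i) ∨ (∃ i, i < n ∧ a = Z i))

include hsurj

lemma memcw1 (a : α) : a ∈ cw1 n X Z := by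
  rw [← List.idxOf_lt_length_iff, lencw1 hn]
  rcases hsurj a with ⟨i, hi, rfl⟩ | ⟨i, hi, rfl⟩
  · rw [p1X hn hXX hZZ hXZ hi]; split_ifs <;> omega
  · rw [p1Z hn hXX hZZ hXZ hi]; split_ifs <;> omega

lemma memcw2 (a : α) : a ∈ cw2 n X Z := by
  rw [← List.idxOf_lt_length_iff, lencw2 hn]
  rcases hsurj a with ⟨i, hi, rfl⟩ | ⟨i, hi, rfl⟩
  · rw [p2X hn hXX hZZ hXZ hi]; split_ifs <;> omega
  · rw [p2Z hn hXX hZZ hXZ hi]; split_ifs <;> omega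

lemma memcw3 (a : α) : a ∈ cw3 n X Z := by
  rw [← List.idxOf_lt_length_iff, lencw3 hn]
  rcases hsurj a with ⟨i, hi, rfl⟩ | ⟨i, hi, rfl⟩
  · rw [p3X hn hXX hZZ hXZ hi]; split_ifs <;> omega
  · rw [p3Z hn hXX hZZ hXZ hi]; split_ifs <;> omega

omit hsurj

variable (hlt : ∀ a b : α, a < b ↔
  ∃ i, i < n ∧ ((a = X i ∧ b = Z i) ∨ (a = X (i + 1) ∧ b = Z i)))

include hlt

lemma extcw1 : ∀ a b : α, a ≤ b → listLE (cw1 n X Z) a b := by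
  intro a b hab
  rcases hab.lt_or_eq with h | rfl
  · rw [hlt] at h
    obtain ⟨i, hi, h⟩ := h
    unfold listLE
    rcases h with ⟨rfl, rfl⟩ | ⟨rfl, rfl⟩
    · rw [p1X hn hXX hZZ hXZ hi, p1Z hn hXX hZZ hXZ hi]
      split_ifs <;> first | exact ‹False›.elim | omega
    · by_cases hl : i = n - 1
      · subst hl
        have e : n - 1 + 1 = n := by omega
        rw [e, show X n = X 0 from (hXX n 0).2 (by rw [Nat.mod_self, Nat.zero_mod]),
          p1X hn hXX hZZ hXZ (show 0 < n by omega), p1Z hn hXX hZZ hXZ hi]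
        split_ifs <;> first | exact ‹False›.elim | omega
      · rw [p1X hn hXX hZZ hXZ (show i + 1 < n by omega), p1Z hn hXX hZZ hXZ hi]
        split_ifs <;> first | exact ‹False›.elim | omega
  · exact Nat.le_refl _

lemma extcw2 : ∀ a b : α, a ≤ b → listLE (cw2 n X Z) a b := by
  intro a b hab
  rcases hab.lt_or_eq with h | rfl
  · rw [hlt] at h
    obtain ⟨i, hi, h⟩ := h
    unfold listLE
    rcases h with ⟨rfl, rfl⟩ | ⟨rfl, rfl⟩
    · rw [p2X hn hXX hZZ hXZ hi, p2Z hn hXX hZZ hXZ hi]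
      split_ifs <;> first | exact ‹False›.elim | omega
    · by_cases hl : i = n - 1
      · subst hl
        have e : n - 1 + 1 = n := by omega
        rw [e, show X n = X 0 from (hXX n 0).2 (by rw [Nat.mod_self, Nat.zero_mod]),
          p2X hn hXX hZZ hXZ (show 0 < n by omega), p2Z hn hXX hZZ hXZ hi]
        split_ifs <;> first | exact ‹False›.elim | omega
      · rw [p2X hn hXX hZZ hXZ (show i + 1 < n by omega), p2Z hn hXX hZZ hXZ hi]
        split_ifs <;> first | exact ‹False›.elim | omega
  · exact Nat.le_refl _

lemma extcw3 : ∀ a b : α, a ≤ b → listLE (cw3 n X Z) a b := by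
  intro a b hab
  rcases hab.lt_or_eq with h | rfl
  · rw [hlt] at h
    obtain ⟨i, hi, h⟩ := h
    unfold listLE
    rcases h with ⟨rfl, rfl⟩ | ⟨rfl, rfl⟩
    · rw [p3X hn hXX hZZ hXZ hi, p3Z hn hXX hZZ hXZ hi]
      split_ifs <;> first | exact ‹False›.elim | omega
    · by_cases hl : i = n - 1
      · subst hl
        have e : n - 1 + 1 = n := by omega
        rw [e, show X n = X 0 from (hXX n 0).2 (by rw [Nat.mod_self, Nat.zero_mod]),
          p3X hn hXX hZZ hXZ (show 0 < n by omega), p3Z hn hXX hZZ hXZ hi]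
        split_ifs <;> first | exact ‹False›.elim | omega
      · rw [p3X hn hXX hZZ hXZ (show i + 1 < n by omega), p3Z hn hXX hZZ hXZ hi]
        split_ifs <;> first | exact ‹False›.elim | omega
  · exact Nat.le_refl _

include hsurj

lemma revcw : ∀ a b : α, listLE (cw1 n X Z) a b → listLE (cw2 n X Z) a b →
    listLE (cw3 n X Z) a b → a ≤ b := by
  intro a b h1 h2 h3
  unfold listLE at h1 h2 h3
  rcases hsurj a with ⟨i, hi, rfl⟩ | ⟨i, hi, rfl⟩ <;>
    rcases hsurj b with ⟨j, hj, rfl⟩ | ⟨j, hj, rfl⟩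
  · rw [p1X hn hXX hZZ hXZ hi, p1X hn hXX hZZ hXZ hj] at h1
    rw [p2X hn hXX hZZ hXZ hi, p2X hn hXX hZZ hXZ hj] at h2
    rw [p3X hn hXX hZZ hXZ hi, p3X hn hXX hZZ hXZ hj] at h3
    have hij : i = j := by
      split_ifs at h1 h2 h3 <;> omega
    subst hij
    exact le_refl _
  · rw [p1X hn hXX hZZ hXZ hi, p1Z hn hXX hZZ hXZ hj] at h1
    rw [p2X hn hXX hZZ hXZ hi, p2Z hn hXX hZZ hXZ hj] at h2
    rw [p3X hn hXX hZZ hXZ hi, p3Z hn hXX hZZ hXZ hj] at h3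
    have key : i = j ∨ i = j + 1 ∨ (i = 0 ∧ j = n - 1) := by
      split_ifs at h1 h2 h3 <;> omega
    apply le_of_lt
    rw [hlt]
    rcases key with h' | h' | ⟨h1', h2'⟩
    · exact ⟨j, hj, Or.inl ⟨congrArg X h', rfl⟩⟩
    · exact ⟨j, hj, Or.inr ⟨congrArg X h', rfl⟩⟩
    · refine ⟨n - 1, by omega, Or.inr ⟨?_, congrArg Z h2'⟩⟩
      rw [h1', show n - 1 + 1 = n by omega]
      exact (hXX 0 n).2 (by rw [Nat.mod_self, Nat.zero_mod])
  · exfalso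
    rw [p1Z hn hXX hZZ hXZ hi, p1X hn hXX hZZ hXZ hj] at h1
    rw [p2Z hn hXX hZZ hXZ hi, p2X hn hXX hZZ hXZ hj] at h2
    rw [p3Z hn hXX hZZ hXZ hi, p3X hn hXX hZZ hXZ hj] at h3
    split_ifs at h1 h2 h3 <;> omega
  · rw [p1Z hn hXX hZZ hXZ hi, p1Z hn hXX hZZ hXZ hj] at h1
    rw [p2Z hn hXX hZZ hXZ hi, p2Z hn hXX hZZ hXZ hj] at h2
    rw [p3Z hn hXX hZZ hXZ hi, p3Z hn hXX hZZ hXZ hj] at h3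
    have hij : i = j := by
      split_ifs at h1 h2 h3 <;> omega
    subst hij
    exact le_refl _

lemma crownMain (hcard : Fintype.card α = 2 * n) :
    IsListRealizer [cw1 n X Z, cw2 n X Z, cw3 n X Z] := by
  refine ⟨?_, ?_, ?_⟩
  · intro l hl
    simp only [List.mem_cons, List.not_mem_nil, or_false] at hl
    rcases hl with rfl | rfl | rfl
    · exact ⟨nodup_of_full _ (memcw1 hn hXX hZZ hXZ hsurj) (by rw [lencw1 hn, hcard]),
        memcw1 hn hXX hZZ hXZ hsurj⟩
    · exact ⟨nodup_of_full _ (memcw2 hn hXX hZZ hXZ hsurj) (by rw [lencw2 hn, hcard]),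
        memcw2 hn hXX hZZ hXZ hsurj⟩
    · exact ⟨nodup_of_full _ (memcw3 hn hXX hZZ hXZ hsurj) (by rw [lencw3 hn, hcard]),
        memcw3 hn hXX hZZ hXZ hsurj⟩
  · intro l hl
    simp only [List.mem_cons, List.not_mem_nil, or_false] at hl
    rcases hl with rfl | rfl | rfl
    · exact extcw1 hn hXX hZZ hXZ hlt
    · exact extcw2 hn hXX hZZ hXZ hlt
    · exact extcw3 hn hXX hZZ hXZ hlt
  · intro a b h
    exact revcw hn hXX hZZ hXZ hsurj hlt a b
      (h _ (by simp)) (h _ (by simp)) (h _ (by simp))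

end Crown

lemma orderDim_le_of_isListRealizer {α : Type*} [PartialOrder α] [DecidableEq α]
    {ls : List (List α)} (h : IsListRealizer ls) : orderDim α ≤ ls.length := by
  apply Nat.sInf_le
  refine ⟨fun i => listLE (ls.get i), ?_, ?_⟩
  · intro i
    have hmem := h.1 (ls.get i) (ls.get_mem i)
    refine ⟨{ refl := fun a => Nat.le_refl _
              trans := fun a b c hab hbc => Nat.le_trans hab hbc
              antisymm := fun a b hab hba =>
                (List.idxOf_inj (hmem.2 a)).1 (Nat.le_antisymm hab hba)
              total := fun a b => Nat.le_total _ _ }, ?_⟩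
    exact h.2.1 _ (ls.get_mem i)
  · intro a b
    constructor
    · intro hab i
      exact h.2.1 _ (ls.get_mem i) a b hab
    · intro hall
      apply h.2.2
      intro l hl
      obtain ⟨i, rfl⟩ := List.mem_iff_get.1 hl
      exact hall i

/-- the explicit three words form a realizer of the crown `C_n`
(`n ≥ 2`); consequently the crown has dimension at most `3`. -/
theorem crown_realizer {α : Type*} [PartialOrder α] [Fintype α] [DecidableEq α]
    (n : ℕ) (hn : 2 ≤ n) (x z : Fin n → α)
    (hbij : Function.Bijective (Sum.elim x z))
    (hlt : ∀ a b : α, a < b ↔ ∃ i : Fin n, (a = x i ∧ b = z i) ∨ (a = x (i + ⟨1, by omega⟩) ∧ b = z i)) :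
    (let X : ℕ → α := fun i => x ⟨i % n, Nat.mod_lt i (by omega)⟩
     let Z : ℕ → α := fun i => z ⟨i % n, Nat.mod_lt i (by omega)⟩
     IsListRealizer
      [[X 0, X 1, Z 0] ++ ((List.range (n - 2)).flatMap fun i => [X (i + 2), Z (i + 1)]) ++ [Z (n - 1)],
       [X 1] ++ ((List.range (n - 2)).flatMap fun i => [X (i + 2), Z (i + 1)]) ++ [X 0, Z (n - 1), Z 0],
       [X 0] ++ ((List.range (n - 1)).flatMap fun i => [X (n - 1 - i), Z (n - 1 - i)]) ++ [Z 0]]) ∧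
    orderDim α ≤ 3 := by
  have npos : 0 < n := by omega
  have hxi : ∀ a b : Fin n, x a = x b → a = b := fun a b h => by
    have := hbij.1 (a₁ := Sum.inl a) (a₂ := Sum.inl b) (by simpa using h)
    simpa using this
  have hzi : ∀ a b : Fin n, z a = z b → a = b := fun a b h => by
    have := hbij.1 (a₁ := Sum.inr a) (a₂ := Sum.inr b) (by simpa using h)
    simpa using this
  have hxz : ∀ a b : Fin n, x a ≠ z b := fun a b h => by
    have := hbij.1 (a₁ := Sum.inl a) (a₂ := Sum.inr b) (by simpa using h)
    simp at this
  let X : ℕ → α := fun i => x ⟨i % n, Nat.mod_lt i npos⟩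
  let Z : ℕ → α := fun i => z ⟨i % n, Nat.mod_lt i npos⟩
  have hfinx : ∀ m : Fin n, X m.val = x m :=
    fun m => congrArg x (Fin.ext (Nat.mod_eq_of_lt m.isLt))
  have hfinz : ∀ m : Fin n, Z m.val = z m :=
    fun m => congrArg z (Fin.ext (Nat.mod_eq_of_lt m.isLt))
  have hadd : ∀ m : Fin n, X (m.val + 1) = x (m + ⟨1, by omega⟩) :=
    fun m => congrArg x (Fin.ext (by simp [Fin.add_def]))
  have hXX : ∀ i j, X i = X j ↔ i % n = j % n :=
    fun i j => ⟨fun h => congrArg Fin.val (hxi _ _ h), fun h => congrArg x (Fin.ext h)⟩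
  have hZZ : ∀ i j, Z i = Z j ↔ i % n = j % n :=
    fun i j => ⟨fun h => congrArg Fin.val (hzi _ _ h), fun h => congrArg z (Fin.ext h)⟩
  have hXZ : ∀ i j, X i ≠ Z j := fun i j => hxz _ _
  have hsurj : ∀ a : α, (∃ i, i < n ∧ a = X i) ∨ ∃ i, i < n ∧ a = Z i := by
    intro a
    obtain ⟨s, rfl⟩ := hbij.2 a
    cases s with
    | inl i => exact Or.inl ⟨i.val, i.isLt, (hfinx i).symm⟩
    | inr i => exact Or.inr ⟨i.val, i.isLt, (hfinz i).symm⟩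
  have hcard : Fintype.card α = 2 * n := by
    rw [← Fintype.card_of_bijective hbij, Fintype.card_sum, Fintype.card_fin]
    omega
  have hlt' : ∀ a b : α, a < b ↔
      ∃ i, i < n ∧ ((a = X i ∧ b = Z i) ∨ (a = X (i + 1) ∧ b = Z i)) := by
    intro a b
    rw [hlt a b]
    constructor
    · rintro ⟨i, ⟨rfl, rfl⟩ | ⟨rfl, rfl⟩⟩
      · exact ⟨i.val, i.isLt, Or.inl ⟨(hfinx i).symm, (hfinz i).symm⟩⟩
      · exact ⟨i.val, i.isLt, Or.inr ⟨(hadd i).symm, (hfinz i).symm⟩⟩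
    · rintro ⟨i, hi, ⟨rfl, rfl⟩ | ⟨rfl, rfl⟩⟩
      · exact ⟨⟨i, hi⟩, Or.inl ⟨(hfinx ⟨i, hi⟩), (hfinz ⟨i, hi⟩)⟩⟩
      · exact ⟨⟨i, hi⟩, Or.inr ⟨(hadd ⟨i, hi⟩), (hfinz ⟨i, hi⟩)⟩⟩
  have key : IsListRealizer [cw1 n X Z, cw2 n X Z, cw3 n X Z] :=
    crownMain hn hXX hZZ hXZ hsurj hlt' hcard
  refine ⟨key, ?_⟩
  exact orderDim_le_of_isListRealizer key
end

section
/- For every n ≥ 3, the crown C_n has order dimension exactly 3; i.e., it admits a realizer of size 3 but no realizer of size 2. -/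
section CrownAux

variable {α : Type*} [PartialOrder α]

/-- Abstract one-step forcing lemma used in the lower bound. -/
private lemma crown_q_step (Q : α → α → Prop)
    (Qtrans : ∀ {a b c : α}, Q a b → Q b c → Q a c)
    (Qinc : ∀ {a b : α}, Q a b → ¬ a ≤ b ∧ ¬ b ≤ a)
    (Qtot : ∀ {a b : α}, ¬ a ≤ b → ¬ b ≤ a → Q a b ∨ Q b a)
    {a b c u v : α}
    (hbc : ¬ b ≤ c ∧ ¬ c ≤ b)
    (hav : ¬ a ≤ v ∧ ¬ v ≤ a) (hcu : ¬ c ≤ u ∧ ¬ u ≤ c)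
    (huv : ¬ u ≤ v ∧ ¬ v ≤ u)
    (hbv : b ≤ v) (hbu : b ≤ u) (hcv : c ≤ v) (hau : a ≤ u)
    (hQ : Q a b) : Q b c := by
  rcases Qtot hbc.1 hbc.2 with h | hcb
  · exact h
  have hQav : Q a v := by
    rcases Qtot hav.1 hav.2 with h | h
    · exact h
    · exact absurd hbv (Qinc (Qtrans h hQ)).2
  have hQcu : Q c u := by
    rcases Qtot hcu.1 hcu.2 with h | h
    · exact h
    · exact absurd hbu (Qinc (Qtrans h hcb)).2
  rcases Qtot huv.1 huv.2 with h | h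
  · exact absurd hcv (Qinc (Qtrans hQcu h)).1
  · exact absurd hau (Qinc (Qtrans hQav h)).1

/-- A linear extension from an injective monotone rank function. -/
private lemma crown_linext (f : α → ℕ) (hf : Function.Injective f)
    (hmono : ∀ a b : α, a ≤ b → f a ≤ f b) :
    IsLinExt (fun a b => f a ≤ f b) :=
  ⟨{ refl := fun _ => le_refl _
     trans := fun _ _ _ hab hbc => le_trans hab hbc
     antisymm := fun _ _ hab hba => hf (le_antisymm hab hba)
     total := fun _ _ => le_total _ _ }, hmono⟩

end CrownAux

open Fin.NatCast Fin.CommRing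

private def crownG0 (n : ℕ) : Fin n ⊕ Fin n → ℕ :=
  Sum.elim (fun i => 2 * i.val) (fun j => 2 * j.val + 3)

private def crownG1 (n : ℕ) : Fin n ⊕ Fin n → ℕ :=
  Sum.elim (fun i => 2 * (n - 1 - i.val))
    (fun j => if j.val = n - 1 then 2 * n + 1 else 2 * (n - 1 - j.val) + 1)

private def crownG2 (n : ℕ) : Fin n ⊕ Fin n → ℕ :=
  Sum.elim (fun i => if i.val = n - 1 then 0 else if i.val = 0 then 1 else i.val + 2)
    (fun j => if j.val = n - 1 then 2 else n + 1 + j.val)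

private lemma crownG0_inj {n : ℕ} : Function.Injective (crownG0 n) := by
  rintro (i | i) (j | j) h <;> simp only [crownG0, Sum.elim_inl, Sum.elim_inr] at h
  · have := i.isLt; have := j.isLt; congr 1; exact Fin.ext (by omega)
  · exact absurd h (by omega)
  · exact absurd h (by omega)
  · congr 1; exact Fin.ext (by omega)

private lemma crownG1_inj {n : ℕ} : Function.Injective (crownG1 n) := by
  rintro (i | i) (j | j) h <;>
    simp only [crownG1, Sum.elim_inl, Sum.elim_inr] at h <;>
    have hi' := i.isLt <;> have hj' := j.isLt
  · congr 1; exact Fin.ext (by omega)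
  · exfalso; split_ifs at h <;> omega
  · exfalso; split_ifs at h <;> omega
  · split_ifs at h <;> (congr 1; exact Fin.ext (by omega))

private lemma crownG2_inj {n : ℕ} : Function.Injective (crownG2 n) := by
  rintro (i | i) (j | j) h <;>
    simp only [crownG2, Sum.elim_inl, Sum.elim_inr] at h <;>
    have hi' := i.isLt <;> have hj' := j.isLt
  · split_ifs at h <;> (congr 1; exact Fin.ext (by omega))
  · exfalso; split_ifs at h <;> omega
  · exfalso; split_ifs at h <;> omega
  · split_ifs at h <;> (congr 1; exact Fin.ext (by omega))

/-- Arithmetic core of the detection (realizer) property of the three rank functions. -/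
private lemma crown_det {n : ℕ} (hn : 3 ≤ n) (s t : Fin n ⊕ Fin n)
    (h0 : crownG0 n s ≤ crownG0 n t) (h1 : crownG1 n s ≤ crownG1 n t)
    (h2 : crownG2 n s ≤ crownG2 n t) :
    s = t ∨ ∃ i j : Fin n, s = .inl i ∧ t = .inr j ∧
      (i.val = j.val ∨ i.val = (j.val + 1) % n) := by
  rcases s with i | i <;> rcases t with j | j <;>
    simp only [crownG0, crownG1, crownG2, Sum.elim_inl, Sum.elim_inr] at h0 h1 h2 <;>
    have hi := i.isLt <;> have hj := j.isLt
  · left; congr 1; exact Fin.ext (by omega)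
  · right
    refine ⟨i, j, rfl, rfl, ?_⟩
    by_cases hj1 : j.val = n - 1
    · have : i.val = n - 1 ∨ i.val = 0 := by split_ifs at h2 <;> omega
      rcases this with h | h
      · left; omega
      · right; rw [show j.val + 1 = n by omega, Nat.mod_self]; omega
    · have hj2 : j.val + 1 < n := by omega
      rw [Nat.mod_eq_of_lt hj2]
      split_ifs at h1 <;> omega
  · exfalso; split_ifs at h2 <;> omega
  · left; congr 1
    split_ifs at h1 h2 <;> exact Fin.ext (by omega)

private def crownL (n : ℕ) (m : Fin 3) : Fin n ⊕ Fin n → ℕ :=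
  if m.val = 0 then crownG0 n else if m.val = 1 then crownG1 n else crownG2 n

private lemma crownL_inj {n : ℕ} (m : Fin 3) : Function.Injective (crownL n m) := by
  rcases m with ⟨mv, hm⟩
  interval_cases mv
  · exact crownG0_inj
  · exact crownG1_inj
  · exact crownG2_inj

/-- Monotonicity of the three rank functions along the crown covers. -/
private lemma crown_mono {n : ℕ} (hn : 3 ≤ n) (i i' : Fin n) (hi' : i'.val = (i.val + 1) % n) :
    (crownG0 n (.inl i) ≤ crownG0 n (.inr i) ∧ crownG0 n (.inl i') ≤ crownG0 n (.inr i)) ∧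
    (crownG1 n (.inl i) ≤ crownG1 n (.inr i) ∧ crownG1 n (.inl i') ≤ crownG1 n (.inr i)) ∧
    (crownG2 n (.inl i) ≤ crownG2 n (.inr i) ∧ crownG2 n (.inl i') ≤ crownG2 n (.inr i)) := by
  have hi := i.isLt
  have hi'lt := i'.isLt
  have hmod : (i.val + 1) % n = if i.val + 1 = n then 0 else i.val + 1 := by
    split_ifs with h
    · rw [h, Nat.mod_self]
    · exact Nat.mod_eq_of_lt (by omega)
  rw [hmod] at hi'
  simp only [crownG0, crownG1, crownG2, Sum.elim_inl, Sum.elim_inr]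
  split_ifs at hi' ⊢ <;> omega

/-- for `n ≥ 3` the crown `C_n` has order dimension exactly `3`. -/
theorem crown_dim_eq_three {α : Type*} [PartialOrder α] [Fintype α]
    (n : ℕ) (hn : 3 ≤ n) (x z : Fin n → α)
    (hbij : Function.Bijective (Sum.elim x z))
    (hlt : ∀ a b : α, a < b ↔ ∃ i : Fin n, (a = x i ∧ b = z i) ∨ (a = x (i + ⟨1, by omega⟩) ∧ b = z i)) :
    orderDim α = 3 := by
  haveI : NeZero n := ⟨by omega⟩
  have hone : (⟨1, by omega⟩ : Fin n) = 1 := by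
    ext
    rw [Fin.val_one']
    exact (Nat.mod_eq_of_lt (by omega)).symm
  have hlt' : ∀ a b : α, a < b ↔ ∃ i : Fin n,
      (a = x i ∧ b = z i) ∨ (a = x (i + 1) ∧ b = z i) := by
    simpa only [hone] using hlt
  clear hlt
  set e : (Fin n ⊕ Fin n) ≃ α := Equiv.ofBijective _ hbij with he
  have hinj := hbij.injective
  have hxz : ∀ i j : Fin n, x i ≠ z j := by
    intro i j h
    have h2 : (Sum.inl i : Fin n ⊕ Fin n) = Sum.inr j := hinj h
    simp at h2
  have hxx : ∀ i j : Fin n, x i = x j → i = j := by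
    intro i j h
    have h2 := hinj (a₁ := Sum.inl i) (a₂ := Sum.inl j) h
    simpa using h2
  have hzz : ∀ i j : Fin n, z i = z j → i = j := by
    intro i j h
    have h2 := hinj (a₁ := Sum.inr i) (a₂ := Sum.inr j) h
    simpa using h2
  have hxzle : ∀ i : Fin n, x i ≤ z i := fun i =>
    le_of_lt ((hlt' _ _).2 ⟨i, Or.inl ⟨rfl, rfl⟩⟩)
  have hxzle' : ∀ i : Fin n, x (i + 1) ≤ z i := fun i =>
    le_of_lt ((hlt' _ _).2 ⟨i, Or.inr ⟨rfl, rfl⟩⟩)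
  have incX : ∀ i j : Fin n, i ≠ j → ¬ x i ≤ x j := by
    intro i j hne hle
    rcases lt_or_eq_of_le hle with h | h
    · rcases (hlt' _ _).1 h with ⟨k, ⟨_, hk⟩ | ⟨_, hk⟩⟩ <;> exact hxz _ _ hk
    · exact hne (hxx _ _ h)
  have incZ : ∀ i j : Fin n, i ≠ j → ¬ z i ≤ z j := by
    intro i j hne hle
    rcases lt_or_eq_of_le hle with h | h
    · rcases (hlt' _ _).1 h with ⟨k, ⟨hk, _⟩ | ⟨hk, _⟩⟩ <;> exact hxz _ _ hk.symm
    · exact hne (hzz _ _ h)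
  have hzx : ∀ j i : Fin n, ¬ z j ≤ x i := by
    intro j i hle
    rcases lt_or_eq_of_le hle with h | h
    · rcases (hlt' _ _).1 h with ⟨k, ⟨hk, _⟩ | ⟨hk, _⟩⟩ <;> exact hxz _ _ hk.symm
    · exact hxz i j h.symm
  have hxzlt : ∀ i j : Fin n, x i < z j → i = j ∨ i = j + 1 := by
    intro i j h
    rcases (hlt' _ _).1 h with ⟨k, ⟨h1, h2⟩ | ⟨h1, h2⟩⟩
    · left; rw [hxx _ _ h1, hzz _ _ h2]
    · right; rw [hxx _ _ h1, hzz _ _ h2]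
  have incXZ : ∀ i j : Fin n, i ≠ j → i ≠ j + 1 → ¬ x i ≤ z j := by
    intro i j h1 h2 hle
    rcases lt_or_eq_of_le hle with h | h
    · rcases hxzlt _ _ h with h' | h'
      exacts [h1 h', h2 h']
    · exact hxz _ _ h
  -- Fin index facts
  have hv1 : (1 : Fin n).val = 1 := by
    rw [Fin.val_one']
    exact Nat.mod_eq_of_lt (by omega)
  have f1 : ∀ i : Fin n, i ≠ i + 1 := by
    intro i h
    have h0 := left_eq_add.1 h
    rw [Fin.ext_iff, hv1, Fin.val_zero] at h0
    omega
  have f2 : ∀ i : Fin n, i ≠ i + 1 + 1 := by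
    intro i h
    rw [add_assoc] at h
    have h0 := left_eq_add.1 h
    rw [Fin.ext_iff, Fin.val_add, hv1, Fin.val_zero] at h0
    rw [Nat.mod_eq_of_lt (by omega)] at h0
    omega
  have h01 : (0 : Fin n) ≠ 1 := by
    have h := f1 0
    rwa [zero_add] at h
  have pXX : ∀ i j : Fin n, i ≠ j → (¬ x i ≤ x j ∧ ¬ x j ≤ x i) := fun i j h =>
    ⟨incX i j h, incX j i (Ne.symm h)⟩
  have pZZ : ∀ i j : Fin n, i ≠ j → (¬ z i ≤ z j ∧ ¬ z j ≤ z i) := fun i j h =>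
    ⟨incZ i j h, incZ j i (Ne.symm h)⟩
  have pXZ : ∀ i j : Fin n, i ≠ j → i ≠ j + 1 → (¬ x i ≤ z j ∧ ¬ z j ≤ x i) := fun i j h h' =>
    ⟨incXZ i j h h', hzx j i⟩
  have hcast : ∀ k : ℕ, ((k + 1 : ℕ) : Fin n) = (k : Fin n) + 1 := by
    intro k; push_cast; ring
  ---------------------------------------------------------------------------
  -- Lower bound: there is no realizer of size 2.
  ---------------------------------------------------------------------------
  have noR2 : ∀ L : Fin 2 → α → α → Prop, ¬ IsRealizer L := by
    intro L hL
    obtain ⟨hLin, hIff⟩ := hL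
    letI := (hLin 0).1
    letI := (hLin 1).1
    set Q : α → α → Prop := fun a b => L 0 a b ∧ L 1 b a ∧ a ≠ b with hQdef
    have Qtrans : ∀ {a b c : α}, Q a b → Q b c → Q a c := by
      rintro a b c ⟨h1, h2, h3⟩ ⟨h4, h5, h6⟩
      refine ⟨trans_of (L 0) h1 h4, trans_of (L 1) h5 h2, ?_⟩
      rintro rfl
      exact h3 (antisymm h1 h4)
    have Qinc : ∀ {a b : α}, Q a b → ¬ a ≤ b ∧ ¬ b ≤ a := by
      rintro a b ⟨h1, h2, h3⟩
      constructor
      · intro hle; exact h3 (antisymm ((hIff a b).1 hle 1) h2)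
      · intro hle; exact h3 (antisymm h1 ((hIff b a).1 hle 0))
    have Qtot : ∀ {a b : α}, ¬ a ≤ b → ¬ b ≤ a → Q a b ∨ Q b a := by
      intro a b hab hba
      have hne : a ≠ b := by rintro rfl; exact hab le_rfl
      have e1 : ¬ ∀ i, L i a b := fun h => hab ((hIff a b).2 h)
      have e2 : ¬ ∀ i, L i b a := fun h => hba ((hIff b a).2 h)
      push_neg at e1 e2
      obtain ⟨i, hi⟩ := e1
      obtain ⟨j, hj⟩ := e2
      have hi' : L i b a := ((hLin i).1.total a b).resolve_left hi
      have hj' : L j a b := ((hLin j).1.total b a).resolve_left hj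
      have hvne : i.val ≠ j.val := by
        intro hh
        have hij : i = j := Fin.ext hh
        rw [hij] at hi
        exact hi hj'
      have hv : (i.val = 0 ∧ j.val = 1) ∨ (i.val = 1 ∧ j.val = 0) := by
        have hb1 := i.isLt; have hb2 := j.isLt; omega
      rcases hv with ⟨hh1, hh2⟩ | ⟨hh1, hh2⟩
      · right
        rw [show i = 0 from Fin.ext hh1] at hi'
        rw [show j = 1 from Fin.ext hh2] at hj'
        exact ⟨hi', hj', Ne.symm hne⟩
      · left
        rw [show i = 1 from Fin.ext hh1] at hi'
        rw [show j = 0 from Fin.ext hh2] at hj'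
        exact ⟨hj', hi', hne⟩
    have stepA : ∀ i : Fin n, Q (x i) (x (i + 1)) → Q (x (i + 1)) (x (i + 1 + 1)) := fun i hQ' =>
      crown_q_step Q Qtrans Qinc Qtot
        (pXX (i + 1) (i + 1 + 1) (f1 (i + 1)))
        (pXZ i (i + 1) (f1 i) (f2 i))
        (pXZ (i + 1 + 1) i (Ne.symm (f2 i)) (Ne.symm (f1 (i + 1))))
        (pZZ i (i + 1) (f1 i))
        (hxzle (i + 1)) (hxzle' i) (hxzle' (i + 1)) (hxzle i) hQ'
    have stepB : ∀ j : Fin n, Q (x (j + 1 + 1)) (x (j + 1)) → Q (x (j + 1)) (x j) := fun j hQ' =>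
      crown_q_step Q Qtrans Qinc Qtot
        (pXX (j + 1) j (Ne.symm (f1 j)))
        (pXZ (j + 1 + 1) j (Ne.symm (f2 j)) (Ne.symm (f1 (j + 1))))
        (pXZ j (j + 1) (f1 j) (f2 j))
        (pZZ (j + 1) j (Ne.symm (f1 j)))
        (hxzle' j) (hxzle (j + 1)) (hxzle j) (hxzle' (j + 1)) hQ'
    rcases Qtot (incX 0 1 h01) (incX 1 0 (Ne.symm h01)) with hA | hB
    · -- forward propagation
      have allA : ∀ k : ℕ, Q (x (k : Fin n)) (x ((k : Fin n) + 1)) := by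
        intro k
        induction k with
        | zero => simpa using hA
        | succ k ih =>
          rw [hcast k]
          exact stepA _ ih
      have chainA : ∀ k : ℕ, Q (x 0) (x ((k : Fin n) + 1)) := by
        intro k
        induction k with
        | zero => simpa using hA
        | succ k ih =>
          have h2 := allA (k + 1)
          rw [hcast k] at h2 ⊢
          exact Qtrans ih h2
      have hfin := chainA (n - 1)
      have hz0 : ((n - 1 : ℕ) : Fin n) + 1 = 0 := by
        rw [← hcast (n - 1), show n - 1 + 1 = n from by omega, Fin.natCast_self]
      rw [hz0] at hfin
      exact (Qinc hfin).1 le_rfl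
    · -- backward propagation
      have allB : ∀ k : ℕ, Q (x (1 - (k : Fin n))) (x (0 - (k : Fin n))) := by
        intro k
        induction k with
        | zero => simpa using hB
        | succ k ih =>
          have h := stepB (0 - ((k : Fin n) + 1))
          rw [show (0 - ((k : Fin n) + 1)) + 1 + 1 = 1 - (k : Fin n) from by ring,
              show (0 - ((k : Fin n) + 1)) + 1 = 0 - (k : Fin n) from by ring] at h
          have h2 := h ih
          rw [hcast k, show (1 : Fin n) - ((k : Fin n) + 1) = 0 - (k : Fin n) from by ring]
          exact h2
      have chainB : ∀ k : ℕ, Q (x 1) (x (0 - (k : Fin n))) := by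
        intro k
        induction k with
        | zero => simpa using hB
        | succ k ih =>
          have h2 := allB (k + 1)
          rw [hcast k, show (1 : Fin n) - ((k : Fin n) + 1) = 0 - (k : Fin n) from by ring] at h2
          rw [hcast k]
          exact Qtrans ih h2
      have hfin := chainB (n - 1)
      have hz0 : (0 : Fin n) - ((n - 1 : ℕ) : Fin n) = 1 := by
        have h := hcast (n - 1)
        rw [show n - 1 + 1 = n from by omega, Fin.natCast_self] at h
        linear_combination h
      rw [hz0] at hfin
      exact (Qinc hfin).1 le_rfl
  ---------------------------------------------------------------------------
  -- Upper bound: an explicit realizer of size 3.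
  ---------------------------------------------------------------------------
  have hsymmx : ∀ i : Fin n, e.symm (x i) = Sum.inl i := by
    intro i
    rw [Equiv.symm_apply_eq, he]
    rfl
  have hsymmz : ∀ i : Fin n, e.symm (z i) = Sum.inr i := by
    intro i
    rw [Equiv.symm_apply_eq, he]
    rfl
  have hval1 : ∀ i : Fin n, ((i + 1 : Fin n)).val = (i.val + 1) % n := by
    intro i
    rw [Fin.val_add, hv1]
  have hmono3 : ∀ m : Fin 3, ∀ a b : α, a ≤ b →
      crownL n m (e.symm a) ≤ crownL n m (e.symm b) := by
    intro m a b hab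
    rcases eq_or_lt_of_le hab with rfl | hlt2
    · exact le_refl _
    · rcases (hlt' _ _).1 hlt2 with ⟨i, ⟨ha, hb⟩ | ⟨ha, hb⟩⟩ <;> subst ha <;> subst hb <;>
        rw [hsymmx, hsymmz]
      · have key := crown_mono hn i (i + 1) (hval1 i)
        rcases m with ⟨mv, hm⟩
        interval_cases mv
        · exact key.1.1
        · exact key.2.1.1
        · exact key.2.2.1
      · have key := crown_mono hn i (i + 1) (hval1 i)
        rcases m with ⟨mv, hm⟩
        interval_cases mv
        · exact key.1.2
        · exact key.2.1.2
        · exact key.2.2.2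
  have hreal3 : IsRealizer (fun (m : Fin 3) (a b : α) =>
      crownL n m (e.symm a) ≤ crownL n m (e.symm b)) := by
    constructor
    · intro m
      exact crown_linext (fun a => crownL n m (e.symm a))
        ((crownL_inj m).comp e.symm.injective) (hmono3 m)
    · intro a b
      constructor
      · intro hab m
        exact hmono3 m a b hab
      · intro h
        have hd := crown_det hn (e.symm a) (e.symm b) (h 0) (h 1) (h 2)
        rcases hd with heq | ⟨i, j, hs, ht, hij⟩
        · have hab : a = b := by
            have h2 := congrArg e heq
            rwa [Equiv.apply_symm_apply, Equiv.apply_symm_apply] at h2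
          exact hab.le
        · have ha : a = x i := by
            have h2 := congrArg e hs
            rw [Equiv.apply_symm_apply] at h2
            exact h2
          have hb : b = z j := by
            have h2 := congrArg e ht
            rw [Equiv.apply_symm_apply] at h2
            exact h2
          subst ha; subst hb
          rcases hij with h' | h'
          · rw [show i = j from Fin.ext h']
            exact hxzle j
          · rw [show i = j + 1 from Fin.ext (by rw [hval1 j]; exact h')]
            exact hxzle' j
  ---------------------------------------------------------------------------
  -- Conclusion.
  ---------------------------------------------------------------------------
  have h3mem : 3 ∈ {k | ∃ L : Fin k → α → α → Prop, IsRealizer L} := ⟨_, hreal3⟩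
  have hge : ∀ m ∈ {k | ∃ L : Fin k → α → α → Prop, IsRealizer L}, 3 ≤ m := by
    intro m hm
    by_contra hc
    push_neg at hc
    obtain ⟨L, hL⟩ := hm
    interval_cases m
    · exact incX 0 1 h01 ((hL.2 (x 0) (x 1)).2 (fun i => i.elim0))
    · refine noR2 (fun _ => L 0) ⟨fun _ => hL.1 0, fun a b => ?_⟩
      constructor
      · intro hab _
        exact (hL.2 a b).1 hab 0
      · intro h
        refine (hL.2 a b).2 (fun i => ?_)
        rw [Subsingleton.elim i 0]
        exact h 0
    · exact noR2 L hL
  unfold orderDim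
  exact le_antisymm (Nat.sInf_le h3mem) (le_csInf ⟨3, h3mem⟩ hge)
end

section
/- A finite poset whose cover graph (undirected Hasse diagram) is a tree and which has a minimum element has order dimension at most 2. -/
lemma lex_append_aux {α : Type*} (s : α → α → Prop) :
    ∀ (l t : List α), t ≠ [] → List.Lex s l (l ++ t)
  | [], [], h => absurd rfl h
  | [], (_ :: _), _ => List.Lex.nil
  | (_ :: l), t, h => List.Lex.cons (lex_append_aux s l t h)

lemma prefix_of_lex_both {α : Type*} {s : α → α → Prop}
    (hs : ∀ a b, s a b → ¬ s b a) :
    ∀ {l1 l2 : List α}, List.Lex s l1 l2 → List.Lex (Function.swap s) l1 l2 →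
      l1 <+: l2 := by
  intro l1 l2 h1
  induction h1 with
  | nil => exact fun _ => List.nil_prefix
  | @cons a t1 t2 h ih =>
      intro h2
      cases h2 with
      | cons h2' => exact (List.cons_prefix_cons).mpr ⟨rfl, ih h2'⟩
      | rel h2' => exact (hs a a h2' h2').elim
  | @rel a1 t1 a2 t2 h =>
      intro h2
      cases h2 with
      | cons _ => exact (hs _ _ h h).elim
      | rel h2' => exact (hs _ _ h h2').elim


/-- a finite tree poset with a minimum element has dimension at
most `2`. -/
theorem tree_with_min_dim_le_two {α : Type*} [PartialOrder α] [Fintype α]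
    (ht : (coverGraph α).IsTree) (hmin : ∃ m : α, ∀ w : α, m ≤ w) :
    orderDim α ≤ 2 := by
  classical
  letI : LocallyFiniteOrder α := Fintype.toLocallyFiniteOrder
  obtain ⟨m, hm⟩ := hmin
  choose p hp hup using ht.existsUnique_path m
  set S : α → List α := fun x => (p x).support with hS
  -- any walk whose support is a cover-chain is a path
  have path_of_chain : ∀ {a b : α} (w : (coverGraph α).Walk a b),
      w.support.Chain' (· ⋖ ·) → w.IsPath := by
    intro a b w hw
    rw [SimpleGraph.Walk.isPath_def]
    have h1 : w.support.Chain' (· < ·) := hw.imp (fun _ _ h => h.lt)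
    have h2 := (List.isChain_iff_pairwise).mp h1
    exact h2.imp ne_of_lt
  -- a ≤ b gives a monotone walk
  have key : ∀ a b : α, a ≤ b →
      ∃ w : (coverGraph α).Walk a b, w.support.Chain' (· ⋖ ·) := by
    intro a b hab
    rcases eq_or_lt_of_le hab with rfl | hlt
    · exact ⟨SimpleGraph.Walk.nil, List.isChain_singleton _⟩
    · have htg := lt_iff_transGen_covBy.mp hlt
      clear hab hlt
      induction htg using Relation.TransGen.head_induction_on with
      | single h =>
          refine ⟨SimpleGraph.Walk.cons (show (coverGraph α).Adj _ _ from Or.inl h) SimpleGraph.Walk.nil, ?_⟩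
          simp [List.Chain', h]
      | head h _ ih =>
          obtain ⟨w, hw⟩ := ih
          refine ⟨SimpleGraph.Walk.cons (show (coverGraph α).Adj _ _ from Or.inl h) w, ?_⟩
          rw [SimpleGraph.Walk.support_cons, w.support_eq_cons]
          rw [w.support_eq_cons] at hw
          exact List.isChain_cons_cons.mpr ⟨h, hw⟩
  -- last element of S x is x
  have hlast : ∀ x : α, (S x).getLast? = some x := by
    intro x
    rw [← List.head?_reverse, hS]
    rw [← (p x).support_reverse, (p x).reverse.support_eq_cons]
    rfl
  have hinj : Function.Injective S := by
    intro a b hab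
    have := hlast a
    rw [hab, hlast b, Option.some_inj] at this
    exact this.symm
  -- prefix characterization of ≤
  have hpre : ∀ a b : α, a ≤ b ↔ S a <+: S b := by
    intro a b
    constructor
    · intro hab
      obtain ⟨w1, hw1⟩ := key m a (hm a)
      obtain ⟨w2, hw2⟩ := key a b hab
      have hw1p : w1 = p a := hup a w1 (path_of_chain w1 hw1)
      have hchain : (w1.append w2).support.Chain' (· ⋖ ·) := by
        rw [SimpleGraph.Walk.support_append]; show List.IsChain _ _; rw [List.isChain_append]
        refine ⟨hw1, ?_, ?_⟩
        · rw [w2.support_eq_cons] at hw2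
          exact hw2.tail
        · intro x hx y hy
          have hx' : x = a := by
            have hg : w1.support.getLast? = some a := by
              rw [← List.head?_reverse, ← w1.support_reverse,
                w1.reverse.support_eq_cons]; rfl
            rw [hg, Option.mem_some_iff] at hx
            exact hx.symm
          subst hx'
          rw [w2.support_eq_cons] at hw2
          exact (List.isChain_cons.mp hw2).1 y hy
      have := hup b (w1.append w2) (path_of_chain _ hchain)
      refine ⟨w2.support.tail, ?_⟩
      rw [hS]
      simp only
      rw [← this, SimpleGraph.Walk.support_append, hw1p]
    · intro ⟨t, hts⟩
      obtain ⟨w, hw⟩ := key m b (hm b)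
      have hwp : w = p b := hup b w (path_of_chain w hw)
      have hchain : (S b).Chain' (· < ·) := by
        rw [hS]; simp only [← hwp]
        exact hw.imp (fun _ _ h => h.lt)
      rcases List.eq_nil_or_concat t with rfl | ⟨t', c, rfl⟩
      · rw [List.append_nil] at hts
        exact le_of_eq (hinj hts)
      · have hb : b = c := by
          have := hlast b
          rw [← hts] at this
          simp only [List.concat_eq_append, ← List.append_assoc,
            List.getLast?_concat, Option.some_inj] at this
          exact this.symm
        subst hb
        have hpw := (List.isChain_iff_pairwise).mp hchain
        rw [← hts] at hpw
        have := (List.pairwise_append.mp hpw).2.2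
        have ha : a ∈ S a := by
          have hmm : a ∈ (S a).getLast? := hlast a
          obtain ⟨hne, heq⟩ := List.mem_getLast?_eq_getLast hmm
          have hmem := List.getLast_mem hne
          rwa [← heq] at hmem
        have hbmem : b ∈ t'.concat b := by simp [List.concat_eq_append]
        exact (this a ha b hbmem).le
  -- a strict total order on α
  set s : α → α → Prop := fun x y => Fintype.equivFin α x < Fintype.equivFin α y with hs
  have hasymm : ∀ x y, s x y → ¬ s y x := fun x y h1 h2 => absurd (h1.trans h2) (lt_irrefl _)
  have hStot : ∀ (s' : α → α → Prop), (∀ x y z, s' x y → s' y z → s' x z) →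
      (∀ x y, s' x y → ¬ s' y x) → (∀ x y, s' x y ∨ x = y ∨ s' y x) →
      IsStrictTotalOrder α s' := by
    intro s' htrans hasym htri
    exact { trichotomous := fun a b h1 h2 => ((htri a b).resolve_left h1).resolve_right h2
            irrefl := fun a h => hasym a a h h
            trans := htrans }
  have hs1 : IsStrictTotalOrder α s := by
    refine hStot s (fun x y z h1 h2 => h1.trans h2) hasymm (fun x y => ?_)
    rcases lt_trichotomy (Fintype.equivFin α x) (Fintype.equivFin α y) with h | h | h
    · exact Or.inl h
    · exact Or.inr (Or.inl ((Fintype.equivFin α).injective h))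
    · exact Or.inr (Or.inr h)
  have hs2 : IsStrictTotalOrder α (Function.swap s) := by
    refine hStot _ (fun x y z h1 h2 => lt_trans h2 h1) (fun x y h1 h2 => hasymm y x h1 h2)
      (fun x y => ?_)
    rcases lt_trichotomy (Fintype.equivFin α x) (Fintype.equivFin α y) with h | h | h
    · exact Or.inr (Or.inr h)
    · exact Or.inr (Or.inl ((Fintype.equivFin α).injective h))
    · exact Or.inl h
  -- generic construction of linear extension from a strict total order
  have mk : ∀ s' : α → α → Prop, IsStrictTotalOrder α s' →
      IsLinExt (fun a b => a = b ∨ List.Lex s' (S a) (S b)) := by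
    intro s' hs'
    haveI := hs'
    constructor
    · refine { refl := fun a => Or.inl rfl, trans := ?_, antisymm := ?_, total := ?_ }
      · rintro a b c (rfl | h1) (rfl | h2)
        · exact Or.inl rfl
        · exact Or.inr h2
        · exact Or.inr h1
        · exact Or.inr (List.lex_trans (fun h1 h2 => _root_.trans h1 h2) h1 h2)
      · rintro a b (rfl | h1) (h2 | h2)
        · rfl
        · rfl
        · exact h2.symm
        · exact absurd h2 (asymm h1)
      · intro a b
        by_cases hab : a = b
        · exact Or.inl (Or.inl hab)
        · rcases trichotomous_of (List.Lex s') (S a) (S b) with h | h | h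
          · exact Or.inl (Or.inr h)
          · exact absurd (hinj h) hab
          · exact Or.inr (Or.inr h)
    · intro a b hab
      obtain ⟨t, hts⟩ := (hpre a b).mp hab
      rcases eq_or_ne t [] with rfl | hne
      · rw [List.append_nil] at hts
        exact Or.inl (hinj hts)
      · exact Or.inr (hts ▸ lex_append_aux s' (S a) t hne)
  set L : Fin 2 → α → α → Prop := fun i a b =>
    if i = 0 then a = b ∨ List.Lex s (S a) (S b)
    else a = b ∨ List.Lex (Function.swap s) (S a) (S b)
    with hL
  have hreal : IsRealizer L := by
    constructor
    · intro i
      rcases eq_or_ne i 0 with rfl | hi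
      · simpa [hL] using mk s hs1
      · simpa [hL, hi] using mk (Function.swap s) hs2
    · intro a b
      constructor
      · intro hab i
        rcases eq_or_ne i 0 with rfl | hi
        · simpa [hL] using (mk s hs1).2 a b hab
        · simpa [hL, hi] using (mk (Function.swap s) hs2).2 a b hab
      · intro h
        have h0 := h 0
        have h1 := h 1
        simp only [hL, if_pos rfl] at h0
        simp only [hL, Fin.one_eq_zero_iff, if_neg (by norm_num : (1:Fin 2) ≠ 0)] at h1
        rcases h0 with rfl | h0
        · exact le_refl a
        · rcases h1 with rfl | h1
          · exact le_refl a
          · exact (hpre a b).mpr (prefix_of_lex_both hasymm h0 h1)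
  exact Nat.sInf_le ⟨L, hreal⟩
end

section
/- A finite poset whose cover graph is a tree and which has a maximum element has order dimension at most 2. -/
section Aux

open SimpleGraph

variable {α : Type*} [PartialOrder α] [Fintype α]

/-- For `x ≤ y`, there is a walk from `y` down to `x` whose support is a
decreasing chain of covers. -/
lemma auxDownWalk (y : α) : ∀ x : α, x ≤ y →
    ∃ w : (coverGraph α).Walk y x, List.Chain' (fun a b => b ⋖ a) w.support := by
  induction y using WellFoundedLT.induction with
  | ind y ih =>
    intro x hxy
    rcases hxy.lt_or_eq with hlt | rfl
    · obtain ⟨z, hxz, hzy⟩ := hlt.exists_le_covby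
      obtain ⟨w, hw⟩ := ih z hzy.lt x hxz
      refine ⟨SimpleGraph.Walk.cons (show (coverGraph α).Adj y z from Or.inr hzy) w, ?_⟩
      rw [SimpleGraph.Walk.support_cons]
      rw [w.support_eq_cons] at hw ⊢
      exact List.isChain_cons_cons.mpr ⟨hzy, hw⟩
    · exact ⟨SimpleGraph.Walk.nil, List.isChain_singleton _⟩

lemma auxChainPairwise {l : List α} (h : List.Chain' (fun a b => b ⋖ a) l) :
    l.Pairwise (· > ·) := by
  rw [← List.isChain_iff_pairwise]
  exact h.imp fun a b hab => hab.lt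

lemma auxPairwiseNodup {l : List α} (h : l.Pairwise (· > ·)) : l.Nodup :=
  h.imp fun hab => ne_of_gt hab

lemma auxPairwiseLastLe : ∀ (l : List α) (h : l ≠ []),
    l.Pairwise (· > ·) → ∀ a ∈ l, l.getLast h ≤ a := by
  intro l
  induction l with
  | nil => simp
  | cons b t ih =>
    intro h hp a ha
    rcases eq_or_ne t [] with rfl | htne
    · simp only [List.mem_singleton] at ha
      subst ha
      simp
    · rw [List.getLast_cons htne]
      rcases List.mem_cons.mp ha with rfl | hat
      · exact le_of_lt ((List.pairwise_cons.mp hp).1 _ (List.getLast_mem htne))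
      · exact ih htne (List.pairwise_cons.mp hp).2 a hat

end Aux

section Tree

variable {α : Type*} [PartialOrder α] [Fintype α]

open SimpleGraph

/-- The unique path from `m` to `x` in the cover graph, as a list. -/
noncomputable def theSup (ht : (coverGraph α).IsTree) (m x : α) : List α :=
  (ht.existsUnique_path m x).choose.support

variable (ht : (coverGraph α).IsTree) (m : α)

lemma theSup_ne_nil (x : α) : theSup ht m x ≠ [] := by
  simp [theSup]

lemma theSup_nodup (x : α) : (theSup ht m x).Nodup :=
  (SimpleGraph.Walk.isPath_def _).mp (ht.existsUnique_path m x).choose_spec.1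

lemma theSup_getLast (x : α) (h : theSup ht m x ≠ []) : (theSup ht m x).getLast h = x :=
  SimpleGraph.Walk.getLast_support _

lemma theSup_getLast? (x : α) : (theSup ht m x).getLast? = some x := by
  rw [List.getLast?_eq_getLast_of_ne_nil (theSup_ne_nil ht m x), theSup_getLast]

variable (hm : ∀ w : α, w ≤ m)
include hm

lemma theSup_chain (x : α) : List.Chain' (fun a b => b ⋖ a) (theSup ht m x) := by
  obtain ⟨w, hw⟩ := auxDownWalk m x (hm x)
  have hnd : w.support.Nodup := auxPairwiseNodup (auxChainPairwise hw)
  have heq : w = (ht.existsUnique_path m x).choose :=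
    (ht.existsUnique_path m x).choose_spec.2 w ((SimpleGraph.Walk.isPath_def w).mpr hnd)
  rw [theSup, ← heq]
  exact hw

lemma theSup_mem_le (x : α) : ∀ a ∈ theSup ht m x, x ≤ a := by
  intro a ha
  have hp := auxChainPairwise (theSup_chain ht m hm x)
  have := auxPairwiseLastLe _ (theSup_ne_nil ht m x) hp a ha
  rwa [theSup_getLast ht m x] at this

lemma theSup_prefix {x y : α} (hxy : x ≤ y) : theSup ht m y <+: theSup ht m x := by
  obtain ⟨w, hw⟩ := auxDownWalk y x hxy
  have hq : ((ht.existsUnique_path m y).choose.append w).IsPath := by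
    rw [SimpleGraph.Walk.isPath_def, SimpleGraph.Walk.support_append]
    refine List.Nodup.append (theSup_nodup ht m y) ?_ ?_
    · exact (auxPairwiseNodup (auxChainPairwise hw)).tail
    · intro a hap hat
      have h1 : y ≤ a := theSup_mem_le ht m hm y a hap
      have hpw := auxChainPairwise hw
      rw [w.support_eq_cons] at hpw
      have h2 : a < y := (List.pairwise_cons.mp hpw).1 a hat
      exact absurd h1 (not_le_of_gt h2)
  have heq : (ht.existsUnique_path m y).choose.append w = (ht.existsUnique_path m x).choose :=
    (ht.existsUnique_path m x).choose_spec.2 _ hq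
  refine ⟨w.support.tail, ?_⟩
  rw [theSup, theSup, ← heq, SimpleGraph.Walk.support_append]

lemma theSup_prefix_le {x y : α} (h : theSup ht m y <+: theSup ht m x) : x ≤ y := by
  have hy : y ∈ theSup ht m y := by
    have h1 := List.getLast_mem (theSup_ne_nil ht m y)
    rwa [theSup_getLast ht m y] at h1
  exact theSup_mem_le ht m hm x y (h.subset hy)

lemma theSup_inj {x y : α} (h : theSup ht m x = theSup ht m y) : x = y := by
  have h1 := theSup_getLast? ht m x
  rw [h, theSup_getLast? ht m y] at h1
  exact (Option.some_inj.mp h1).symm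

end Tree

section Lists

lemma auxListTri {β : Type*} : ∀ l1 l2 : List β, l1 <+: l2 ∨ l2 <+: l1 ∨
    ∃ (p : List β) (a b : β) (s1 s2 : List β), a ≠ b ∧ l1 = p ++ a :: s1 ∧ l2 = p ++ b :: s2 := by
  intro l1
  induction l1 with
  | nil => exact fun l2 => Or.inl List.nil_prefix
  | cons a t1 ih =>
    intro l2
    cases l2 with
    | nil => exact Or.inr (Or.inl List.nil_prefix)
    | cons b t2 =>
      by_cases hab : a = b
      · subst hab
        rcases ih t2 with ⟨r, rfl⟩ | ⟨r, rfl⟩ | ⟨p, c, d, s1, s2, hcd, h1, h2⟩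
        · exact Or.inl ⟨r, rfl⟩
        · exact Or.inr (Or.inl ⟨r, rfl⟩)
        · exact Or.inr (Or.inr ⟨a :: p, c, d, s1, s2, hcd, by simp [h1], by simp [h2]⟩)
      · exact Or.inr (Or.inr ⟨[], a, b, t1, t2, hab, rfl, rfl⟩)

lemma auxLexAppend {β : Type*} [LinearOrder β] {a b : β} (hab : a < b) (p s1 s2 : List β) :
    List.Lex (· < ·) (p ++ a :: s1) (p ++ b :: s2) :=
  List.Lex.append_left _ (List.Lex.rel hab) p

lemma auxLexTrans {β : Type*} [LinearOrder β] {l1 l2 l3 : List β}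
    (h1 : List.Lex (· < ·) l1 l2) (h2 : List.Lex (· < ·) l2 l3) : List.Lex (· < ·) l1 l3 :=
  List.lex_trans lt_trans h1 h2

lemma auxLexAsymm {β : Type*} [LinearOrder β] {l1 l2 : List β}
    (h1 : List.Lex (· < ·) l1 l2) : ¬ List.Lex (· < ·) l2 l1 :=
  asymm h1

lemma auxLexTri {β : Type*} [LinearOrder β] (l1 l2 : List β) :
    List.Lex (· < ·) l1 l2 ∨ l1 = l2 ∨ List.Lex (· < ·) l2 l1 :=
  trichotomous_of _ _ _

lemma auxLexAppend' {β : Type*} [LinearOrder β] {a b : β} {p s1 s2 : List β} (hab : a ≠ b)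
    (h : List.Lex (· < ·) (p ++ a :: s1) (p ++ b :: s2)) : a < b := by
  rcases lt_trichotomy a b with h' | h' | h'
  · exact h'
  · exact absurd h' hab
  · exact absurd (auxLexAppend h' p s2 s1) (auxLexAsymm h)

end Lists

section Orders

variable {α : Type*} [PartialOrder α] [Fintype α]

open SimpleGraph

/-- The padded word associated to `x`. -/
noncomputable def thePadded (ht : (coverGraph α).IsTree) (m : α)
    (g : α → WithTop (Fin (Fintype.card α))) (x : α) : List (WithTop (Fin (Fintype.card α))) :=
  ((theSup ht m x).map g ++ List.replicate (Fintype.card α - (theSup ht m x).length) ⊤) ++ [g x]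

/-- The linear extension associated to `g`. -/
def theL (ht : (coverGraph α).IsTree) (m : α) (g : α → WithTop (Fin (Fintype.card α)))
    (x y : α) : Prop :=
  x = y ∨ List.Lex (· < ·) (thePadded ht m g x) (thePadded ht m g y)

variable (ht : (coverGraph α).IsTree) (m : α)

lemma thePadded_inj (g : α → WithTop (Fin (Fintype.card α))) (hgi : Function.Injective g)
    {x y : α} (h : thePadded ht m g x = thePadded ht m g y) : x = y := by
  have h1 := congrArg List.getLast? h
  rw [thePadded, thePadded, List.getLast?_concat, List.getLast?_concat] at h1
  exact hgi (Option.some_inj.mp h1)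

variable (hm : ∀ w : α, w ≤ m)
include hm

lemma thePadded_lex (g : α → WithTop (Fin (Fintype.card α))) (hgt : ∀ a : α, g a ≠ ⊤)
    {x y : α} (hxy : x ≤ y) (hne : x ≠ y) :
    List.Lex (· < ·) (thePadded ht m g x) (thePadded ht m g y) := by
  obtain ⟨t, hts⟩ := theSup_prefix ht m hm hxy
  cases t with
  | nil =>
    have h : theSup ht m y = theSup ht m x := by simpa using hts
    exact absurd (theSup_inj ht m hm h) (Ne.symm hne)
  | cons c t' =>
    have hlenx : (theSup ht m x).length ≤ Fintype.card α := (theSup_nodup ht m x).length_le_card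
    have hlen : (theSup ht m y).length + 1 ≤ Fintype.card α := by
      have hc := congrArg List.length hts
      simp only [List.length_append, List.length_cons] at hc
      omega
    have hx : thePadded ht m g x = (theSup ht m y).map g ++ (g c ::
        (t'.map g ++ List.replicate (Fintype.card α - (theSup ht m x).length) ⊤ ++ [g x])) := by
      rw [thePadded, ← hts]
      simp [List.map_append, List.append_assoc]
    have hrep : Fintype.card α - (theSup ht m y).length
        = (Fintype.card α - (theSup ht m y).length - 1) + 1 := by omega
    have hy2 : thePadded ht m g y = (theSup ht m y).map g ++
        ((⊤ : WithTop (Fin (Fintype.card α))) ::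
          (List.replicate (Fintype.card α - (theSup ht m y).length - 1) ⊤ ++ [g y])) := by
      rw [thePadded, hrep, List.replicate_succ]
      simp [List.append_assoc]
    rw [hx, hy2]
    exact auxLexAppend (lt_top_iff_ne_top.mpr (hgt c)) _ _ _

lemma theL_isLinExt (g : α → WithTop (Fin (Fintype.card α))) (hgi : Function.Injective g)
    (hgt : ∀ a : α, g a ≠ ⊤) : IsLinExt (theL ht m g) := by
  constructor
  · exact
      { refl := fun a => Or.inl rfl
        trans := by
          rintro a b c (rfl | h1) h2
          · exact h2
          · rcases h2 with rfl | h2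
            · exact Or.inr h1
            · exact Or.inr (auxLexTrans h1 h2)
        antisymm := by
          rintro a b (rfl | h1) h2
          · rfl
          · rcases h2 with rfl | h2
            · rfl
            · exact absurd h2 (auxLexAsymm h1)
        total := by
          intro a b
          rcases auxLexTri (thePadded ht m g a) (thePadded ht m g b) with h | h | h
          · exact Or.inl (Or.inr h)
          · exact Or.inl (Or.inl (thePadded_inj ht m g hgi h))
          · exact Or.inr (Or.inr h) }
  · intro a b hab
    by_cases hne : a = b
    · exact Or.inl hne
    · exact Or.inr (thePadded_lex ht m hm g hgt hab hne)

lemma theL_back {g1 g2 : α → WithTop (Fin (Fintype.card α))}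
    (hgi1 : Function.Injective g1) (hgi2 : Function.Injective g2)
    (hgt1 : ∀ a : α, g1 a ≠ ⊤)
    (hflip : ∀ a b : α, a ≠ b → (g1 a < g1 b ↔ g2 b < g2 a)) {x y : α}
    (h1 : theL ht m g1 x y) (h2 : theL ht m g2 x y) : x ≤ y := by
  rcases h1 with rfl | h1
  · exact le_refl x
  rcases h2 with rfl | h2
  · exact le_refl x
  have hne : x ≠ y := by
    rintro rfl
    exact auxLexAsymm h1 h1
  rcases auxListTri (theSup ht m x) (theSup ht m y) with hpre | hpre | ⟨p, a, b, s1, s2, hab, hx, hy⟩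
  · have hyx : y ≤ x := theSup_prefix_le ht m hm hpre
    exact absurd h1 (auxLexAsymm (thePadded_lex ht m hm g1 hgt1 hyx (Ne.symm hne)))
  · exact theSup_prefix_le ht m hm hpre
  · have e1 : ∀ g : α → WithTop (Fin (Fintype.card α)), thePadded ht m g x = p.map g ++ (g a ::
        (s1.map g ++ List.replicate (Fintype.card α - (theSup ht m x).length) ⊤ ++ [g x])) := by
      intro g
      rw [thePadded, hx]
      simp [List.map_append, List.append_assoc]
    have e2 : ∀ g : α → WithTop (Fin (Fintype.card α)), thePadded ht m g y = p.map g ++ (g b ::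
        (s2.map g ++ List.replicate (Fintype.card α - (theSup ht m y).length) ⊤ ++ [g y])) := by
      intro g
      rw [thePadded, hy]
      simp [List.map_append, List.append_assoc]
    rw [e1 g1, e2 g1] at h1
    rw [e1 g2, e2 g2] at h2
    have ha1 : g1 a < g1 b := auxLexAppend' (fun he => hab (hgi1 he)) h1
    have ha2 : g2 a < g2 b := auxLexAppend' (fun he => hab (hgi2 he)) h2
    exact absurd ha2 (asymm ((hflip a b hab).mp ha1))

end Orders

/-- a finite tree poset with a maximum element has dimension at
most `2`. -/
theorem tree_with_max_dim_le_two {α : Type*} [PartialOrder α] [Fintype α]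
    (ht : (coverGraph α).IsTree) (hmax : ∃ m : α, ∀ w : α, w ≤ m) :
    orderDim α ≤ 2 := by
  obtain ⟨m, hm⟩ := hmax
  set n := Fintype.card α with hn
  let e := Fintype.equivFin α
  let g1 : α → WithTop (Fin n) := fun a => (e a : WithTop (Fin n))
  let g2 : α → WithTop (Fin n) := fun a => ((e a).rev : WithTop (Fin n))
  have hgi1 : Function.Injective g1 := fun a b h => e.injective (WithTop.coe_injective h)
  have hgi2 : Function.Injective g2 := fun a b h =>
    e.injective (Fin.rev_injective (WithTop.coe_injective h))
  have hgt1 : ∀ a : α, g1 a ≠ ⊤ := fun a => WithTop.coe_ne_top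
  have hgt2 : ∀ a : α, g2 a ≠ ⊤ := fun a => WithTop.coe_ne_top
  have hflip : ∀ a b : α, a ≠ b → (g1 a < g1 b ↔ g2 b < g2 a) := by
    intro a b _
    show (e a : WithTop (Fin n)) < (e b : WithTop (Fin n)) ↔
      ((e b).rev : WithTop (Fin n)) < ((e a).rev : WithTop (Fin n))
    rw [WithTop.coe_lt_coe, WithTop.coe_lt_coe, Fin.rev_lt_rev]
  have h1 := theL_isLinExt ht m hm g1 hgi1 hgt1
  have h2 := theL_isLinExt ht m hm g2 hgi2 hgt2
  have hreal : IsRealizer (fun i : Fin 2 => if i = 0 then theL ht m g1 else theL ht m g2) := by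
    constructor
    · intro i
      fin_cases i
      · simpa using h1
      · simpa using h2
    · intro a b
      constructor
      · intro hab i
        fin_cases i
        · simpa using h1.2 a b hab
        · simpa using h2.2 a b hab
      · intro hall
        have k1 := hall 0
        have k2 := hall 1
        simp only [Fin.isValue, if_pos rfl] at k1
        have hne : (1 : Fin 2) ≠ 0 := by decide
        simp only [Fin.isValue, if_neg hne] at k2
        exact theL_back ht m hm hgi1 hgi2 hgt1 hflip k1 k2
  exact Nat.sInf_le ⟨_, hreal⟩
end

section
/- Let T be a finite tree poset and let a be a minimal element of T. Then there exist linear extensions U^- of U_a^-, U^+ of U_a^+, and U_1, U_2 of U_a such that the three linear orders U^- a U^+, a U_1, and a U_2 form a realizer of T. In particular, a finite tree poset with a distinguished minimal element a has a realizer of size 3 in which a occurs first in two of the three linear extensions. -/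
namespace TreeReal
open List
variable {α : Type*} {β : Type*}

lemma flatMap_sublist {B : α → List β} {l s : List α} (h : l <+ s) :
    l.flatMap B <+ s.flatMap B := by
  induction h with
  | slnil => simp
  | cons a h ih => exact ih.trans (by simpa using (List.sublist_append_right _ _))
  | cons_cons a h ih => simpa using ih.append_left (B a)

lemma block_sublist_flatMap {B : α → List β} {bs : List α} {b : α} (h : b ∈ bs) :
    B b <+ bs.flatMap B := by
  have : [b].flatMap B <+ bs.flatMap B := flatMap_sublist (List.singleton_sublist.2 h)
  simpa using this

lemma pair_sublist_append {l1 l2 : List β} {x y : β} (hx : x ∈ l1) (hy : y ∈ l2) :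
    [x, y] <+ l1 ++ l2 :=
  (List.singleton_sublist.2 hx).append (List.singleton_sublist.2 hy)

lemma pair_flatMap {B : α → List β} {bs : List α} {b b' : α} {x y : β}
    (h : [b, b'] <+ bs) (hx : x ∈ B b) (hy : y ∈ B b') : [x, y] <+ bs.flatMap B := by
  have h2 : [b, b'].flatMap B <+ bs.flatMap B := flatMap_sublist h
  refine Sublist.trans ?_ h2
  simpa using pair_sublist_append hx hy

lemma pair_cons₂ {t : List β} {a y : β} (hy : y ∈ t) : [a, y] <+ a :: t :=
  (List.singleton_sublist.2 hy).cons₂ a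

lemma mem_dichotomy {l : List β} {x y : β} (hx : x ∈ l) (hy : y ∈ l) :
    x = y ∨ [x, y] <+ l ∨ [y, x] <+ l := by
  induction l with
  | nil => simp at hx
  | cons a t ih =>
    rcases List.mem_cons.1 hx with rfl | hx'
    · rcases List.mem_cons.1 hy with rfl | hy'
      · exact Or.inl rfl
      · exact Or.inr <| Or.inl <| pair_cons₂ hy'
    · rcases List.mem_cons.1 hy with rfl | hy'
      · exact Or.inr <| Or.inr <| pair_cons₂ hx'
      · rcases ih hx' hy' with h | h | h
        · exact Or.inl h
        · exact Or.inr <| Or.inl <| h.cons a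
        · exact Or.inr <| Or.inr <| h.cons a

lemma pair_rev {l : List β} {x y : β} (h : [x, y] <+ l) : [y, x] <+ l.reverse := by
  simpa using h.reverse

lemma pair_ne {l : List β} {x y : β} (hl : l.Nodup) (h : [x, y] <+ l) : x ≠ y := by
  rintro rfl
  have := h.nodup hl
  simp at this

lemma idx_lt_of_pair [DecidableEq β] {l : List β} {x y : β} (hl : l.Nodup)
    (h : [x, y] <+ l) : l.idxOf x < l.idxOf y := by
  induction l with
  | nil => simp at h
  | cons a t ih =>
    have hxy : x ≠ y := pair_ne hl h
    have hnd := List.nodup_cons.1 hl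
    rcases List.sublist_cons_iff.1 h with h' | ⟨r, hr, hrs⟩
    · have hx : x ∈ t := h'.subset (by simp)
      have hy : y ∈ t := h'.subset (by simp)
      have hxa : x ≠ a := by rintro rfl; exact hnd.1 hx
      have hya : y ≠ a := by rintro rfl; exact hnd.1 hy
      rw [List.idxOf_cons_ne _ hxa.symm, List.idxOf_cons_ne _ hya.symm]
      exact Nat.succ_lt_succ (ih hnd.2 h')
    · obtain ⟨h1, h2⟩ := List.cons_eq_cons.1 hr
      subst h1
      rw [← h2] at hrs
      have hy : y ∈ t := hrs.subset (by simp)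
      have hya : y ≠ x := hxy.symm
      rw [List.idxOf_cons_self, List.idxOf_cons_ne _ hxy]
      exact Nat.succ_pos _

lemma pair_of_idx [DecidableEq β] {l : List β} {x y : β} (hx : x ∈ l) (hy : y ∈ l)
    (h : l.idxOf x < l.idxOf y) : [x, y] <+ l := by
  induction l with
  | nil => simp at hx
  | cons a t ih =>
    by_cases hxa : x = a
    · subst hxa
      have hya : y ≠ x := by
        rintro rfl; simp at h
      have hyt : y ∈ t := by
        rcases List.mem_cons.1 hy with rfl | hy' <;> [exact absurd rfl hya; exact hy']
      exact pair_cons₂ hyt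
    · have hya : y ≠ a := by
        rintro rfl
        rw [List.idxOf_cons_self] at h; omega
      have hxt : x ∈ t := by
        rcases List.mem_cons.1 hx with rfl | hx' <;> [exact absurd rfl hxa; exact hx']
      have hyt : y ∈ t := by
        rcases List.mem_cons.1 hy with rfl | hy' <;> [exact absurd rfl hya; exact hy']
      rw [List.idxOf_cons_ne _ (Ne.symm hxa), List.idxOf_cons_ne _ (Ne.symm hya)] at h
      exact ((ih hxt hyt (Nat.lt_of_succ_lt_succ h))).cons a

lemma nodup_flatMap' {B : α → List β} {bs : List α} (hbs : bs.Nodup)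
    (h1 : ∀ b ∈ bs, (B b).Nodup)
    (h2 : ∀ b ∈ bs, ∀ b' ∈ bs, b ≠ b' → ∀ x ∈ B b, x ∉ B b') :
    (bs.flatMap B).Nodup := by
  induction bs with
  | nil => simp
  | cons a t ih =>
    rw [List.flatMap_cons, List.nodup_append]
    have hnd := List.nodup_cons.1 hbs
    refine ⟨h1 a (by simp), ih hnd.2 (fun b hb => h1 b (by simp [hb]))
      (fun b hb b' hb' hne => h2 b (by simp [hb]) b' (by simp [hb']) hne), ?_⟩
    rintro x hx _ hx' rfl
    rcases List.mem_flatMap.1 hx' with ⟨b, hb, hxb⟩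
    have hab : a ≠ b := by rintro rfl; exact hnd.1 hb
    exact h2 a (by simp) b (by simp [hb]) hab x hx hxb


set_option linter.unusedSectionVars false
set_option linter.unusedVariables false
set_option linter.unnecessarySimpa false
section S2
open SimpleGraph Relation

variable {α : Type*} [PartialOrder α] [Fintype α] [DecidableEq α]

lemma chain_walk {x y : α} (hxy : x < y) :
    ∃ p : (coverGraph α).Walk x y, p.IsPath ∧ (∀ z ∈ p.support, x ≤ z ∧ z ≤ y) ∧
      x ⋖ p.getVert 1 ∧ p.getVert (p.length - 1) ⋖ y := by
  classical
  letI : LocallyFiniteOrder α := Fintype.toLocallyFiniteOrder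
  have h : Relation.TransGen (· ⋖ ·) x y := lt_iff_transGen_covBy.1 hxy
  clear hxy
  induction h using Relation.TransGen.head_induction_on with
  | single h =>
    rename_i a
    refine ⟨Walk.cons (show (coverGraph α).Adj _ _ from Or.inl h) .nil, ?_, ?_, ?_, ?_⟩
    · simp [Walk.cons_isPath_iff, h.ne]
    · intro z hz
      simp only [Walk.support_cons, Walk.support_nil, List.mem_cons,
        List.mem_singleton, List.not_mem_nil, or_false] at hz
      rcases hz with rfl | rfl
      · exact ⟨le_refl _, h.le⟩
      · exact ⟨h.le, le_refl _⟩
    · exact h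
    · exact h
  | head hxz hzy IH =>
    rename_i a c
    obtain ⟨p, hp, hsup, h1, h2⟩ := IH
    refine ⟨Walk.cons (show (coverGraph α).Adj _ _ from Or.inl hxz) p, ?_, ?_, ?_, ?_⟩
    · rw [Walk.cons_isPath_iff]
      refine ⟨hp, fun hmem => ?_⟩
      have := (hsup _ hmem).1
      exact absurd (lt_of_lt_of_le hxz.lt this) (lt_irrefl _)
    · intro z hz
      rw [Walk.support_cons, List.mem_cons] at hz
      rcases hz with rfl | hz
      · exact ⟨le_refl _, le_trans hxz.le (hsup _ p.start_mem_support).2⟩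
      · exact ⟨le_trans hxz.le (hsup _ hz).1, (hsup _ hz).2⟩
    · have hg : (Walk.cons (show (coverGraph α).Adj a c from Or.inl hxz) p).getVert 1 = p.getVert 0 :=
        Walk.getVert_cons_succ p _
      rw [hg, Walk.getVert_zero]
      exact hxz
    · rcases Nat.eq_zero_or_pos p.length with h0 | hpos
      · obtain rfl : c = y := Walk.eq_of_length_eq_zero h0
        have hidx : (Walk.cons (show (coverGraph α).Adj a c from Or.inl hxz) p).length - 1 = 0 := by
          simp [Walk.length_cons, h0]
        rw [hidx, Walk.getVert_zero]
        exact hxz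
      · have hidx : (Walk.cons (show (coverGraph α).Adj a c from Or.inl hxz) p).length - 1 = p.length := by
          simp [Walk.length_cons]
        rw [hidx, Walk.getVert_cons p _ hpos.ne']
        exact h2

variable (ht : (coverGraph α).IsTree)

noncomputable def thePath (u y : α) : (coverGraph α).Walk u y :=
  (ht.existsUnique_path u y).exists.choose

lemma thePath_isPath (u y : α) : (thePath ht u y).IsPath :=
  (ht.existsUnique_path u y).exists.choose_spec

lemma thePath_unique {u y : α} (p : (coverGraph α).Walk u y) (hp : p.IsPath) :
    p = thePath ht u y := by
  obtain ⟨q, _, hq⟩ := ht.existsUnique_path u y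
  rw [hq p hp, hq _ (thePath_isPath ht u y)]

noncomputable def rt (u y : α) : α := (thePath ht u y).getVert 1

lemma rt_eq {u y : α} (p : (coverGraph α).Walk u y) (hp : p.IsPath) :
    rt ht u y = p.getVert 1 := by
  rw [rt, ← thePath_unique ht p hp]

/-- Connectivity avoiding `u`. -/
def Conn (u x y : α) : Prop := ∃ w : (coverGraph α).Walk x y, u ∉ w.support

lemma conn_symm {u x y : α} (h : Conn u x y) : Conn u y x := by
  obtain ⟨w, hw⟩ := h
  exact ⟨w.reverse, by simpa [SimpleGraph.Walk.support_reverse] using hw⟩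

lemma conn_trans {u x y z : α} (h : Conn u x y) (h' : Conn u y z) : Conn u x z := by
  obtain ⟨w, hw⟩ := h; obtain ⟨w', hw'⟩ := h'
  refine ⟨w.append w', fun hm => ?_⟩
  rw [SimpleGraph.Walk.mem_support_append_iff] at hm
  exact hm.elim hw hw'

lemma conn_adj {u x y : α} (h : (coverGraph α).Adj x y) (hx : x ≠ u) (hy : y ≠ u) :
    Conn u x y := by
  refine ⟨Walk.cons h .nil, ?_⟩
  simp only [Walk.support_cons, Walk.support_nil, List.mem_cons, List.not_mem_nil, or_false,
    List.mem_singleton]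
  push_neg
  exact ⟨Ne.symm hx, Ne.symm hy⟩

lemma rt_spec {u y : α} (hy : y ≠ u) :
    (coverGraph α).Adj u (rt ht u y) ∧ Conn u (rt ht u y) y := by
  have hp := thePath_isPath ht u y
  have hnil : ¬ (thePath ht u y).Nil := by
    rw [SimpleGraph.Walk.nil_iff_length_eq]
    intro h0
    exact hy (Walk.eq_of_length_eq_zero h0).symm
  refine ⟨Walk.adj_snd hnil, ⟨(thePath ht u y).tail, ?_⟩⟩
  have hsupp := Walk.cons_support_tail hnil
  have hnd : (thePath ht u y).support.Nodup := hp.support_nodup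
  rw [← hsupp] at hnd
  exact (List.nodup_cons.1 hnd).1

lemma conn_rt_eq {u x y : α} (hx : x ≠ u) (hy : y ≠ u) (h : Conn u x y) :
    rt ht u y = rt ht u x := by
  obtain ⟨w, hw⟩ := h
  obtain ⟨hadj, q, hq⟩ := rt_spec ht hx
  have hcu : u ∉ (q.append w).bypass.support := by
    intro hm
    have := Walk.support_bypass_subset _ hm
    rw [SimpleGraph.Walk.mem_support_append_iff] at this
    exact this.elim hq hw
  have hpath : (Walk.cons hadj (q.append w).bypass).IsPath :=
    (Walk.cons_isPath_iff _ _).2 ⟨Walk.bypass_isPath _, hcu⟩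
  rw [rt_eq ht _ hpath]
  exact Walk.getVert_zero _

lemma rt_adj_self {u b : α} (h : (coverGraph α).Adj u b) : rt ht u b = b := by
  have hpath : (Walk.cons h .nil).IsPath := by simp [Walk.cons_isPath_iff, h.ne]
  rw [rt_eq ht _ hpath]
  rfl

lemma lt_u {u x : α} (h : x < u) : rt ht u x ⋖ u ∧ x ≤ rt ht u x := by
  obtain ⟨p, hp, hsup, _, h2⟩ := chain_walk h
  have heq : rt ht u x = p.getVert (p.length - 1) := by
    rw [rt_eq ht p.reverse hp.reverse, Walk.getVert_reverse]
  refine ⟨heq ▸ h2, heq ▸ ?_⟩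
  have : p.getVert (p.length - 1) ∈ p.support :=
    Walk.mem_support_iff_exists_getVert.2 ⟨p.length - 1, rfl, by omega⟩
  exact (hsup _ this).1

lemma u_lt {u x : α} (h : u < x) : u ⋖ rt ht u x ∧ rt ht u x ≤ x := by
  obtain ⟨p, hp, hsup, h1, _⟩ := chain_walk h
  have heq : rt ht u x = p.getVert 1 := rt_eq ht p hp
  refine ⟨heq ▸ h1, heq ▸ ?_⟩
  have : p.getVert 1 ∈ p.support := by
    rcases Nat.eq_zero_or_pos p.length with h0 | hpos
    · exact absurd (Walk.eq_of_length_eq_zero h0) h.ne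
    · exact Walk.mem_support_iff_exists_getVert.2 ⟨1, rfl, hpos⟩
  exact (hsup _ this).2

lemma cross_lt {u x y : α} (hx : x ≠ u) (hy : y ≠ u)
    (hr : rt ht u x ≠ rt ht u y) (h : x < y) : x < u ∧ u < y := by
  obtain ⟨p, hp, hsup, _, _⟩ := chain_walk h
  by_cases hu : u ∈ p.support
  · obtain ⟨h1, h2⟩ := hsup _ hu
    exact ⟨lt_of_le_of_ne h1 (Ne.symm (fun h => hx h.symm)), lt_of_le_of_ne h2 (Ne.symm hy)⟩
  · exact absurd (conn_rt_eq ht hx hy ⟨p, hu⟩).symm hr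

lemma between {u x y z : α} (hx : x ≠ u) (hy : y ≠ u) (hr : rt ht u x = rt ht u y)
    (hxz : x ≤ z) (hzy : z ≤ y) : z ≠ u ∧ rt ht u z = rt ht u x := by
  rcases eq_or_lt_of_le hxz with rfl | hlt
  · exact ⟨hx, rfl⟩
  · have key : ∀ w, x ≤ w → w ≤ y → w ≠ u := by
      intro w hw1 hw2 hwu
      subst hwu
      have h1 : x < w := lt_of_le_of_ne hw1 hx
      have h2 : w < y := lt_of_le_of_ne hw2 (Ne.symm hy)
      have c1 := (lt_u ht h1).1
      have c2 := (u_lt ht h2).1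
      rw [hr] at c1
      exact absurd c2.lt (asymm c1.lt)
    have hz : z ≠ u := key z hxz hzy
    obtain ⟨p, hp, hsup, _, _⟩ := chain_walk hlt
    have hu : u ∉ p.support := by
      intro hm
      exact key u (hsup _ hm).1 (le_trans (hsup _ hm).2 hzy) rfl
    exact ⟨hz, conn_rt_eq ht hx hz ⟨p, hu⟩⟩

end S2
section S3
open SimpleGraph

variable {α : Type*} [PartialOrder α] [Fintype α] [DecidableEq α]

/-- The fiber (component) of `b` in the tree minus `u`. -/
def Fib (ht : (coverGraph α).IsTree) (u b : α) : α → Prop :=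
  fun w => w ≠ u ∧ rt ht u w = b

variable (ht : (coverGraph α).IsTree) (u b : α)

lemma fib_between {x y z : α} (hx : Fib ht u b x) (hy : Fib ht u b y)
    (hxz : x ≤ z) (hzy : z ≤ y) : Fib ht u b z := by
  obtain ⟨h1, h2⟩ := between ht hx.1 hy.1 (hx.2.trans hy.2.symm) hxz hzy
  exact ⟨h1, h2.trans hx.2⟩

lemma covBy_iff (x y : {w : α // Fib ht u b w}) : x ⋖ y ↔ (x : α) ⋖ (y : α) := by
  constructor
  · intro h
    refine ⟨Subtype.coe_lt_coe.2 h.lt, fun z hz1 hz2 => ?_⟩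
    have hzf : Fib ht u b z := fib_between ht u b x.2 y.2 hz1.le hz2.le
    exact h.2 (show x < ⟨z, hzf⟩ from Subtype.coe_lt_coe.1 hz1)
      (show (⟨z, hzf⟩ : {w : α // Fib ht u b w}) < y from Subtype.coe_lt_coe.1 hz2)
  · intro h
    exact ⟨Subtype.coe_lt_coe.1 h.lt, fun z hz1 hz2 =>
      h.2 (Subtype.coe_lt_coe.2 hz1) (Subtype.coe_lt_coe.2 hz2)⟩

lemma cover_adj_iff (x y : {w : α // Fib ht u b w}) :
    (coverGraph {w : α // Fib ht u b w}).Adj x y ↔ (coverGraph α).Adj (x : α) (y : α) := by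
  show (x ⋖ y ∨ y ⋖ x) ↔ ((x : α) ⋖ (y : α) ∨ (y : α) ⋖ (x : α))
  rw [covBy_iff, covBy_iff]

lemma lift_walk : ∀ {v w : α} (p : (coverGraph α).Walk v w), u ∉ p.support →
    ∀ (hv : Fib ht u b v) (hw : Fib ht u b w),
    Nonempty ((coverGraph {w : α // Fib ht u b w}).Walk ⟨v, hv⟩ ⟨w, hw⟩) := by
  intro v w p
  induction p with
  | nil => exact fun _ _ _ => ⟨Walk.nil⟩
  | cons hadj q ih =>
    rename_i v₁ v₂ w₁
    intro hu hv hw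
    have hv₂u : v₂ ≠ u := by
      rintro rfl
      exact hu (by rw [Walk.support_cons]; exact List.mem_cons_of_mem _ q.start_mem_support)
    have hv₂f : Fib ht u b v₂ := by
      refine ⟨hv₂u, ?_⟩
      rw [conn_rt_eq ht hv.1 hv₂u (conn_adj hadj hv.1 hv₂u)]
      exact hv.2
    have hu' : u ∉ q.support := fun hm =>
      hu (by rw [Walk.support_cons]; exact List.mem_cons_of_mem _ hm)
    obtain ⟨q'⟩ := ih hu' hv₂f hw
    exact ⟨Walk.cons ((cover_adj_iff ht u b ⟨v₁, hv⟩ ⟨v₂, hv₂f⟩).2 hadj) q'⟩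

lemma comp_tree (hb : Fib ht u b b) : (coverGraph {w : α // Fib ht u b w}).IsTree := by
  constructor
  · haveI : Nonempty {w : α // Fib ht u b w} := ⟨⟨b, hb⟩⟩
    refine ⟨fun x y => ?_⟩
    have cx : Conn u b (x : α) := by
      have h := (rt_spec ht x.2.1).2
      rwa [x.2.2] at h
    have cy : Conn u b (y : α) := by
      have h := (rt_spec ht y.2.1).2
      rwa [y.2.2] at h
    obtain ⟨w, hw⟩ := conn_trans (conn_symm cx) cy
    obtain ⟨p⟩ := lift_walk ht u b w hw x.2 y.2
    exact ⟨by convert p <;> simp⟩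
  · rw [isAcyclic_iff_path_unique]
    intro v w p q
    let f : (coverGraph {w : α // Fib ht u b w}) →g (coverGraph α) :=
      ⟨Subtype.val, fun {a c} h => (cover_adj_iff ht u b a c).1 h⟩
    have hinj : Function.Injective f.toFun := Subtype.val_injective
    have hp := Walk.map_isPath_of_injective hinj p.2
    have hq := Walk.map_isPath_of_injective hinj q.2
    have heq := (thePath_unique ht _ hp).trans (thePath_unique ht _ hq).symm
    exact Subtype.ext (Walk.map_injective_of_injective hinj _ _ heq)

end S3
section S4
variable {α : Type*} [PartialOrder α] [DecidableEq α]

lemma pair_of_listLE {l : List α} {x y : α} (hl : l.Nodup) (hx : x ∈ l) (hy : y ∈ l)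
    (hxy : x ≠ y) (h : listLE l x y) : [x, y] <+ l := by
  refine pair_of_idx hx hy (lt_of_le_of_ne h ?_)
  intro heq
  exact hxy ((List.idxOf_inj hx).1 heq)

lemma pair_of_not_listLE {l : List α} {x y : α} (hx : x ∈ l) (hy : y ∈ l)
    (h : ¬ listLE l x y) : [y, x] <+ l := by
  refine pair_of_idx hy hx ?_
  unfold listLE at h
  omega

lemma isListRealizer_of (ls : List (List α))
    (hnd : ∀ l ∈ ls, l.Nodup) (hcom : ∀ l ∈ ls, ∀ a : α, a ∈ l)
    (hext : ∀ a b : α, a < b → ∀ l ∈ ls, [a, b] <+ l)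
    (hrlz : ∀ a b : α, ¬ a ≤ b → ∃ l ∈ ls, [b, a] <+ l) : IsListRealizer ls := by
  refine ⟨fun l hl => ⟨hnd l hl, hcom l hl⟩, ?_, ?_⟩
  · intro l hl a b hab
    rcases eq_or_lt_of_le hab with rfl | h
    · exact le_refl _
    · exact le_of_lt (idx_lt_of_pair (hnd l hl) (hext _ _ h l hl))
  · intro a b h
    by_contra hab
    obtain ⟨l, hl, hp⟩ := hrlz a b hab
    have h1 := idx_lt_of_pair (hnd l hl) hp
    have h2 := h l hl
    unfold listLE at h2
    omega

/-- A component package rooted at `b` with fiber `F`. -/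
structure Pkg (b : α) (F : α → Prop) (xa xp ya yp z : List α) : Prop where
  hxp : ∀ w, w ∈ xp ↔ F w ∧ b < w
  hya : ∀ w, w ∈ ya ↔ F w ∧ w < b
  memX : ∀ w, w ∈ xa ++ b :: xp ↔ F w
  memY : ∀ w, w ∈ ya ++ b :: yp ↔ F w
  memZ : ∀ w, w ∈ z ↔ F w
  ndX : (xa ++ b :: xp).Nodup
  ndY : (ya ++ b :: yp).Nodup
  ndZ : z.Nodup
  ext : ∀ x y, F x → F y → x < y →
    [x, y] <+ (xa ++ b :: xp) ∧ [x, y] <+ (ya ++ b :: yp) ∧ [x, y] <+ z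
  rlz : ∀ x y, F x → F y → ¬ x ≤ y → ¬ y ≤ x →
    [y, x] <+ (xa ++ b :: xp) ∨ [y, x] <+ (ya ++ b :: yp) ∨ [y, x] <+ z

/-- The inductive invariant. -/
def TInv (α : Type*) [PartialOrder α] [DecidableEq α] (u : α) : Prop :=
  ∃ xa xp ya yp za zp : List α,
    (∀ w, w ∈ xp ↔ u < w) ∧ (∀ w, w ∈ ya ↔ w < u) ∧ (za = [] ∨ ∃ c, c < u) ∧
    IsListRealizer [xa ++ u :: xp, ya ++ u :: yp, za ++ u :: zp]

lemma pkg_of_inv {F : α → Prop} {b : α} (hFb : F b)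
    (h : TInv {w : α // F w} ⟨b, hFb⟩) :
    ∃ xa xp ya yp z : List α, Pkg b F xa xp ya yp z := by
  classical
  obtain ⟨xa, xp, ya, yp, za, zp, hxp, hya, _, h1, h2, h3⟩ := h
  have hXl : xa ++ ⟨b, hFb⟩ :: xp ∈ [xa ++ ⟨b, hFb⟩ :: xp, ya ++ ⟨b, hFb⟩ :: yp,
      za ++ ⟨b, hFb⟩ :: zp] := by simp
  have hYl : ya ++ ⟨b, hFb⟩ :: yp ∈ [xa ++ ⟨b, hFb⟩ :: xp, ya ++ ⟨b, hFb⟩ :: yp,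
      za ++ ⟨b, hFb⟩ :: zp] := by simp
  have hZl : za ++ ⟨b, hFb⟩ :: zp ∈ [xa ++ ⟨b, hFb⟩ :: xp, ya ++ ⟨b, hFb⟩ :: yp,
      za ++ ⟨b, hFb⟩ :: zp] := by simp
  obtain ⟨hndX, hcomX⟩ := h1 _ hXl
  obtain ⟨hndY, hcomY⟩ := h1 _ hYl
  obtain ⟨hndZ, hcomZ⟩ := h1 _ hZl
  have vinj : Function.Injective (Subtype.val : {w : α // F w} → α) := Subtype.val_injective
  have memmap : ∀ (l : List {w : α // F w}) (w : α),
      w ∈ l.map Subtype.val ↔ ∃ hw : F w, (⟨w, hw⟩ : {w : α // F w}) ∈ l := by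
    intro l w
    rw [List.mem_map]
    constructor
    · rintro ⟨t, htm, rfl⟩; exact ⟨t.2, by simpa using htm⟩
    · rintro ⟨hw, htm⟩; exact ⟨⟨w, hw⟩, htm, rfl⟩
  have mapX : xa.map Subtype.val ++ b :: xp.map Subtype.val
      = (xa ++ (⟨b, hFb⟩ : {w : α // F w}) :: xp).map Subtype.val := by simp
  have mapY : ya.map Subtype.val ++ b :: yp.map Subtype.val
      = (ya ++ (⟨b, hFb⟩ : {w : α // F w}) :: yp).map Subtype.val := by simp
  refine ⟨xa.map Subtype.val, xp.map Subtype.val, ya.map Subtype.val, yp.map Subtype.val,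
    (za ++ ⟨b, hFb⟩ :: zp).map Subtype.val, ?_⟩
  constructor
  · intro w
    rw [memmap]
    constructor
    · rintro ⟨hw, htm⟩
      exact ⟨hw, by simpa [Subtype.mk_lt_mk] using (hxp _).1 htm⟩
    · rintro ⟨hw, hlt⟩
      exact ⟨hw, (hxp _).2 (by simpa [Subtype.mk_lt_mk] using hlt)⟩
  · intro w
    rw [memmap]
    constructor
    · rintro ⟨hw, htm⟩
      exact ⟨hw, by simpa [Subtype.mk_lt_mk] using (hya _).1 htm⟩
    · rintro ⟨hw, hlt⟩
      exact ⟨hw, (hya _).2 (by simpa [Subtype.mk_lt_mk] using hlt)⟩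
  · intro w
    rw [mapX, memmap]
    exact ⟨fun ⟨hw, _⟩ => hw, fun hw => ⟨hw, hcomX _⟩⟩
  · intro w
    rw [mapY, memmap]
    exact ⟨fun ⟨hw, _⟩ => hw, fun hw => ⟨hw, hcomY _⟩⟩
  · intro w
    rw [memmap]
    exact ⟨fun ⟨hw, _⟩ => hw, fun hw => ⟨hw, hcomZ _⟩⟩
  · rw [mapX]; exact hndX.map vinj
  · rw [mapY]; exact hndY.map vinj
  · exact hndZ.map vinj
  · intro x y hFx hFy hlt
    have hlt' : (⟨x, hFx⟩ : {w : α // F w}) < ⟨y, hFy⟩ := Subtype.mk_lt_mk.2 hlt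
    have hne : (⟨x, hFx⟩ : {w : α // F w}) ≠ ⟨y, hFy⟩ := ne_of_lt hlt'
    refine ⟨?_, ?_, ?_⟩
    · rw [mapX]
      simpa using (pair_of_listLE hndX (hcomX _) (hcomX _) hne (h2 _ hXl _ _ hlt'.le)).map Subtype.val
    · rw [mapY]
      simpa using (pair_of_listLE hndY (hcomY _) (hcomY _) hne (h2 _ hYl _ _ hlt'.le)).map Subtype.val
    · simpa using (pair_of_listLE hndZ (hcomZ _) (hcomZ _) hne (h2 _ hZl _ _ hlt'.le)).map Subtype.val
  · intro x y hFx hFy hnle _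
    have hnle' : ¬ (⟨x, hFx⟩ : {w : α // F w}) ≤ ⟨y, hFy⟩ := fun hc => hnle (Subtype.mk_le_mk.1 hc)
    have hex : ¬ ∀ l ∈ [xa ++ ⟨b, hFb⟩ :: xp, ya ++ ⟨b, hFb⟩ :: yp, za ++ ⟨b, hFb⟩ :: zp],
        listLE l ⟨x, hFx⟩ ⟨y, hFy⟩ := fun hc => hnle' (h3 _ _ hc)
    push_neg at hex
    obtain ⟨l, hl, hnl⟩ := hex
    have hmX : ∀ w : {w : α // F w}, w ∈ xa ++ (⟨b, hFb⟩ : {w : α // F w}) :: xp := hcomX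
    rcases List.mem_cons.1 hl with rfl | hl'
    · exact Or.inl (by rw [mapX]; simpa using (pair_of_not_listLE (hcomX _) (hcomX _) hnl).map Subtype.val)
    rcases List.mem_cons.1 hl' with rfl | hl''
    · exact Or.inr (Or.inl (by rw [mapY]; simpa using
        (pair_of_not_listLE (hcomY _) (hcomY _) hnl).map Subtype.val))
    rcases List.mem_cons.1 hl'' with rfl | hl'''
    · exact Or.inr (Or.inr (by simpa using (pair_of_not_listLE (hcomZ _) (hcomZ _) hnl).map Subtype.val))
    · simp at hl'''
end S4
section S5
variable {α : Type*} [PartialOrder α] [Fintype α] [DecidableEq α]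

lemma assemble (u : α) (ubs lbs : List α) (S : α → α → Prop)
    (xaF xpF yaF ypF zF : α → List α)
    (hubs : ∀ b ∈ ubs, u ⋖ b) (hlbs : ∀ c ∈ lbs, c ⋖ u)
    (ndu : ubs.Nodup) (ndl : lbs.Nodup)
    (hpkg : ∀ b, b ∈ ubs ∨ b ∈ lbs → Pkg b (S b) (xaF b) (xpF b) (yaF b) (ypF b) (zF b))
    (hSb : ∀ b, b ∈ ubs ∨ b ∈ lbs → S b b)
    (hSnu : ∀ b w, S b w → w ≠ u)
    (hSdisj : ∀ b b' w, S b w → S b' w → b = b')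
    (hfib : ∀ w, w ≠ u → ∃ b, (b ∈ ubs ∨ b ∈ lbs) ∧ S b w)
    (cmpU : ∀ b ∈ ubs, ∀ w, S b w → (u < w ↔ b ≤ w))
    (cmpU2 : ∀ b ∈ ubs, ∀ w, S b w → ¬ w < u)
    (cmpL : ∀ c ∈ lbs, ∀ w, S c w → (w < u ↔ w ≤ c))
    (cmpL2 : ∀ c ∈ lbs, ∀ w, S c w → ¬ u < w)
    (cross : ∀ b b' w w', S b w → S b' w' → b ≠ b' → w < w' → w < u ∧ u < w') :
    TInv α u := by
  classical
  set XbF : α → List α := fun b => xaF b ++ b :: xpF b with hXbF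
  set YbF : α → List α := fun b => yaF b ++ b :: ypF b with hYbF
  set upX : α → List α := fun b => b :: xpF b with hupX
  set yaC : α → List α := fun c => yaF c ++ [c] with hyaC
  set XA : List α := ubs.reverse.flatMap xaF ++ lbs.flatMap XbF with hXA
  set XP : List α := ubs.flatMap upX with hXP
  set YA : List α := lbs.flatMap yaC with hYA
  set YPU : List α := ubs.flatMap YbF with hYPU
  set YPL : List α := lbs.flatMap ypF with hYPL
  set YP : List α := YPU ++ YPL with hYP
  set ZA : List α := lbs.reverse.flatMap zF with hZA
  set ZP : List α := ubs.reverse.flatMap zF with hZP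
  set X : List α := XA ++ u :: XP with hX
  set Y : List α := YA ++ u :: YP with hY
  set Z : List α := ZA ++ u :: ZP with hZ
  have uldisj : ∀ b ∈ ubs, ∀ c ∈ lbs, b ≠ c := by
    rintro b hb c hc rfl
    exact absurd (hlbs _ hc).lt (asymm (hubs _ hb).lt)
  -- membership characterizations within blocks
  have memupX : ∀ b ∈ ubs, ∀ w, w ∈ upX b ↔ S b w ∧ u < w := by
    intro b hb w
    constructor
    · intro hw
      rcases List.mem_cons.1 hw with rfl | hw'
      · exact ⟨hSb _ (Or.inl hb), (hubs _ hb).lt⟩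
      · obtain ⟨hs, hlt⟩ := ((hpkg b (Or.inl hb)).hxp w).1 hw'
        exact ⟨hs, (cmpU b hb w hs).2 hlt.le⟩
    · rintro ⟨hs, hlt⟩
      have hble : b ≤ w := (cmpU b hb w hs).1 hlt
      rcases eq_or_lt_of_le hble with rfl | h
      · exact List.mem_cons_self
      · exact List.mem_cons_of_mem _ (((hpkg b (Or.inl hb)).hxp w).2 ⟨hs, h⟩)
  have memxa : ∀ b ∈ ubs, ∀ w, w ∈ xaF b ↔ S b w ∧ ¬ u < w := by
    intro b hb w
    have hnd := (List.disjoint_of_nodup_append (hpkg b (Or.inl hb)).ndX)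
    constructor
    · intro hw
      refine ⟨((hpkg b (Or.inl hb)).memX w).1 (List.mem_append.2 (Or.inl hw)), fun hlt => ?_⟩
      exact hnd hw ((memupX b hb w).2 ⟨((hpkg b (Or.inl hb)).memX w).1
        (List.mem_append.2 (Or.inl hw)), hlt⟩)
    · rintro ⟨hs, hnlt⟩
      rcases List.mem_append.1 (((hpkg b (Or.inl hb)).memX w).2 hs) with hw | hw
      · exact hw
      · exact absurd ((memupX b hb w).1 hw).2 hnlt
  have memyaC : ∀ c ∈ lbs, ∀ w, w ∈ yaC c ↔ S c w ∧ w < u := by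
    intro c hc w
    constructor
    · intro hw
      rcases List.mem_append.1 hw with hw' | hw'
      · obtain ⟨hs, hlt⟩ := ((hpkg c (Or.inr hc)).hya w).1 hw'
        exact ⟨hs, (cmpL c hc w hs).2 hlt.le⟩
      · rcases List.mem_singleton.1 hw' with rfl
        exact ⟨hSb _ (Or.inr hc), (hlbs _ hc).lt⟩
    · rintro ⟨hs, hlt⟩
      have hle : w ≤ c := (cmpL c hc w hs).1 hlt
      rcases eq_or_lt_of_le hle with rfl | h
      · exact List.mem_append.2 (Or.inr (List.mem_singleton.2 rfl))
      · exact List.mem_append.2 (Or.inl (((hpkg c (Or.inr hc)).hya w).2 ⟨hs, h⟩))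
  have memyp : ∀ c ∈ lbs, ∀ w, w ∈ ypF c ↔ S c w ∧ ¬ w < u := by
    intro c hc w
    have hndY := (hpkg c (Or.inr hc)).ndY
    have hEq : yaF c ++ c :: ypF c = (yaF c ++ [c]) ++ ypF c := by simp
    rw [hEq] at hndY
    have hnd := (List.disjoint_of_nodup_append hndY)
    constructor
    · intro hw
      have hs : S c w := ((hpkg c (Or.inr hc)).memY w).1 (by
        rw [hEq]; exact List.mem_append.2 (Or.inr hw))
      exact ⟨hs, fun hlt => hnd ((memyaC c hc w).2 ⟨hs, hlt⟩) hw⟩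
    · rintro ⟨hs, hnlt⟩
      have := ((hpkg c (Or.inr hc)).memY w).2 hs
      rw [hEq] at this
      rcases List.mem_append.1 this with hw | hw
      · exact absurd ((memyaC c hc w).1 hw).2 hnlt
      · exact hw
  -- region memberships
  have memXP : ∀ w, w ∈ XP ↔ u < w := by
    intro w
    rw [hXP, List.mem_flatMap]
    constructor
    · rintro ⟨b, hb, hw⟩
      exact ((memupX b hb w).1 hw).2
    · intro hlt
      obtain ⟨b, hbm, hs⟩ := hfib w (fun h => absurd (h ▸ hlt) (lt_irrefl u))
      rcases hbm with hb | hb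
      · exact ⟨b, hb, (memupX b hb w).2 ⟨hs, hlt⟩⟩
      · exact absurd hlt (cmpL2 b hb w hs)
  have memYA : ∀ w, w ∈ YA ↔ w < u := by
    intro w
    rw [hYA, List.mem_flatMap]
    constructor
    · rintro ⟨c, hc, hw⟩
      exact ((memyaC c hc w).1 hw).2
    · intro hlt
      obtain ⟨b, hbm, hs⟩ := hfib w (fun h => absurd (h ▸ hlt) (lt_irrefl u))
      rcases hbm with hb | hb
      · exact absurd hlt (cmpU2 b hb w hs)
      · exact ⟨b, hb, (memyaC b hb w).2 ⟨hs, hlt⟩⟩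
  have memXA : ∀ w, w ∈ XA ↔ ((∃ b ∈ ubs, S b w) ∧ ¬ u < w) ∨ (∃ c ∈ lbs, S c w) := by
    intro w
    rw [hXA, List.mem_append, List.mem_flatMap, List.mem_flatMap]
    constructor
    · rintro (⟨b, hb, hw⟩ | ⟨c, hc, hw⟩)
      · rw [List.mem_reverse] at hb
        obtain ⟨hs, hn⟩ := (memxa b hb w).1 hw
        exact Or.inl ⟨⟨b, hb, hs⟩, hn⟩
      · exact Or.inr ⟨c, hc, ((hpkg c (Or.inr hc)).memX w).1 hw⟩
    · rintro (⟨⟨b, hb, hs⟩, hn⟩ | ⟨c, hc, hs⟩)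
      · exact Or.inl ⟨b, List.mem_reverse.2 hb, (memxa b hb w).2 ⟨hs, hn⟩⟩
      · exact Or.inr ⟨c, hc, ((hpkg c (Or.inr hc)).memX w).2 hs⟩
  have memYP : ∀ w, w ∈ YP ↔ (∃ b ∈ ubs, S b w) ∨ (∃ c ∈ lbs, S c w ∧ ¬ w < u) := by
    intro w
    rw [hYP, List.mem_append, hYPU, hYPL, List.mem_flatMap, List.mem_flatMap]
    constructor
    · rintro (⟨b, hb, hw⟩ | ⟨c, hc, hw⟩)
      · exact Or.inl ⟨b, hb, ((hpkg b (Or.inl hb)).memY w).1 hw⟩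
      · obtain ⟨hs, hn⟩ := (memyp c hc w).1 hw
        exact Or.inr ⟨c, hc, hs, hn⟩
    · rintro (⟨b, hb, hs⟩ | ⟨c, hc, hs, hn⟩)
      · exact Or.inl ⟨b, hb, ((hpkg b (Or.inl hb)).memY w).2 hs⟩
      · exact Or.inr ⟨c, hc, (memyp c hc w).2 ⟨hs, hn⟩⟩
  have memZA : ∀ w, w ∈ ZA ↔ ∃ c ∈ lbs, S c w := by
    intro w
    rw [hZA, List.mem_flatMap]
    constructor
    · rintro ⟨c, hc, hw⟩
      rw [List.mem_reverse] at hc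
      exact ⟨c, hc, ((hpkg c (Or.inr hc)).memZ w).1 hw⟩
    · rintro ⟨c, hc, hs⟩
      exact ⟨c, List.mem_reverse.2 hc, ((hpkg c (Or.inr hc)).memZ w).2 hs⟩
  have memZP : ∀ w, w ∈ ZP ↔ ∃ b ∈ ubs, S b w := by
    intro w
    rw [hZP, List.mem_flatMap]
    constructor
    · rintro ⟨b, hb, hw⟩
      rw [List.mem_reverse] at hb
      exact ⟨b, hb, ((hpkg b (Or.inl hb)).memZ w).1 hw⟩
    · rintro ⟨b, hb, hs⟩
      exact ⟨b, List.mem_reverse.2 hb, ((hpkg b (Or.inl hb)).memZ w).2 hs⟩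
  -- nodup of flatMaps
  have ndFM : ∀ (bs : List α) (L : α → List α), bs.Nodup →
      (∀ b ∈ bs, (L b).Nodup) → (∀ b ∈ bs, ∀ w ∈ L b, S b w) → (bs.flatMap L).Nodup := by
    intro bs L h1 h3 h4
    exact nodup_flatMap' h1 h3
      (fun b hb b' hb' hne x hx hx' => hne (hSdisj b b' x (h4 _ hb _ hx) (h4 _ hb' _ hx')))
  have ndxa : ∀ b ∈ ubs, (xaF b).Nodup := fun b hb =>
    ((List.sublist_append_left _ _).nodup (hpkg b (Or.inl hb)).ndX)
  have ndupX : ∀ b ∈ ubs, (upX b).Nodup := fun b hb =>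
    ((List.sublist_append_right _ _).nodup (hpkg b (Or.inl hb)).ndX)
  have ndyaC : ∀ c ∈ lbs, (yaC c).Nodup := by
    intro c hc
    have h := (hpkg c (Or.inr hc)).ndY
    have hEq : yaF c ++ c :: ypF c = (yaF c ++ [c]) ++ ypF c := by simp
    rw [hEq] at h
    exact (List.sublist_append_left _ _).nodup h
  have ndyp : ∀ c ∈ lbs, (ypF c).Nodup := by
    intro c hc
    have h := (hpkg c (Or.inr hc)).ndY
    have hEq : yaF c ++ c :: ypF c = (yaF c ++ [c]) ++ ypF c := by simp
    rw [hEq] at h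
    exact (List.sublist_append_right _ _).nodup h
  have subxa : ∀ b ∈ ubs, ∀ w ∈ xaF b, S b w := fun b hb w hw => ((memxa b hb w).1 hw).1
  have subupX : ∀ b ∈ ubs, ∀ w ∈ upX b, S b w := fun b hb w hw => ((memupX b hb w).1 hw).1
  have subyaC : ∀ c ∈ lbs, ∀ w ∈ yaC c, S c w := fun c hc w hw => ((memyaC c hc w).1 hw).1
  have subyp : ∀ c ∈ lbs, ∀ w ∈ ypF c, S c w := fun c hc w hw => ((memyp c hc w).1 hw).1
  have subXb : ∀ c, (c ∈ ubs ∨ c ∈ lbs) → ∀ w ∈ XbF c, S c w := fun c hc w hw =>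
    ((hpkg c hc).memX w).1 hw
  have subYb : ∀ c, (c ∈ ubs ∨ c ∈ lbs) → ∀ w ∈ YbF c, S c w := fun c hc w hw =>
    ((hpkg c hc).memY w).1 hw
  have subzF : ∀ c, (c ∈ ubs ∨ c ∈ lbs) → ∀ w ∈ zF c, S c w := fun c hc w hw =>
    ((hpkg c hc).memZ w).1 hw
  have hSul : ∀ w, (∃ b ∈ ubs, S b w) → (∃ c ∈ lbs, S c w) → False := by
    rintro w ⟨b, hb, hs⟩ ⟨c, hc, hs'⟩
    exact uldisj b hb c hc (hSdisj b c w hs hs')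
  have ndXA : XA.Nodup := by
    rw [hXA, List.nodup_append]
    refine ⟨ndFM _ _ (List.nodup_reverse.2 ndu) (fun b hb => ndxa b (List.mem_reverse.1 hb))
        (fun b hb => subxa b (List.mem_reverse.1 hb)), ?_, ?_⟩
    · exact ndFM _ _ ndl (fun c hc => (hpkg c (Or.inr hc)).ndX) (fun c hc => subXb c (Or.inr hc))
    · rintro w hw _ hw' rfl
      obtain ⟨b, hb, hwb⟩ := List.mem_flatMap.1 hw
      obtain ⟨c, hc, hwc⟩ := List.mem_flatMap.1 hw'
      rw [List.mem_reverse] at hb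
      exact hSul w ⟨b, hb, subxa b hb w hwb⟩ ⟨c, hc, subXb c (Or.inr hc) w hwc⟩
  have ndX : X.Nodup := by
    rw [hX, List.nodup_append, List.nodup_cons]
    refine ⟨ndXA, ⟨fun hu => ?_, ndFM _ _ ndu ndupX subupX⟩, ?_⟩
    · obtain ⟨b, hb, hwb⟩ := List.mem_flatMap.1 hu
      exact hSnu b u (subupX b hb u hwb) rfl
    · rintro w hw _ hw' rfl
      rcases List.mem_cons.1 hw' with rfl | hw''
      · rcases (memXA w).1 hw with ⟨⟨b, hb, hs⟩, _⟩ | ⟨c, hc, hs⟩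
        · exact hSnu b w hs rfl
        · exact hSnu c w hs rfl
      · have hlt := (memXP w).1 hw''
        rcases (memXA w).1 hw with ⟨_, hn⟩ | ⟨c, hc, hs⟩
        · exact hn hlt
        · exact cmpL2 c hc w hs hlt
  have ndY : Y.Nodup := by
    rw [hY, List.nodup_append, List.nodup_cons]
    refine ⟨ndFM _ _ ndl ndyaC subyaC, ⟨fun hu => ?_, ?_⟩, ?_⟩
    · rcases (memYP u).1 hu with ⟨b, hb, hs⟩ | ⟨c, hc, hs, _⟩
      · exact hSnu b u hs rfl
      · exact hSnu c _ hs rfl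
    · rw [hYP, List.nodup_append]
      refine ⟨ndFM _ _ ndu (fun b hb => (hpkg b (Or.inl hb)).ndY)
        (fun b hb => subYb b (Or.inl hb)), ndFM _ _ ndl ndyp subyp, ?_⟩
      rintro w hw _ hw' rfl
      obtain ⟨b, hb, hwb⟩ := List.mem_flatMap.1 hw
      obtain ⟨c, hc, hwc⟩ := List.mem_flatMap.1 hw'
      exact hSul w ⟨b, hb, subYb b (Or.inl hb) w hwb⟩ ⟨c, hc, subyp c hc w hwc⟩
    · rintro w hw _ hw' rfl
      have hlt := (memYA w).1 hw
      rcases List.mem_cons.1 hw' with rfl | hw''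
      · exact absurd hlt (lt_irrefl _)
      · rcases (memYP w).1 hw'' with ⟨b, hb, hs⟩ | ⟨c, hc, hs, hn⟩
        · exact cmpU2 b hb w hs hlt
        · exact hn hlt
  have ndZ : Z.Nodup := by
    rw [hZ, List.nodup_append, List.nodup_cons]
    refine ⟨ndFM _ _ (List.nodup_reverse.2 ndl) (fun c hc => (hpkg c (Or.inr (List.mem_reverse.1 hc))).ndZ)
        (fun c hc => subzF c (Or.inr (List.mem_reverse.1 hc))),
      ⟨fun hu => ?_, ndFM _ _ (List.nodup_reverse.2 ndu)
        (fun b hb => (hpkg b (Or.inl (List.mem_reverse.1 hb))).ndZ)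
        (fun b hb => subzF b (Or.inl (List.mem_reverse.1 hb)))⟩, ?_⟩
    · obtain ⟨b, hb, hwb⟩ := List.mem_flatMap.1 hu
      exact hSnu b u (subzF b (Or.inl (List.mem_reverse.1 hb)) u hwb) rfl
    · rintro w hw _ hw' rfl
      have h1 := (memZA w).1 hw
      rcases List.mem_cons.1 hw' with rfl | hw''
      · obtain ⟨c, hc, hs⟩ := h1
        exact hSnu c _ hs rfl
      · exact hSul w ((memZP w).1 hw'') h1
  -- fullness
  have fullX : ∀ w : α, w ∈ X := by
    intro w
    rw [hX, List.mem_append, List.mem_cons]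
    by_cases hw : w = u
    · exact Or.inr (Or.inl hw)
    obtain ⟨b, hbm, hs⟩ := hfib w hw
    rcases hbm with hb | hb
    · by_cases hlt : u < w
      · exact Or.inr (Or.inr ((memXP w).2 hlt))
      · exact Or.inl ((memXA w).2 (Or.inl ⟨⟨b, hb, hs⟩, hlt⟩))
    · exact Or.inl ((memXA w).2 (Or.inr ⟨b, hb, hs⟩))
  have fullY : ∀ w : α, w ∈ Y := by
    intro w
    rw [hY, List.mem_append, List.mem_cons]
    by_cases hw : w = u
    · exact Or.inr (Or.inl hw)
    obtain ⟨b, hbm, hs⟩ := hfib w hw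
    rcases hbm with hb | hb
    · exact Or.inr (Or.inr ((memYP w).2 (Or.inl ⟨b, hb, hs⟩)))
    · by_cases hlt : w < u
      · exact Or.inl ((memYA w).2 hlt)
      · exact Or.inr (Or.inr ((memYP w).2 (Or.inr ⟨b, hb, hs, hlt⟩)))
  have fullZ : ∀ w : α, w ∈ Z := by
    intro w
    rw [hZ, List.mem_append, List.mem_cons]
    by_cases hw : w = u
    · exact Or.inr (Or.inl hw)
    obtain ⟨b, hbm, hs⟩ := hfib w hw
    rcases hbm with hb | hb
    · exact Or.inr (Or.inr ((memZP w).2 ⟨b, hb, hs⟩))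
    · exact Or.inl ((memZA w).2 ⟨b, hb, hs⟩)
  -- region embeddings
  have embXAX : XA <+ X := by rw [hX]; exact List.sublist_append_left _ _
  have embuXP : u :: XP <+ X := by rw [hX]; exact List.sublist_append_right _ _
  have embuYP : u :: YP <+ Y := by rw [hY]; exact List.sublist_append_right _ _
  have embYAY : YA <+ Y := by rw [hY]; exact List.sublist_append_left _ _
  have embZAZ : ZA <+ Z := by rw [hZ]; exact List.sublist_append_left _ _
  have embuZP : u :: ZP <+ Z := by rw [hZ]; exact List.sublist_append_right _ _
  have embXPX : XP <+ X := ((Sublist.refl XP).cons u).trans embuXP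
  have embYPY : YP <+ Y := ((Sublist.refl YP).cons u).trans embuYP
  have embZPZ : ZP <+ Z := ((Sublist.refl ZP).cons u).trans embuZP
  have embYPUY : YPU <+ Y := (List.sublist_append_left _ _).trans embYPY
  have embYPLY : YPL <+ Y := (List.sublist_append_right _ _).trans embYPY
  -- pair producers across regions
  have pairXmid : ∀ w ∈ XA, [w, u] <+ X := fun w hw => by
    rw [hX]; exact pair_sublist_append hw (by simp)
  have pairXcross : ∀ w ∈ XA, ∀ w' ∈ XP, [w, w'] <+ X := fun w hw w' hw' => by
    rw [hX]; exact pair_sublist_append hw (by simp [hw'])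
  have pairXmid2 : ∀ w' ∈ XP, [u, w'] <+ X := fun w' hw' => (pair_cons₂ hw').trans embuXP
  have pairYmid : ∀ w ∈ YA, [w, u] <+ Y := fun w hw => by
    rw [hY]; exact pair_sublist_append hw (by simp)
  have pairYcross : ∀ w ∈ YA, ∀ w' ∈ YP, [w, w'] <+ Y := fun w hw w' hw' => by
    rw [hY]; exact pair_sublist_append hw (by simp [hw'])
  have pairYmid2 : ∀ w' ∈ YP, [u, w'] <+ Y := fun w' hw' => (pair_cons₂ hw').trans embuYP
  have pairZmid : ∀ w ∈ ZA, [w, u] <+ Z := fun w hw => by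
    rw [hZ]; exact pair_sublist_append hw (by simp)
  have pairZcross : ∀ w ∈ ZA, ∀ w' ∈ ZP, [w, w'] <+ Z := fun w hw w' hw' => by
    rw [hZ]; exact pair_sublist_append hw (by simp [hw'])
  have pairZmid2 : ∀ w' ∈ ZP, [u, w'] <+ Z := fun w' hw' => (pair_cons₂ hw').trans embuZP
  -- direct region membership producers
  have mXA_u : ∀ b ∈ ubs, ∀ w ∈ xaF b, w ∈ XA := fun b hb w hw => by
    rw [hXA]
    exact List.mem_append.2 (Or.inl (List.mem_flatMap.2 ⟨b, List.mem_reverse.2 hb, hw⟩))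
  have mXA_l : ∀ c ∈ lbs, ∀ w ∈ XbF c, w ∈ XA := fun c hc w hw => by
    rw [hXA]
    exact List.mem_append.2 (Or.inr (List.mem_flatMap.2 ⟨c, hc, hw⟩))
  have mYA_l : ∀ c ∈ lbs, ∀ w ∈ yaC c, w ∈ YA := fun c hc w hw => by
    rw [hYA]; exact List.mem_flatMap.2 ⟨c, hc, hw⟩
  have mZA_l : ∀ c ∈ lbs, ∀ w ∈ zF c, w ∈ ZA := fun c hc w hw => by
    rw [hZA]; exact List.mem_flatMap.2 ⟨c, List.mem_reverse.2 hc, hw⟩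
  have mZP_u : ∀ b ∈ ubs, ∀ w ∈ zF b, w ∈ ZP := fun b hb w hw => by
    rw [hZP]; exact List.mem_flatMap.2 ⟨b, List.mem_reverse.2 hb, hw⟩
  -- whole-block embeddings
  have embXb : ∀ b, (b ∈ ubs ∨ b ∈ lbs) → XbF b <+ X := by
    intro b hbm
    rcases hbm with hb | hb
    · have h1 : xaF b <+ XA := by
        rw [hXA]
        exact (block_sublist_flatMap (List.mem_reverse.2 hb)).trans
          (List.sublist_append_left _ _)
      have h2 : b :: xpF b <+ u :: XP :=
        ((block_sublist_flatMap hb : upX b <+ XP)).cons u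
      rw [hX, hXbF]
      exact Sublist.append h1 h2
    · exact (block_sublist_flatMap hb).trans
        ((List.sublist_append_right _ _ : lbs.flatMap XbF <+ XA).trans embXAX)
  have embYb : ∀ b, (b ∈ ubs ∨ b ∈ lbs) → YbF b <+ Y := by
    intro b hbm
    rcases hbm with hb | hb
    · exact (block_sublist_flatMap hb).trans embYPUY
    · have hEq : YbF b = yaC b ++ ypF b := by rw [hYbF, hyaC]; simp
      rw [hY, hEq]
      refine Sublist.append ?_ ?_
      · rw [hYA]; exact block_sublist_flatMap hb
      · exact ((block_sublist_flatMap hb : ypF b <+ YPL).trans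
          (List.sublist_append_right _ _ : YPL <+ YP)).cons u
  have embZb : ∀ b, (b ∈ ubs ∨ b ∈ lbs) → zF b <+ Z := by
    intro b hbm
    rcases hbm with hb | hb
    · exact (((block_sublist_flatMap (List.mem_reverse.2 hb)) : zF b <+ ZP)).trans embZPZ
    · exact (((block_sublist_flatMap (List.mem_reverse.2 hb)) : zF b <+ ZA)).trans embZAZ
  -- dichotomy helpers
  have hUU : ∀ b ∈ ubs, ∀ b' ∈ ubs, b ≠ b' → ∀ x, S b x → ∀ y, S b' y →
      ([y, x] <+ Y) ∨ ([y, x] <+ Z) := by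
    intro b hb b' hb' hne x hsx y hsy
    rcases mem_dichotomy hb' hb with heq | hp | hp
    · exact absurd heq.symm hne
    · left
      exact (pair_flatMap hp (((hpkg b' (Or.inl hb')).memY y).2 hsy)
        (((hpkg b (Or.inl hb)).memY x).2 hsx)).trans embYPUY
    · right
      exact (pair_flatMap (pair_rev hp) (((hpkg b' (Or.inl hb')).memZ y).2 hsy)
        (((hpkg b (Or.inl hb)).memZ x).2 hsx)).trans embZPZ
  have hLL : ∀ c ∈ lbs, ∀ c' ∈ lbs, c ≠ c' → ∀ x, S c x → ∀ y, S c' y →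
      ([y, x] <+ X) ∨ ([y, x] <+ Z) := by
    intro c hc c' hc' hne x hsx y hsy
    rcases mem_dichotomy hc' hc with heq | hp | hp
    · exact absurd heq.symm hne
    · left
      exact ((pair_flatMap hp (((hpkg c' (Or.inr hc')).memX y).2 hsy)
        (((hpkg c (Or.inr hc)).memX x).2 hsx)).trans
          (List.sublist_append_right _ _ : lbs.flatMap XbF <+ XA)).trans embXAX
    · right
      exact (pair_flatMap (pair_rev hp) (((hpkg c' (Or.inr hc')).memZ y).2 hsy)
        (((hpkg c (Or.inr hc)).memZ x).2 hsx)).trans embZAZ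
  -- master extension
  have mext : ∀ a b : α, a < b → ∀ l ∈ [X, Y, Z], [a, b] <+ l := by
    intro a b hab l hl
    have hlX : l = X ∨ l = Y ∨ l = Z := by simpa using hl
    by_cases hau : a = u
    · subst hau
      obtain ⟨b0, hbm, hs⟩ := hfib b (ne_of_gt hab)
      rcases hbm with hb0 | hb0
      · rcases hlX with rfl | rfl | rfl
        · exact pairXmid2 b ((memXP b).2 hab)
        · exact pairYmid2 b ((memYP b).2 (Or.inl ⟨b0, hb0, hs⟩))
        · exact pairZmid2 b ((memZP b).2 ⟨b0, hb0, hs⟩)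
      · exact absurd hab (cmpL2 b0 hb0 b hs)
    by_cases hbu : b = u
    · subst hbu
      obtain ⟨c0, hcm, hs⟩ := hfib a (ne_of_lt hab)
      rcases hcm with hc0 | hc0
      · exact absurd hab (cmpU2 c0 hc0 a hs)
      · rcases hlX with rfl | rfl | rfl
        · exact pairXmid a (mXA_l c0 hc0 a (((hpkg c0 (Or.inr hc0)).memX a).2 hs))
        · exact pairYmid a (mYA_l c0 hc0 a ((memyaC c0 hc0 a).2 ⟨hs, hab⟩))
        · exact pairZmid a (mZA_l c0 hc0 a (((hpkg c0 (Or.inr hc0)).memZ a).2 hs))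
    obtain ⟨ba, hbam, hsa⟩ := hfib a hau
    obtain ⟨bb, hbbm, hsb⟩ := hfib b hbu
    by_cases hfe : ba = bb
    · subst hfe
      obtain ⟨e1, e2, e3⟩ := (hpkg ba hbam).ext a b hsa hsb hab
      rcases hlX with rfl | rfl | rfl
      · exact e1.trans (embXb ba hbam)
      · exact e2.trans (embYb ba hbam)
      · exact e3.trans (embZb ba hbam)
    · obtain ⟨hau2, hub2⟩ := cross ba bb a b hsa hsb hfe hab
      have hbal : ba ∈ lbs := by
        rcases hbam with h | h
        · exact absurd hau2 (cmpU2 ba h a hsa)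
        · exact h
      have hbbu : bb ∈ ubs := by
        rcases hbbm with h | h
        · exact h
        · exact absurd hub2 (cmpL2 bb h b hsb)
      rcases hlX with rfl | rfl | rfl
      · exact pairXcross a (mXA_l ba hbal a (((hpkg ba (Or.inr hbal)).memX a).2 hsa))
          b ((memXP b).2 hub2)
      · exact pairYcross a (mYA_l ba hbal a ((memyaC ba hbal a).2 ⟨hsa, hau2⟩))
          b ((memYP b).2 (Or.inl ⟨bb, hbbu, hsb⟩))
      · exact pairZcross a (mZA_l ba hbal a (((hpkg ba (Or.inr hbal)).memZ a).2 hsa))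
          b ((memZP b).2 ⟨bb, hbbu, hsb⟩)
  -- master realizing property
  have mrlz : ∀ a b : α, ¬ a ≤ b → ∃ l ∈ [X, Y, Z], [b, a] <+ l := by
    intro a b hnab
    have hne : a ≠ b := fun h => hnab (le_of_eq h)
    by_cases hba : b < a
    · exact ⟨X, by simp, mext b a hba X (by simp)⟩
    have hnba : ¬ b ≤ a := fun h => hba (lt_of_le_of_ne h hne.symm)
    by_cases hau : a = u
    · subst hau
      obtain ⟨b0, hbm, hs⟩ := hfib b (Ne.symm hne)
      refine ⟨X, by simp, pairXmid b ?_⟩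
      rcases hbm with hb0 | hb0
      · exact mXA_u b0 hb0 b ((memxa b0 hb0 b).2 ⟨hs, fun h => hnab h.le⟩)
      · exact mXA_l b0 hb0 b (((hpkg b0 (Or.inr hb0)).memX b).2 hs)
    by_cases hbu : b = u
    · subst hbu
      obtain ⟨b0, hbm, hs⟩ := hfib a hau
      refine ⟨Y, by simp, pairYmid2 a ?_⟩
      rcases hbm with hb0 | hb0
      · exact (memYP a).2 (Or.inl ⟨b0, hb0, hs⟩)
      · exact (memYP a).2 (Or.inr ⟨b0, hb0, hs, fun h => hnab h.le⟩)
    obtain ⟨ba, hbam, hsa⟩ := hfib a hau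
    obtain ⟨bb, hbbm, hsb⟩ := hfib b hbu
    by_cases hfe : ba = bb
    · subst hfe
      rcases (hpkg ba hbam).rlz a b hsa hsb hnab hnba with h | h | h
      · exact ⟨X, by simp, h.trans (embXb ba hbam)⟩
      · exact ⟨Y, by simp, h.trans (embYb ba hbam)⟩
      · exact ⟨Z, by simp, h.trans (embZb ba hbam)⟩
    · rcases hbam with hba_u | hba_l <;> rcases hbbm with hbb_u | hbb_l
      · rcases hUU ba hba_u bb hbb_u hfe a hsa b hsb with h | h
        · exact ⟨Y, by simp, h⟩
        · exact ⟨Z, by simp, h⟩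
      · refine ⟨Z, by simp, pairZcross b (mZA_l bb hbb_l b
          (((hpkg bb (Or.inr hbb_l)).memZ b).2 hsb)) a (mZP_u ba hba_u a
          (((hpkg ba (Or.inl hba_u)).memZ a).2 hsa))⟩
      · by_cases hub : u < b
        · have hnau : ¬ a < u := fun h => hnab (le_of_lt (lt_trans h hub))
          refine ⟨Y, by simp, ?_⟩
          have hp : [b, a] <+ YP := by
            rw [hYP]
            exact pair_sublist_append
              (List.mem_flatMap.2 ⟨bb, hbb_u, ((hpkg bb (Or.inl hbb_u)).memY b).2 hsb⟩)
              (List.mem_flatMap.2 ⟨ba, hba_l, (memyp ba hba_l a).2 ⟨hsa, hnau⟩⟩)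
          exact hp.trans embYPY
        · refine ⟨X, by simp, ?_⟩
          have hp : [b, a] <+ XA := by
            rw [hXA]
            exact pair_sublist_append
              (List.mem_flatMap.2 ⟨bb, List.mem_reverse.2 hbb_u, (memxa bb hbb_u b).2 ⟨hsb, hub⟩⟩)
              (List.mem_flatMap.2 ⟨ba, hba_l, ((hpkg ba (Or.inr hba_l)).memX a).2 hsa⟩)
          exact hp.trans embXAX
      · rcases hLL ba hba_l bb hbb_l hfe a hsa b hsb with h | h
        · exact ⟨X, by simp, h⟩
        · exact ⟨Z, by simp, h⟩
  -- conclude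
  refine ⟨XA, XP, YA, YP, ZA, ZP, memXP, memYA, ?_, ?_⟩
  · by_cases hl0 : lbs = []
    · left; rw [hZA, hl0]; rfl
    · obtain ⟨c, hc⟩ := List.exists_mem_of_ne_nil lbs hl0
      exact Or.inr ⟨c, (hlbs c hc).lt⟩
  · rw [← hX, ← hY, ← hZ]
    refine isListRealizer_of [X, Y, Z] ?_ ?_ mext mrlz
    · intro l hl
      rcases (by simpa using hl : l = X ∨ l = Y ∨ l = Z) with rfl | rfl | rfl
      · exact ndX
      · exact ndY
      · exact ndZ
    · intro l hl
      rcases (by simpa using hl : l = X ∨ l = Y ∨ l = Z) with rfl | rfl | rfl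
      · exact fullX
      · exact fullY
      · exact fullZ
end S5
section S6
universe uu

lemma rec_inv : ∀ (n : ℕ) (α : Type uu) [PartialOrder α] [Fintype α] [DecidableEq α],
    Fintype.card α ≤ n → (coverGraph α).IsTree → ∀ u : α, TInv α u := by
  intro n
  induction n with
  | zero =>
    intro α _ _ _ hcard ht u
    have : 0 < Fintype.card α := Fintype.card_pos_iff.2 ⟨u⟩
    omega
  | succ m IH =>
    intro α instPO instFT instDE hcard ht u
    classical
    set ubs : List α := (Finset.univ.filter (fun b => u ⋖ b)).toList with hubsdef
    set lbs : List α := (Finset.univ.filter (fun b => b ⋖ u)).toList with hlbsdef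
    have hubs : ∀ b ∈ ubs, u ⋖ b := by
      intro b hb
      rw [hubsdef, Finset.mem_toList, Finset.mem_filter] at hb
      exact hb.2
    have hlbs : ∀ c ∈ lbs, c ⋖ u := by
      intro c hc
      rw [hlbsdef, Finset.mem_toList, Finset.mem_filter] at hc
      exact hc.2
    have ndu : ubs.Nodup := Finset.nodup_toList _
    have ndl : lbs.Nodup := Finset.nodup_toList _
    set S : α → α → Prop := Fib ht u with hSdef
    have hadjmem : ∀ b, (coverGraph α).Adj u b → (b ∈ ubs ∨ b ∈ lbs) := by
      intro b hadj
      rcases hadj with h | h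
      · exact Or.inl (by rw [hubsdef, Finset.mem_toList, Finset.mem_filter]; exact ⟨by simp, h⟩)
      · exact Or.inr (by rw [hlbsdef, Finset.mem_toList, Finset.mem_filter]; exact ⟨by simp, h⟩)
    have hmemadj : ∀ b, (b ∈ ubs ∨ b ∈ lbs) → (coverGraph α).Adj u b := by
      intro b hb
      rcases hb with hb | hb
      · exact Or.inl (hubs b hb)
      · exact Or.inr (hlbs b hb)
    have hSb : ∀ b, (b ∈ ubs ∨ b ∈ lbs) → S b b := by
      intro b hb
      have hadj := hmemadj b hb
      exact ⟨fun h => (coverGraph α).loopless.irrefl u (h ▸ hadj), rt_adj_self ht hadj⟩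
    have hSnu : ∀ b w, S b w → w ≠ u := fun b w hs => hs.1
    have hSdisj : ∀ b b' w, S b w → S b' w → b = b' := fun b b' w hs hs' =>
      hs.2.symm.trans hs'.2
    have hfib : ∀ w, w ≠ u → ∃ b, (b ∈ ubs ∨ b ∈ lbs) ∧ S b w := by
      intro w hw
      exact ⟨rt ht u w, hadjmem _ (rt_spec ht hw).1, hw, rfl⟩
    have cmpU : ∀ b ∈ ubs, ∀ w, S b w → (u < w ↔ b ≤ w) := by
      intro b hb w hs
      constructor
      · intro h
        have := (u_lt ht h).2
        rwa [hs.2] at this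
      · intro h
        exact lt_of_lt_of_le (hubs b hb).lt h
    have cmpU2 : ∀ b ∈ ubs, ∀ w, S b w → ¬ w < u := by
      intro b hb w hs h
      have := (lt_u ht h).1
      rw [hs.2] at this
      exact absurd (hubs b hb).lt (asymm this.lt)
    have cmpL : ∀ c ∈ lbs, ∀ w, S c w → (w < u ↔ w ≤ c) := by
      intro c hc w hs
      constructor
      · intro h
        have := (lt_u ht h).2
        rwa [hs.2] at this
      · intro h
        exact lt_of_le_of_lt h (hlbs c hc).lt
    have cmpL2 : ∀ c ∈ lbs, ∀ w, S c w → ¬ u < w := by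
      intro c hc w hs h
      have := (u_lt ht h).1
      rw [hs.2] at this
      exact absurd (hlbs c hc).lt (asymm this.lt)
    have cross : ∀ b b' w w', S b w → S b' w' → b ≠ b' → w < w' → w < u ∧ u < w' := by
      intro b b' w w' hs hs' hne hlt
      exact cross_lt ht hs.1 hs'.1 (by rw [hs.2, hs'.2]; exact hne) hlt
    have hpkgE : ∀ b, (b ∈ ubs ∨ b ∈ lbs) →
        ∃ xa xp ya yp z : List α, Pkg b (S b) xa xp ya yp z := by
      intro b hbm
      have hFb : S b b := hSb b hbm
      haveI : DecidablePred (Fib ht u b) := Classical.decPred _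
      have htree := comp_tree ht u b hFb
      have hcard' : Fintype.card {w : α // Fib ht u b w} ≤ m := by
        have hlt : Fintype.card {w : α // Fib ht u b w} < Fintype.card α :=
          Fintype.card_subtype_lt (x := u) (fun hc => hc.1 rfl)
        omega
      exact pkg_of_inv hFb (IH {w : α // Fib ht u b w} hcard' htree ⟨b, hFb⟩)
    have hpkgE' : ∀ b, ∃ xa xp ya yp z : List α,
        (b ∈ ubs ∨ b ∈ lbs) → Pkg b (S b) xa xp ya yp z := by
      intro b
      by_cases hbm : b ∈ ubs ∨ b ∈ lbs
      · obtain ⟨xa, xp, ya, yp, z, hp⟩ := hpkgE b hbm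
        exact ⟨xa, xp, ya, yp, z, fun _ => hp⟩
      · exact ⟨[], [], [], [], [], fun h => absurd h hbm⟩
    choose xaF xpF yaF ypF zF hP using hpkgE'
    exact assemble u ubs lbs S xaF xpF yaF ypF zF hubs hlbs ndu ndl hP hSb hSnu hSdisj hfib
      cmpU cmpU2 cmpL cmpL2 cross
end S6
end TreeReal

/-- a finite tree poset with a minimal element `a` has a realizer
of size `3` of the form `U⁻ a U⁺`, `a U₁`, `a U₂`, where `U⁻` enumerates the
elements incomparable to `a`, `U⁺` enumerates the elements above `a`, and
`U₁, U₂` enumerate all elements other than `a`. -/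
theorem tree_minimal_realizer {α : Type*} [PartialOrder α] [Fintype α] [DecidableEq α]
    (ht : (coverGraph α).IsTree) (a : α) (ha : ∀ b : α, ¬ b < a) :
    ∃ um up u1 u2 : List α,
      (∀ w : α, w ∈ um ↔ w ≠ a ∧ ¬ a < w) ∧
      (∀ w : α, w ∈ up ↔ a < w) ∧
      (∀ w : α, w ∈ u1 ↔ w ≠ a) ∧
      (∀ w : α, w ∈ u2 ↔ w ≠ a) ∧
      IsListRealizer [um ++ a :: up, a :: u1, a :: u2] := by
  classical
  obtain ⟨xa, xp, ya, yp, za, zp, hxp, hya, hza, hreal⟩ :=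
    TreeReal.rec_inv (Fintype.card α) α le_rfl ht a
  have hya0 : ya = [] := List.eq_nil_iff_forall_not_mem.2 (fun w hw => ha w ((hya w).1 hw))
  have hza0 : za = [] := by
    rcases hza with h | ⟨c, hc⟩
    · exact h
    · exact absurd hc (ha c)
  rw [hya0, hza0] at hreal
  simp only [List.nil_append] at hreal
  have hndX : (xa ++ a :: xp).Nodup := (hreal.1 _ (by simp)).1
  have hfullX : ∀ w : α, w ∈ xa ++ a :: xp := (hreal.1 _ (by simp)).2
  have hndY : (a :: yp).Nodup := (hreal.1 _ (by simp)).1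
  have hfullY : ∀ w : α, w ∈ a :: yp := (hreal.1 _ (by simp)).2
  have hndZ : (a :: zp).Nodup := (hreal.1 _ (by simp)).1
  have hfullZ : ∀ w : α, w ∈ a :: zp := (hreal.1 _ (by simp)).2
  have hdisjX := (List.disjoint_of_nodup_append hndX)
  refine ⟨xa, xp, yp, zp, ?_, hxp, ?_, ?_, hreal⟩
  · intro w
    constructor
    · intro hw
      refine ⟨fun he => hdisjX (he ▸ hw) (List.mem_cons_self), fun hlt => ?_⟩
      exact hdisjX hw (List.mem_cons_of_mem _ ((hxp w).2 hlt))
    · rintro ⟨hwa, hnlt⟩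
      rcases List.mem_append.1 (hfullX w) with hw | hw
      · exact hw
      · rcases List.mem_cons.1 hw with rfl | hw'
        · exact absurd rfl hwa
        · exact absurd ((hxp w).1 hw') hnlt
  · intro w
    constructor
    · intro hw
      rintro rfl
      exact (List.nodup_cons.1 hndY).1 hw
    · intro hw
      rcases List.mem_cons.1 (hfullY w) with rfl | h
      · exact absurd rfl hw
      · exact h
  · intro w
    constructor
    · intro hw
      rintro rfl
      exact (List.nodup_cons.1 hndZ).1 hw
    · intro hw
      rcases List.mem_cons.1 (hfullZ w) with rfl | h
      · exact absurd rfl hw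
      · exact h
end

section
/- Every finite poset whose cover graph is a tree has order dimension at most 3. -/
namespace TreeDim

/-- cover graph minus the edge `{v, w}`. -/
def delG [PartialOrder α] (v w : α) : SimpleGraph α :=
  coverGraph α \ SimpleGraph.fromEdgeSet {s(v, w)}

lemma delG_le [PartialOrder α] {v w : α} : delG v w ≤ coverGraph α := sdiff_le

lemma delG_adj_iff [PartialOrder α] {v w a b : α} :
    (delG v w).Adj a b ↔ (coverGraph α).Adj a b ∧ s(a, b) ≠ s(v, w) := by
  constructor
  · intro h
    rw [delG, SimpleGraph.sdiff_adj] at h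
    refine ⟨h.1, fun he => h.2 ?_⟩
    rw [SimpleGraph.fromEdgeSet_adj]
    exact ⟨by simp [he], h.1.ne⟩
  · intro ⟨h1, h2⟩
    rw [delG, SimpleGraph.sdiff_adj]
    refine ⟨h1, fun he => ?_⟩
    rw [SimpleGraph.fromEdgeSet_adj] at he
    exact h2 (by simpa using he.1)

lemma rtg_le [PartialOrder α] {a b : α} (h : Relation.ReflTransGen (· ⋖ ·) a b) : a ≤ b := by
  induction h with
  | refl => exact le_refl _
  | tail _ h2 ih => exact ih.trans h2.le

lemma le_rtg [PartialOrder α] [Fintype α] {a b : α} (h : a ≤ b) :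
    Relation.ReflTransGen (· ⋖ ·) a b := by
  classical
  letI := Fintype.toLocallyFiniteOrder (α := α)
  exact le_iff_reflTransGen_covBy.mp h

section Cross

variable [PartialOrder α] [Fintype α] {v w : α}

lemma not_reach_wv (ht : (coverGraph α).IsTree) (hvw : v ⋖ w) :
    ¬ (delG v w).Reachable w v := by
  have hb : (coverGraph α).IsBridge s(v, w) :=
    (SimpleGraph.isAcyclic_iff_forall_adj_isBridge.mp ht.IsAcyclic)
      (Or.inl hvw)
  rw [SimpleGraph.isBridge_iff] at hb
  exact fun h => hb h.symm

lemma reach_aux (v w : α) : ∀ {x y : α}, (coverGraph α).Walk x y →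
    (delG v w).Reachable x y ∨
    ((delG v w).Reachable x v ∧ (delG v w).Reachable w y) ∨
    ((delG v w).Reachable x w ∧ (delG v w).Reachable v y) := by
  intro x y p
  induction p with
  | nil => exact Or.inl (.refl _)
  | @cons x z y h q ih =>
    by_cases hd : (delG v w).Adj x z
    · rcases ih with h1 | ⟨h1, h2⟩ | ⟨h1, h2⟩
      · exact Or.inl (hd.reachable.trans h1)
      · exact Or.inr (Or.inl ⟨hd.reachable.trans h1, h2⟩)
      · exact Or.inr (Or.inr ⟨hd.reachable.trans h1, h2⟩)
    · have he : s(x, z) = s(v, w) := by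
        by_contra hne
        exact hd (delG_adj_iff.mpr ⟨h, hne⟩)
      rw [Sym2.eq_iff] at he
      rcases he with ⟨he1, he2⟩ | ⟨he1, he2⟩
      · subst he1; subst he2
        rcases ih with h1 | ⟨h1, h2⟩ | ⟨h1, h2⟩
        · exact Or.inr (Or.inl ⟨.refl _, h1⟩)
        · exact Or.inr (Or.inl ⟨.refl _, h2⟩)
        · exact Or.inl h2
      · subst he1; subst he2
        rcases ih with h1 | ⟨h1, h2⟩ | ⟨h1, h2⟩
        · exact Or.inr (Or.inr ⟨.refl _, h1⟩)
        · exact Or.inl h2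
        · exact Or.inr (Or.inr ⟨.refl _, h2⟩)

lemma reach_dich (ht : (coverGraph α).IsTree) (v w x : α) :
    (delG v w).Reachable x v ∨ (delG v w).Reachable x w := by
  obtain ⟨p⟩ := (ht.isConnected.preconnected x v)
  rcases reach_aux v w p with h1 | ⟨h1, _⟩ | ⟨h1, _⟩
  · exact Or.inl h1
  · exact Or.inl h1
  · exact Or.inr h1

lemma crossing1 (ht : (coverGraph α).IsTree) (hvw : v ⋖ w) {a b : α} (hle : a ≤ b)
    (ha : (delG v w).Reachable a v) (hb : ¬ (delG v w).Reachable b v) :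
    a ≤ v ∧ w ≤ b := by
  have key : ∀ b' : α, Relation.ReflTransGen (· ⋖ ·) a b' →
      ¬ (delG v w).Reachable b' v → a ≤ v ∧ w ≤ b' := by
    intro b' h
    induction h with
    | refl => exact fun hb' => absurd ha hb'
    | @tail c d h1 h2 ih =>
      intro hd
      by_cases hc : (delG v w).Reachable c v
      · have hadj : (coverGraph α).Adj c d := Or.inl h2
        have he : s(c, d) = s(v, w) := by
          by_contra hne
          exact hd ((delG_adj_iff.mpr ⟨hadj.symm, by
            rw [Sym2.eq_swap]; exact hne⟩).reachable.trans hc)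
        rw [Sym2.eq_iff] at he
        rcases he with ⟨he1, he2⟩ | ⟨he1, he2⟩
        · refine ⟨he1 ▸ rtg_le h1, he2 ▸ le_refl w⟩
        · exact absurd (by rw [he1] at hc; exact hc) (not_reach_wv ht hvw)
      · obtain ⟨h3, h4⟩ := ih hc
        exact ⟨h3, h4.trans h2.le⟩
  exact key b (le_rtg hle) hb

lemma crossing2 (ht : (coverGraph α).IsTree) (hvw : v ⋖ w) {a b : α} (hle : a ≤ b)
    (ha : ¬ (delG v w).Reachable a v) (hb : (delG v w).Reachable b v) : False := by
  have key : ∀ b' : α, Relation.ReflTransGen (· ⋖ ·) a b' →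
      (delG v w).Reachable b' v → False := by
    intro b' h
    induction h with
    | refl => exact fun hb' => ha hb'
    | @tail c d h1 h2 ih =>
      intro hd
      by_cases hc : (delG v w).Reachable c v
      · exact ih hc
      · have hadj : (coverGraph α).Adj c d := Or.inl h2
        have he : s(c, d) = s(v, w) := by
          by_contra hne
          exact hc ((delG_adj_iff.mpr ⟨hadj, hne⟩).reachable.trans hd)
        rw [Sym2.eq_iff] at he
        rcases he with ⟨he1, he2⟩ | ⟨he1, he2⟩
        · rw [he1] at hc; exact hc (.refl _)
        · rw [he1, he2] at h2
          exact absurd (hvw.lt.trans h2.lt) (lt_irrefl v)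
  exact key b (le_rtg hle) hb

end Cross

section Subtree

variable [PartialOrder α] {v w : α}

lemma subtype_covBy (A : Set α)
    (hconv : ∀ ⦃a z b : α⦄, a ∈ A → b ∈ A → a ≤ z → z ≤ b → z ∈ A)
    (a b : ↥A) : a ⋖ b ↔ (a : α) ⋖ (b : α) := by
  constructor
  · intro h
    refine ⟨Subtype.coe_lt_coe.mpr h.lt, fun c h1 h2 => ?_⟩
    have hc : c ∈ A := hconv a.2 b.2 h1.le h2.le
    exact h.2 (show a < ⟨c, hc⟩ from Subtype.coe_lt_coe.mp h1)
      (show (⟨c, hc⟩ : ↥A) < b from Subtype.coe_lt_coe.mp h2)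
  · intro h
    exact ⟨Subtype.coe_lt_coe.mp h.lt,
      fun c h1 h2 => h.2 (Subtype.coe_lt_coe.mpr h1) (Subtype.coe_lt_coe.mpr h2)⟩

lemma subtype_adj (A : Set α)
    (hconv : ∀ ⦃a z b : α⦄, a ∈ A → b ∈ A → a ≤ z → z ≤ b → z ∈ A)
    (a b : ↥A) : (coverGraph ↥A).Adj a b ↔ (coverGraph α).Adj a.1 b.1 :=
  or_congr (subtype_covBy A hconv a b) (subtype_covBy A hconv b a)

lemma subtree [Fintype α] (ht : (coverGraph α).IsTree) (A : Set α)
    (hconv : ∀ ⦃a z b : α⦄, a ∈ A → b ∈ A → a ≤ z → z ≤ b → z ∈ A)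
    (hclosed : ∀ ⦃x y : α⦄, x ∈ A → (delG v w).Reachable y x → y ∈ A)
    (hconn : ∀ ⦃a b : α⦄, a ∈ A → b ∈ A → (delG v w).Reachable a b)
    (hne : A.Nonempty) : (coverGraph ↥A).IsTree := by
  have lift : ∀ {x y : α} (p : (delG v w).Walk x y) (hx : x ∈ A) (hy : y ∈ A),
      (coverGraph ↥A).Reachable ⟨x, hx⟩ ⟨y, hy⟩ := by
    intro x y p
    induction p with
    | nil => intro hx hy; exact .refl _
    | @cons x z y h q ih =>
      intro hx hy
      have hz : z ∈ A := hclosed hx h.symm.reachable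
      have hadj : (coverGraph ↥A).Adj ⟨x, hx⟩ ⟨z, hz⟩ := by
        rw [subtype_adj A hconv]
        exact (delG_adj_iff.mp h).1
      exact hadj.reachable.trans (ih hz hy)
  constructor
  · rw [SimpleGraph.connected_iff]
    refine ⟨fun a b => ?_, hne.to_subtype⟩
    obtain ⟨p⟩ := hconn a.2 b.2
    exact lift p a.2 b.2
  · intro a c hc
    let f : coverGraph ↥A →g coverGraph α :=
      ⟨Subtype.val, fun {x y} h => (subtype_adj A hconv x y).mp h⟩
    exact ht.IsAcyclic (c.map f) (hc.map Subtype.val_injective)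

end Subtree


section Pack

variable [PartialOrder α]

structure Good (v : α) (g1 g2 g3 : α → ℚ) : Prop where
  inj1 : Function.Injective g1
  inj2 : Function.Injective g2
  inj3 : Function.Injective g3
  mono1 : Monotone g1
  mono2 : Monotone g2
  mono3 : Monotone g3
  real : ∀ a b : α, g1 a ≤ g1 b → g2 a ≤ g2 b → g3 a ≤ g3 b → a ≤ b
  bdd1 : ∀ x, 0 < g1 x ∧ g1 x < 1
  bdd2 : ∀ x, 0 < g2 x ∧ g2 x < 1
  bdd3 : ∀ x, 0 < g3 x ∧ g3 x < 1
  down : ∀ x, g2 x ≤ g2 v ↔ x ≤ v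
  up : ∀ x, g3 v ≤ g3 x ↔ v ≤ x

end Pack

lemma slot_lt {k l a b : ℚ} (ha1 : a < 1) (hb0 : 0 < b)
    (hkl : k + 1 ≤ l) : (k + a)/10 < (l + b)/10 := by linarith

lemma slot_ext {k a b : ℚ} (h : (k + a)/10 ≤ (k + b)/10) : a ≤ b := by linarith

lemma slot_eq {k a b : ℚ} (h : (k + a)/10 = (k + b)/10) : a = b := by linarith

universe u

set_option maxHeartbeats 1000000 in
lemma step {α : Type u} [PartialOrder α] [Fintype α] (ht : (coverGraph α).IsTree)
    (IH : ∀ (β : Type u) [PartialOrder β] [Fintype β], Fintype.card β < Fintype.card α →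
      (coverGraph β).IsTree → ∀ r : β, ∃ h1 h2 h3 : β → ℚ, Good r h1 h2 h3)
    {v w : α} (hvw : v ⋖ w) : ∃ g1 g2 g3 : α → ℚ, Good v g1 g2 g3 := by
  classical
  set S : Set α := {x | (delG v w).Reachable x v} with hSdef
  have hvS : v ∈ S := SimpleGraph.Reachable.refl _
  have hwS : w ∉ S := not_reach_wv ht hvw
  have hT : ∀ x, x ∉ S → (delG v w).Reachable x w :=
    fun x hx => (reach_dich ht v w x).resolve_left hx
  have F1 : ∀ {a b : α}, a ∈ S → b ∉ S → a ≤ b → a ≤ v ∧ w ≤ b :=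
    fun ha hb hab => crossing1 ht hvw hab ha hb
  have F2 : ∀ {a b : α}, a ∉ S → b ∈ S → a ≤ b → False :=
    fun ha hb hab => crossing2 ht hvw hab ha hb
  have convS : ∀ ⦃a z b : α⦄, a ∈ S → b ∈ S → a ≤ z → z ≤ b → z ∈ S := by
    intro a z b _ hb _ h2
    by_contra hz; exact F2 hz hb h2
  have convT : ∀ ⦃a z b : α⦄, a ∈ Sᶜ → b ∈ Sᶜ → a ≤ z → z ≤ b → z ∈ Sᶜ := by
    intro a z b ha _ h1 _ hz
    exact F2 ha hz h1
  have treeS : (coverGraph ↥S).IsTree :=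
    subtree ht S convS (fun x y hx hyx => hyx.trans hx)
      (fun a b ha hb => ha.trans hb.symm) ⟨v, hvS⟩
  have treeT : (coverGraph ↥(Sᶜ)).IsTree :=
    subtree ht Sᶜ convT (fun x y hx hyx hy => hx (hyx.symm.trans hy))
      (fun a b ha hb => (hT _ ha).trans (hT _ hb).symm) ⟨w, hwS⟩
  letI : Fintype ↥S := Fintype.ofFinite _
  letI : Fintype ↥(Sᶜ) := Fintype.ofFinite _
  have cardS : Fintype.card ↥S < Fintype.card α :=
    Fintype.card_lt_of_injective_of_notMem Subtype.val Subtype.val_injective (b := w)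
      (by rintro ⟨⟨x, hx⟩, he⟩; rw [show (⟨x,hx⟩ : ↥S).1 = x from rfl] at he; exact hwS (he ▸ hx))
  have cardT : Fintype.card ↥(Sᶜ) < Fintype.card α :=
    Fintype.card_lt_of_injective_of_notMem Subtype.val Subtype.val_injective (b := v)
      (by rintro ⟨⟨x, hx⟩, he⟩; rw [show (⟨x,hx⟩ : ↥(Sᶜ)).1 = x from rfl] at he; exact (he ▸ hx) hvS)
  obtain ⟨a1, a2, a3, hA⟩ := IH (↥S) cardS treeS ⟨v, hvS⟩
  obtain ⟨b1, b2, b3, hB⟩ := IH (↥(Sᶜ)) cardT treeT ⟨w, hwS⟩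
  set g1 : α → ℚ := fun x =>
    if h : x ∈ S then (0 + a1 ⟨x, h⟩)/10 else (2 + b1 ⟨x, h⟩)/10 with hg1def
  set g2 : α → ℚ := fun x =>
    if h : x ∈ S then (if x ≤ v then (0 + a2 ⟨x, h⟩)/10 else (6 + a2 ⟨x, h⟩)/10)
    else (if x ≤ w then (2 + b2 ⟨x, h⟩)/10 else (4 + b2 ⟨x, h⟩)/10) with hg2def
  set g3 : α → ℚ := fun x =>
    if h : x ∈ S then (if v ≤ x then (4 + a3 ⟨x, h⟩)/10 else (2 + a3 ⟨x, h⟩)/10)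
    else (if w ≤ x then (6 + b3 ⟨x, h⟩)/10 else (0 + b3 ⟨x, h⟩)/10) with hg3def
  have hg1S : ∀ (x) (h : x ∈ S), g1 x = (0 + a1 ⟨x, h⟩)/10 := by
    intro x h; simp only [hg1def]; rw [dif_pos h]
  have hg1T : ∀ (x) (h : x ∉ S), g1 x = (2 + b1 ⟨x, h⟩)/10 := by
    intro x h; simp only [hg1def]; rw [dif_neg h]
  have hg2Sl : ∀ (x) (h : x ∈ S), x ≤ v → g2 x = (0 + a2 ⟨x, h⟩)/10 := by
    intro x h h'; simp only [hg2def]; rw [dif_pos h, if_pos h']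
  have hg2Sr : ∀ (x) (h : x ∈ S), ¬ x ≤ v → g2 x = (6 + a2 ⟨x, h⟩)/10 := by
    intro x h h'; simp only [hg2def]; rw [dif_pos h, if_neg h']
  have hg2Tl : ∀ (x) (h : x ∉ S), x ≤ w → g2 x = (2 + b2 ⟨x, h⟩)/10 := by
    intro x h h'; simp only [hg2def]; rw [dif_neg h, if_pos h']
  have hg2Tr : ∀ (x) (h : x ∉ S), ¬ x ≤ w → g2 x = (4 + b2 ⟨x, h⟩)/10 := by
    intro x h h'; simp only [hg2def]; rw [dif_neg h, if_neg h']
  have hg3Sl : ∀ (x) (h : x ∈ S), v ≤ x → g3 x = (4 + a3 ⟨x, h⟩)/10 := by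
    intro x h h'; simp only [hg3def]; rw [dif_pos h, if_pos h']
  have hg3Sr : ∀ (x) (h : x ∈ S), ¬ v ≤ x → g3 x = (2 + a3 ⟨x, h⟩)/10 := by
    intro x h h'; simp only [hg3def]; rw [dif_pos h, if_neg h']
  have hg3Tl : ∀ (x) (h : x ∉ S), w ≤ x → g3 x = (6 + b3 ⟨x, h⟩)/10 := by
    intro x h h'; simp only [hg3def]; rw [dif_neg h, if_pos h']
  have hg3Tr : ∀ (x) (h : x ∉ S), ¬ w ≤ x → g3 x = (0 + b3 ⟨x, h⟩)/10 := by
    intro x h h'; simp only [hg3def]; rw [dif_neg h, if_neg h']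
  have Pa1 := hA.bdd1; have Pa2 := hA.bdd2; have Pa3 := hA.bdd3
  have Pb1 := hB.bdd1; have Pb2 := hB.bdd2; have Pb3 := hB.bdd3
  have hmono1 : Monotone g1 := by
    intro x y hxy
    by_cases hx : x ∈ S <;> by_cases hy : y ∈ S
    · rw [hg1S x hx, hg1S y hy]
      have := hA.mono1 (Subtype.mk_le_mk.mpr hxy : (⟨x,hx⟩ : ↥S) ≤ ⟨y,hy⟩)
      linarith only [this]
    · rw [hg1S x hx, hg1T y hy]
      exact (slot_lt (Pa1 _).2 (Pb1 _).1 (by norm_num)).le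
    · exact (F2 hx hy hxy).elim
    · rw [hg1T x hx, hg1T y hy]
      have := hB.mono1 (Subtype.mk_le_mk.mpr hxy : (⟨x,hx⟩ : ↥(Sᶜ)) ≤ ⟨y,hy⟩)
      linarith only [this]
  have hmono2 : Monotone g2 := by
    intro x y hxy
    by_cases hx : x ∈ S <;> by_cases hy : y ∈ S
    · by_cases hxv : x ≤ v <;> by_cases hyv : y ≤ v
      · rw [hg2Sl x hx hxv, hg2Sl y hy hyv]
        have := hA.mono2 (Subtype.mk_le_mk.mpr hxy : (⟨x,hx⟩ : ↥S) ≤ ⟨y,hy⟩)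
        linarith only [this]
      · rw [hg2Sl x hx hxv, hg2Sr y hy hyv]
        exact (slot_lt (Pa2 _).2 (Pa2 _).1 (by norm_num)).le
      · exact absurd (hxy.trans hyv) hxv
      · rw [hg2Sr x hx hxv, hg2Sr y hy hyv]
        have := hA.mono2 (Subtype.mk_le_mk.mpr hxy : (⟨x,hx⟩ : ↥S) ≤ ⟨y,hy⟩)
        linarith only [this]
    · obtain ⟨hxv, hwy⟩ := F1 hx hy hxy
      rw [hg2Sl x hx hxv]
      by_cases hyw : y ≤ w
      · rw [hg2Tl y hy hyw]
        exact (slot_lt (Pa2 _).2 (Pb2 _).1 (by norm_num)).le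
      · rw [hg2Tr y hy hyw]
        exact (slot_lt (Pa2 _).2 (Pb2 _).1 (by norm_num)).le
    · exact (F2 hx hy hxy).elim
    · by_cases hxw : x ≤ w <;> by_cases hyw : y ≤ w
      · rw [hg2Tl x hx hxw, hg2Tl y hy hyw]
        have := hB.mono2 (Subtype.mk_le_mk.mpr hxy : (⟨x,hx⟩ : ↥(Sᶜ)) ≤ ⟨y,hy⟩)
        linarith only [this]
      · rw [hg2Tl x hx hxw, hg2Tr y hy hyw]
        exact (slot_lt (Pb2 _).2 (Pb2 _).1 (by norm_num)).le
      · exact absurd (hxy.trans hyw) hxw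
      · rw [hg2Tr x hx hxw, hg2Tr y hy hyw]
        have := hB.mono2 (Subtype.mk_le_mk.mpr hxy : (⟨x,hx⟩ : ↥(Sᶜ)) ≤ ⟨y,hy⟩)
        linarith only [this]
  have hmono3 : Monotone g3 := by
    intro x y hxy
    by_cases hx : x ∈ S <;> by_cases hy : y ∈ S
    · by_cases hvx : v ≤ x <;> by_cases hvy : v ≤ y
      · rw [hg3Sl x hx hvx, hg3Sl y hy hvy]
        have := hA.mono3 (Subtype.mk_le_mk.mpr hxy : (⟨x,hx⟩ : ↥S) ≤ ⟨y,hy⟩)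
        linarith only [this]
      · exact absurd (hvx.trans hxy) hvy
      · rw [hg3Sr x hx hvx, hg3Sl y hy hvy]
        exact (slot_lt (Pa3 _).2 (Pa3 _).1 (by norm_num)).le
      · rw [hg3Sr x hx hvx, hg3Sr y hy hvy]
        have := hA.mono3 (Subtype.mk_le_mk.mpr hxy : (⟨x,hx⟩ : ↥S) ≤ ⟨y,hy⟩)
        linarith only [this]
    · obtain ⟨hxv, hwy⟩ := F1 hx hy hxy
      rw [hg3Tl y hy hwy]
      by_cases hvx : v ≤ x
      · rw [hg3Sl x hx hvx]
        exact (slot_lt (Pa3 _).2 (Pb3 _).1 (by norm_num)).le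
      · rw [hg3Sr x hx hvx]
        exact (slot_lt (Pa3 _).2 (Pb3 _).1 (by norm_num)).le
    · exact (F2 hx hy hxy).elim
    · by_cases hwx : w ≤ x <;> by_cases hwy : w ≤ y
      · rw [hg3Tl x hx hwx, hg3Tl y hy hwy]
        have := hB.mono3 (Subtype.mk_le_mk.mpr hxy : (⟨x,hx⟩ : ↥(Sᶜ)) ≤ ⟨y,hy⟩)
        linarith only [this]
      · exact absurd (hwx.trans hxy) hwy
      · rw [hg3Tr x hx hwx, hg3Tl y hy hwy]
        exact (slot_lt (Pb3 _).2 (Pb3 _).1 (by norm_num)).le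
      · rw [hg3Tr x hx hwx, hg3Tr y hy hwy]
        have := hB.mono3 (Subtype.mk_le_mk.mpr hxy : (⟨x,hx⟩ : ↥(Sᶜ)) ≤ ⟨y,hy⟩)
        linarith only [this]
  have hinj1 : Function.Injective g1 := by
    intro x y h
    by_cases hx : x ∈ S <;> by_cases hy : y ∈ S
    · rw [hg1S x hx, hg1S y hy] at h
      exact congrArg Subtype.val (hA.inj1 (slot_eq h))
    · rw [hg1S x hx, hg1T y hy] at h
      exact absurd h (ne_of_lt (slot_lt (Pa1 _).2 (Pb1 _).1 (by norm_num)))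
    · rw [hg1T x hx, hg1S y hy] at h
      exact absurd h (ne_of_gt (slot_lt (Pa1 _).2 (Pb1 _).1 (by norm_num)))
    · rw [hg1T x hx, hg1T y hy] at h
      exact congrArg Subtype.val (hB.inj1 (slot_eq h))
  have hinj2 : Function.Injective g2 := by
    intro x y h
    by_cases hx : x ∈ S <;> by_cases hy : y ∈ S
    · by_cases hxv : x ≤ v <;> by_cases hyv : y ≤ v
      · rw [hg2Sl x hx hxv, hg2Sl y hy hyv] at h
        exact congrArg Subtype.val (hA.inj2 (slot_eq h))
      · rw [hg2Sl x hx hxv, hg2Sr y hy hyv] at h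
        exact absurd h (ne_of_lt (slot_lt (Pa2 _).2 (Pa2 _).1 (by norm_num)))
      · rw [hg2Sr x hx hxv, hg2Sl y hy hyv] at h
        exact absurd h (ne_of_gt (slot_lt (Pa2 _).2 (Pa2 _).1 (by norm_num)))
      · rw [hg2Sr x hx hxv, hg2Sr y hy hyv] at h
        exact congrArg Subtype.val (hA.inj2 (slot_eq h))
    · by_cases hxv : x ≤ v <;> by_cases hyw : y ≤ w
      · rw [hg2Sl x hx hxv, hg2Tl y hy hyw] at h
        exact absurd h (ne_of_lt (slot_lt (Pa2 _).2 (Pb2 _).1 (by norm_num)))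
      · rw [hg2Sl x hx hxv, hg2Tr y hy hyw] at h
        exact absurd h (ne_of_lt (slot_lt (Pa2 _).2 (Pb2 _).1 (by norm_num)))
      · rw [hg2Sr x hx hxv, hg2Tl y hy hyw] at h
        exact absurd h (ne_of_gt (slot_lt (Pb2 _).2 (Pa2 _).1 (by norm_num)))
      · rw [hg2Sr x hx hxv, hg2Tr y hy hyw] at h
        exact absurd h (ne_of_gt (slot_lt (Pb2 _).2 (Pa2 _).1 (by norm_num)))
    · by_cases hxw : x ≤ w <;> by_cases hyv : y ≤ v
      · rw [hg2Tl x hx hxw, hg2Sl y hy hyv] at h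
        exact absurd h (ne_of_gt (slot_lt (Pa2 _).2 (Pb2 _).1 (by norm_num)))
      · rw [hg2Tl x hx hxw, hg2Sr y hy hyv] at h
        exact absurd h (ne_of_lt (slot_lt (Pb2 _).2 (Pa2 _).1 (by norm_num)))
      · rw [hg2Tr x hx hxw, hg2Sl y hy hyv] at h
        exact absurd h (ne_of_gt (slot_lt (Pa2 _).2 (Pb2 _).1 (by norm_num)))
      · rw [hg2Tr x hx hxw, hg2Sr y hy hyv] at h
        exact absurd h (ne_of_lt (slot_lt (Pb2 _).2 (Pa2 _).1 (by norm_num)))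
    · by_cases hxw : x ≤ w <;> by_cases hyw : y ≤ w
      · rw [hg2Tl x hx hxw, hg2Tl y hy hyw] at h
        exact congrArg Subtype.val (hB.inj2 (slot_eq h))
      · rw [hg2Tl x hx hxw, hg2Tr y hy hyw] at h
        exact absurd h (ne_of_lt (slot_lt (Pb2 _).2 (Pb2 _).1 (by norm_num)))
      · rw [hg2Tr x hx hxw, hg2Tl y hy hyw] at h
        exact absurd h (ne_of_gt (slot_lt (Pb2 _).2 (Pb2 _).1 (by norm_num)))
      · rw [hg2Tr x hx hxw, hg2Tr y hy hyw] at h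
        exact congrArg Subtype.val (hB.inj2 (slot_eq h))
  have hinj3 : Function.Injective g3 := by
    intro x y h
    by_cases hx : x ∈ S <;> by_cases hy : y ∈ S
    · by_cases hvx : v ≤ x <;> by_cases hvy : v ≤ y
      · rw [hg3Sl x hx hvx, hg3Sl y hy hvy] at h
        exact congrArg Subtype.val (hA.inj3 (slot_eq h))
      · rw [hg3Sl x hx hvx, hg3Sr y hy hvy] at h
        exact absurd h (ne_of_gt (slot_lt (Pa3 _).2 (Pa3 _).1 (by norm_num)))
      · rw [hg3Sr x hx hvx, hg3Sl y hy hvy] at h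
        exact absurd h (ne_of_lt (slot_lt (Pa3 _).2 (Pa3 _).1 (by norm_num)))
      · rw [hg3Sr x hx hvx, hg3Sr y hy hvy] at h
        exact congrArg Subtype.val (hA.inj3 (slot_eq h))
    · by_cases hvx : v ≤ x <;> by_cases hwy : w ≤ y
      · rw [hg3Sl x hx hvx, hg3Tl y hy hwy] at h
        exact absurd h (ne_of_lt (slot_lt (Pa3 _).2 (Pb3 _).1 (by norm_num)))
      · rw [hg3Sl x hx hvx, hg3Tr y hy hwy] at h
        exact absurd h (ne_of_gt (slot_lt (Pb3 _).2 (Pa3 _).1 (by norm_num)))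
      · rw [hg3Sr x hx hvx, hg3Tl y hy hwy] at h
        exact absurd h (ne_of_lt (slot_lt (Pa3 _).2 (Pb3 _).1 (by norm_num)))
      · rw [hg3Sr x hx hvx, hg3Tr y hy hwy] at h
        exact absurd h (ne_of_gt (slot_lt (Pb3 _).2 (Pa3 _).1 (by norm_num)))
    · by_cases hwx : w ≤ x <;> by_cases hvy : v ≤ y
      · rw [hg3Tl x hx hwx, hg3Sl y hy hvy] at h
        exact absurd h (ne_of_gt (slot_lt (Pa3 _).2 (Pb3 _).1 (by norm_num)))
      · rw [hg3Tl x hx hwx, hg3Sr y hy hvy] at h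
        exact absurd h (ne_of_gt (slot_lt (Pa3 _).2 (Pb3 _).1 (by norm_num)))
      · rw [hg3Tr x hx hwx, hg3Sl y hy hvy] at h
        exact absurd h (ne_of_lt (slot_lt (Pb3 _).2 (Pa3 _).1 (by norm_num)))
      · rw [hg3Tr x hx hwx, hg3Sr y hy hvy] at h
        exact absurd h (ne_of_lt (slot_lt (Pb3 _).2 (Pa3 _).1 (by norm_num)))
    · by_cases hwx : w ≤ x <;> by_cases hwy : w ≤ y
      · rw [hg3Tl x hx hwx, hg3Tl y hy hwy] at h
        exact congrArg Subtype.val (hB.inj3 (slot_eq h))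
      · rw [hg3Tl x hx hwx, hg3Tr y hy hwy] at h
        exact absurd h (ne_of_gt (slot_lt (Pb3 _).2 (Pb3 _).1 (by norm_num)))
      · rw [hg3Tr x hx hwx, hg3Tl y hy hwy] at h
        exact absurd h (ne_of_lt (slot_lt (Pb3 _).2 (Pb3 _).1 (by norm_num)))
      · rw [hg3Tr x hx hwx, hg3Tr y hy hwy] at h
        exact congrArg Subtype.val (hB.inj3 (slot_eq h))
  have hreal : ∀ x y : α, g1 x ≤ g1 y → g2 x ≤ g2 y → g3 x ≤ g3 y → x ≤ y := by
    intro x y H1 H2 H3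
    by_cases hx : x ∈ S <;> by_cases hy : y ∈ S
    · rw [hg1S x hx, hg1S y hy] at H1
      have e1 : a1 ⟨x,hx⟩ ≤ a1 ⟨y,hy⟩ := slot_ext H1
      have e2 : a2 ⟨x,hx⟩ ≤ a2 ⟨y,hy⟩ := by
        by_cases hxv : x ≤ v <;> by_cases hyv : y ≤ v
        · rw [hg2Sl x hx hxv, hg2Sl y hy hyv] at H2; exact slot_ext H2
        · have h5 := not_le.mp
            (fun hc => hyv (Subtype.mk_le_mk.mp ((hA.down ⟨y,hy⟩).mp hc)))
          have h6 := (hA.down ⟨x,hx⟩).mpr (Subtype.mk_le_mk.mpr hxv)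
          linarith only [h5, h6]
        · rw [hg2Sr x hx hxv, hg2Sl y hy hyv] at H2
          exact absurd H2 (not_le.mpr (slot_lt (Pa2 _).2 (Pa2 _).1 (by norm_num)))
        · rw [hg2Sr x hx hxv, hg2Sr y hy hyv] at H2; exact slot_ext H2
      have e3 : a3 ⟨x,hx⟩ ≤ a3 ⟨y,hy⟩ := by
        by_cases hvx : v ≤ x <;> by_cases hvy : v ≤ y
        · rw [hg3Sl x hx hvx, hg3Sl y hy hvy] at H3; exact slot_ext H3
        · rw [hg3Sl x hx hvx, hg3Sr y hy hvy] at H3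
          exact absurd H3 (not_le.mpr (slot_lt (Pa3 _).2 (Pa3 _).1 (by norm_num)))
        · have h5 := not_le.mp
            (fun hc => hvx (Subtype.mk_le_mk.mp ((hA.up ⟨x,hx⟩).mp hc)))
          have h6 := (hA.up ⟨y,hy⟩).mpr (Subtype.mk_le_mk.mpr hvy)
          linarith only [h5, h6]
        · rw [hg3Sr x hx hvx, hg3Sr y hy hvy] at H3; exact slot_ext H3
      exact Subtype.mk_le_mk.mp (hA.real _ _ e1 e2 e3)
    · have hxv : x ≤ v := by
        by_contra hxv
        rw [hg2Sr x hx hxv] at H2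
        by_cases hyw : y ≤ w
        · rw [hg2Tl y hy hyw] at H2
          exact absurd H2 (not_le.mpr (slot_lt (Pb2 _).2 (Pa2 _).1 (by norm_num)))
        · rw [hg2Tr y hy hyw] at H2
          exact absurd H2 (not_le.mpr (slot_lt (Pb2 _).2 (Pa2 _).1 (by norm_num)))
      have hwy : w ≤ y := by
        by_contra hwy
        rw [hg3Tr y hy hwy] at H3
        by_cases hvx : v ≤ x
        · rw [hg3Sl x hx hvx] at H3
          exact absurd H3 (not_le.mpr (slot_lt (Pb3 _).2 (Pa3 _).1 (by norm_num)))
        · rw [hg3Sr x hx hvx] at H3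
          exact absurd H3 (not_le.mpr (slot_lt (Pb3 _).2 (Pa3 _).1 (by norm_num)))
      exact hxv.trans (hvw.le.trans hwy)
    · rw [hg1T x hx, hg1S y hy] at H1
      exact absurd H1 (not_le.mpr (slot_lt (Pa1 _).2 (Pb1 _).1 (by norm_num)))
    · rw [hg1T x hx, hg1T y hy] at H1
      have e1 : b1 ⟨x,hx⟩ ≤ b1 ⟨y,hy⟩ := slot_ext H1
      have e2 : b2 ⟨x,hx⟩ ≤ b2 ⟨y,hy⟩ := by
        by_cases hxw : x ≤ w <;> by_cases hyw : y ≤ w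
        · rw [hg2Tl x hx hxw, hg2Tl y hy hyw] at H2; exact slot_ext H2
        · have h5 := not_le.mp
            (fun hc => hyw (Subtype.mk_le_mk.mp ((hB.down ⟨y,hy⟩).mp hc)))
          have h6 := (hB.down ⟨x,hx⟩).mpr (Subtype.mk_le_mk.mpr hxw)
          linarith only [h5, h6]
        · rw [hg2Tr x hx hxw, hg2Tl y hy hyw] at H2
          exact absurd H2 (not_le.mpr (slot_lt (Pb2 _).2 (Pb2 _).1 (by norm_num)))
        · rw [hg2Tr x hx hxw, hg2Tr y hy hyw] at H2; exact slot_ext H2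
      have e3 : b3 ⟨x,hx⟩ ≤ b3 ⟨y,hy⟩ := by
        by_cases hwx : w ≤ x <;> by_cases hwy : w ≤ y
        · rw [hg3Tl x hx hwx, hg3Tl y hy hwy] at H3; exact slot_ext H3
        · rw [hg3Tl x hx hwx, hg3Tr y hy hwy] at H3
          exact absurd H3 (not_le.mpr (slot_lt (Pb3 _).2 (Pb3 _).1 (by norm_num)))
        · have h5 := not_le.mp
            (fun hc => hwx (Subtype.mk_le_mk.mp ((hB.up ⟨x,hx⟩).mp hc)))
          have h6 := (hB.up ⟨y,hy⟩).mpr (Subtype.mk_le_mk.mpr hwy)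
          linarith only [h5, h6]
        · rw [hg3Tr x hx hwx, hg3Tr y hy hwy] at H3; exact slot_ext H3
      exact Subtype.mk_le_mk.mp (hB.real _ _ e1 e2 e3)
  have hbdd1 : ∀ x, 0 < g1 x ∧ g1 x < 1 := by
    intro x
    by_cases hx : x ∈ S
    · rw [hg1S x hx]
      constructor <;> linarith only [(Pa1 ⟨x,hx⟩).1, (Pa1 ⟨x,hx⟩).2]
    · rw [hg1T x hx]
      constructor <;> linarith only [(Pb1 ⟨x,hx⟩).1, (Pb1 ⟨x,hx⟩).2]
  have hbdd2 : ∀ x, 0 < g2 x ∧ g2 x < 1 := by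
    intro x
    by_cases hx : x ∈ S
    · by_cases hxv : x ≤ v
      · rw [hg2Sl x hx hxv]
        constructor <;> linarith only [(Pa2 ⟨x,hx⟩).1, (Pa2 ⟨x,hx⟩).2]
      · rw [hg2Sr x hx hxv]
        constructor <;> linarith only [(Pa2 ⟨x,hx⟩).1, (Pa2 ⟨x,hx⟩).2]
    · by_cases hxw : x ≤ w
      · rw [hg2Tl x hx hxw]
        constructor <;> linarith only [(Pb2 ⟨x,hx⟩).1, (Pb2 ⟨x,hx⟩).2]
      · rw [hg2Tr x hx hxw]
        constructor <;> linarith only [(Pb2 ⟨x,hx⟩).1, (Pb2 ⟨x,hx⟩).2]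
  have hbdd3 : ∀ x, 0 < g3 x ∧ g3 x < 1 := by
    intro x
    by_cases hx : x ∈ S
    · by_cases hvx : v ≤ x
      · rw [hg3Sl x hx hvx]
        constructor <;> linarith only [(Pa3 ⟨x,hx⟩).1, (Pa3 ⟨x,hx⟩).2]
      · rw [hg3Sr x hx hvx]
        constructor <;> linarith only [(Pa3 ⟨x,hx⟩).1, (Pa3 ⟨x,hx⟩).2]
    · by_cases hwx : w ≤ x
      · rw [hg3Tl x hx hwx]
        constructor <;> linarith only [(Pb3 ⟨x,hx⟩).1, (Pb3 ⟨x,hx⟩).2]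
      · rw [hg3Tr x hx hwx]
        constructor <;> linarith only [(Pb3 ⟨x,hx⟩).1, (Pb3 ⟨x,hx⟩).2]
  have hdown : ∀ x, g2 x ≤ g2 v ↔ x ≤ v := by
    intro x
    have hg2v : g2 v = (0 + a2 ⟨v,hvS⟩)/10 := hg2Sl v hvS (le_refl v)
    constructor
    · intro h
      by_cases hx : x ∈ S
      · by_cases hxv : x ≤ v
        · exact hxv
        · rw [hg2Sr x hx hxv, hg2v] at h
          exact absurd h (not_le.mpr (slot_lt (Pa2 _).2 (Pa2 _).1 (by norm_num)))
      · by_cases hxw : x ≤ w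
        · rw [hg2Tl x hx hxw, hg2v] at h
          exact absurd h (not_le.mpr (slot_lt (Pa2 _).2 (Pb2 _).1 (by norm_num)))
        · rw [hg2Tr x hx hxw, hg2v] at h
          exact absurd h (not_le.mpr (slot_lt (Pa2 _).2 (Pb2 _).1 (by norm_num)))
    · intro hxv
      have hx : x ∈ S := by
        by_contra hx; exact F2 hx hvS hxv
      rw [hg2Sl x hx hxv, hg2v]
      have := (hA.down ⟨x,hx⟩).mpr (Subtype.mk_le_mk.mpr hxv)
      linarith only [this]
  have hup : ∀ x, g3 v ≤ g3 x ↔ v ≤ x := by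
    intro x
    have hg3v : g3 v = (4 + a3 ⟨v,hvS⟩)/10 := hg3Sl v hvS (le_refl v)
    constructor
    · intro h
      by_cases hx : x ∈ S
      · by_cases hvx : v ≤ x
        · exact hvx
        · rw [hg3Sr x hx hvx, hg3v] at h
          exact absurd h (not_le.mpr (slot_lt (Pa3 _).2 (Pa3 _).1 (by norm_num)))
      · by_cases hwx : w ≤ x
        · exact hvw.le.trans hwx
        · rw [hg3Tr x hx hwx, hg3v] at h
          exact absurd h (not_le.mpr (slot_lt (Pb3 _).2 (Pa3 _).1 (by norm_num)))
    · intro hvx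
      by_cases hx : x ∈ S
      · rw [hg3Sl x hx hvx, hg3v]
        have := (hA.up ⟨x,hx⟩).mpr (Subtype.mk_le_mk.mpr hvx)
        linarith only [this]
      · obtain ⟨-, hwx⟩ := F1 hvS hx hvx
        rw [hg3Tl x hx hwx, hg3v]
        exact (slot_lt (Pa3 _).2 (Pb3 _).1 (by norm_num)).le
  exact ⟨g1, g2, g3, hinj1, hinj2, hinj3, hmono1, hmono2, hmono3, hreal,
    hbdd1, hbdd2, hbdd3, hdown, hup⟩

lemma dual_tree {α : Type*} [PartialOrder α] (ht : (coverGraph α).IsTree) :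
    (coverGraph αᵒᵈ).IsTree := by
  let f : coverGraph α →g coverGraph αᵒᵈ :=
    ⟨OrderDual.toDual, fun {a b} h => h.elim (fun hc => Or.inr hc.toDual)
      (fun hc => Or.inl hc.toDual)⟩
  let g : coverGraph αᵒᵈ →g coverGraph α :=
    ⟨OrderDual.ofDual, fun {a b} h => h.elim
      (fun hc => Or.inr (toDual_covBy_toDual_iff.mp hc))
      (fun hc => Or.inl (toDual_covBy_toDual_iff.mp hc))⟩
  constructor
  · rw [SimpleGraph.connected_iff]
    refine ⟨fun x y => ?_, ⟨OrderDual.toDual ht.isConnected.nonempty.some⟩⟩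
    exact (ht.isConnected.preconnected (OrderDual.ofDual x) (OrderDual.ofDual y)).map f
  · intro a c hc
    exact ht.IsAcyclic (c.map g) (hc.map (fun _ _ hab => hab))

lemma Good.ofDual {α : Type*} [PartialOrder α] {v : α} {g1 g2 g3 : αᵒᵈ → ℚ}
    (h : Good (OrderDual.toDual v) g1 g2 g3) :
    Good v (fun x => 1 - g1 (OrderDual.toDual x)) (fun x => 1 - g3 (OrderDual.toDual x))
      (fun x => 1 - g2 (OrderDual.toDual x)) := by
  constructor
  · intro x y hxy
    refine congrArg OrderDual.ofDual
      (h.inj1 (show g1 (OrderDual.toDual x) = g1 (OrderDual.toDual y) by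
        simp only at hxy; linarith))
  · intro x y hxy
    refine congrArg OrderDual.ofDual
      (h.inj3 (show g3 (OrderDual.toDual x) = g3 (OrderDual.toDual y) by
        simp only at hxy; linarith))
  · intro x y hxy
    refine congrArg OrderDual.ofDual
      (h.inj2 (show g2 (OrderDual.toDual x) = g2 (OrderDual.toDual y) by
        simp only at hxy; linarith))
  · intro x y hxy
    have := h.mono1 (OrderDual.toDual_le_toDual.mpr hxy)
    show 1 - g1 (OrderDual.toDual x) ≤ 1 - g1 (OrderDual.toDual y)
    linarith
  · intro x y hxy
    have := h.mono3 (OrderDual.toDual_le_toDual.mpr hxy)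
    show 1 - g3 (OrderDual.toDual x) ≤ 1 - g3 (OrderDual.toDual y)
    linarith
  · intro x y hxy
    have := h.mono2 (OrderDual.toDual_le_toDual.mpr hxy)
    show 1 - g2 (OrderDual.toDual x) ≤ 1 - g2 (OrderDual.toDual y)
    linarith
  · intro a b H1 H2 H3
    exact OrderDual.toDual_le_toDual.mp
      (h.real (OrderDual.toDual b) (OrderDual.toDual a)
        (by linarith) (by linarith) (by linarith))
  · intro x
    have := h.bdd1 (OrderDual.toDual x)
    constructor
    · show (0:ℚ) < 1 - g1 (OrderDual.toDual x); linarith [this.2]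
    · show 1 - g1 (OrderDual.toDual x) < (1:ℚ); linarith [this.1]
  · intro x
    have := h.bdd3 (OrderDual.toDual x)
    constructor
    · show (0:ℚ) < 1 - g3 (OrderDual.toDual x); linarith [this.2]
    · show 1 - g3 (OrderDual.toDual x) < (1:ℚ); linarith [this.1]
  · intro x
    have := h.bdd2 (OrderDual.toDual x)
    constructor
    · show (0:ℚ) < 1 - g2 (OrderDual.toDual x); linarith [this.2]
    · show 1 - g2 (OrderDual.toDual x) < (1:ℚ); linarith [this.1]
  · intro x
    have hx := h.up (OrderDual.toDual x)
    constructor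
    · intro hh
      exact OrderDual.toDual_le_toDual.mp (hx.mp (by linarith))
    · intro hh
      have := hx.mpr (OrderDual.toDual_le_toDual.mpr hh)
      show 1 - g3 (OrderDual.toDual x) ≤ 1 - g3 (OrderDual.toDual v)
      linarith
  · intro x
    have hx := h.down (OrderDual.toDual x)
    constructor
    · intro hh
      exact OrderDual.toDual_le_toDual.mp (hx.mp (by linarith))
    · intro hh
      have := hx.mpr (OrderDual.toDual_le_toDual.mpr hh)
      show 1 - g2 (OrderDual.toDual v) ≤ 1 - g2 (OrderDual.toDual x)
      linarith

lemma main : ∀ (N : ℕ) (α : Type u) [PartialOrder α] [Fintype α], Fintype.card α ≤ N →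
    (coverGraph α).IsTree → ∀ v : α, ∃ g1 g2 g3 : α → ℚ, Good v g1 g2 g3 := by
  intro N
  induction N with
  | zero =>
    intro α _ _ hcard _ v
    have := Fintype.card_pos_iff.mpr ⟨v⟩
    omega
  | succ N ih =>
    intro α instP instF hcard ht v
    have IH : ∀ (β : Type u) [PartialOrder β] [Fintype β],
        Fintype.card β < Fintype.card α →
        (coverGraph β).IsTree → ∀ r : β, ∃ h1 h2 h3 : β → ℚ, Good r h1 h2 h3 := by
      intro β _ _ hlt htβ r
      exact ih β (by omega) htβ r
    by_cases hmax : ∃ w, v ⋖ w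
    · obtain ⟨w, hw⟩ := hmax
      exact step ht IH hw
    · by_cases hmin : ∃ u, u ⋖ v
      · obtain ⟨u, hu⟩ := hmin
        letI instD : Fintype αᵒᵈ := instF
        have hcards : Fintype.card αᵒᵈ = Fintype.card α := rfl
        have htd : (coverGraph αᵒᵈ).IsTree := dual_tree ht
        have IH' : ∀ (β : Type u) [PartialOrder β] [Fintype β],
            Fintype.card β < Fintype.card αᵒᵈ →
            (coverGraph β).IsTree → ∀ r : β, ∃ h1 h2 h3 : β → ℚ, Good r h1 h2 h3 := by
          intro β _ _ hlt htβ r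
          exact IH β (hcards ▸ hlt) htβ r
        obtain ⟨d1, d2, d3, hD⟩ := step (α := αᵒᵈ) htd IH' hu.toDual
        exact ⟨_, _, _, Good.ofDual hD⟩
      · have hall : ∀ x : α, x = v := by
          intro x
          obtain ⟨p⟩ := ht.isConnected.preconnected v x
          cases p with
          | nil => rfl
          | cons h q =>
            rcases h with hc | hc
            · exact absurd ⟨_, hc⟩ hmax
            · exact absurd ⟨_, hc⟩ hmin
        refine ⟨fun _ => 1/2, fun _ => 1/2, fun _ => 1/2, ?_, ?_, ?_, ?_, ?_, ?_, ?_,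
          ?_, ?_, ?_, ?_, ?_⟩
        · exact fun x y _ => (hall x).trans (hall y).symm
        · exact fun x y _ => (hall x).trans (hall y).symm
        · exact fun x y _ => (hall x).trans (hall y).symm
        · exact fun _ _ _ => le_refl _
        · exact fun _ _ _ => le_refl _
        · exact fun _ _ _ => le_refl _
        · exact fun a b _ _ _ => le_of_eq ((hall a).trans (hall b).symm)
        · exact fun _ => by norm_num
        · exact fun _ => by norm_num
        · exact fun _ => by norm_num
        · exact fun x => iff_of_true (le_refl _) (le_of_eq (hall x))
        · exact fun x => iff_of_true (le_refl _) (le_of_eq (hall x).symm)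

end TreeDim

/-- every finite tree poset has order dimension at most `3`. -/
theorem tree_dim_le_three {α : Type*} [PartialOrder α] [Fintype α]
    (ht : (coverGraph α).IsTree) : orderDim α ≤ 3 := by
  classical
  obtain ⟨v⟩ : Nonempty α := ht.isConnected.nonempty
  obtain ⟨g1, g2, g3, hG⟩ := TreeDim.main (Fintype.card α) α le_rfl ht v
  apply Nat.sInf_le
  refine ⟨![fun a b => g1 a ≤ g1 b, fun a b => g2 a ≤ g2 b, fun a b => g3 a ≤ g3 b],
    ?_, ?_⟩
  · intro i
    fin_cases i
    · refine ⟨?_, fun a b h => hG.mono1 h⟩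
      exact { refl := fun a => le_refl _
              trans := fun a b c => le_trans
              antisymm := fun a b h1 h2 => hG.inj1 (le_antisymm h1 h2)
              total := fun a b => le_total _ _ }
    · refine ⟨?_, fun a b h => hG.mono2 h⟩
      exact { refl := fun a => le_refl _
              trans := fun a b c => le_trans
              antisymm := fun a b h1 h2 => hG.inj2 (le_antisymm h1 h2)
              total := fun a b => le_total _ _ }
    · refine ⟨?_, fun a b h => hG.mono3 h⟩
      exact { refl := fun a => le_refl _
              trans := fun a b c => le_trans
              antisymm := fun a b h1 h2 => hG.inj3 (le_antisymm h1 h2)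
              total := fun a b => le_total _ _ }
  · intro a b
    constructor
    · intro hab i
      fin_cases i
      · exact hG.mono1 hab
      · exact hG.mono2 hab
      · exact hG.mono3 hab
    · intro hi
      exact hG.real a b (hi 0) (hi 1) (hi 2)
end
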